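/- arXiv:0908.2834 — 13 statements merged into one kernel-verified Lean document; each statement's English description precedes it below -/
import Mathlib

section
/- The ReverseMatch algorithm is a 2-approximation for the Second-Price Matching problem: given a maximum matching f of the bipartite graph G, the second-price matching it constructs has value at least half the size of f, and hence at least half the value of an optimal second-price matching. -/
/-- A second-price matching assignment: each keyword is optionally assigned an
adjacent bidder, and each bidder is used at most once. -/
def IsPartialMatching {m : ℕ} {V : Type*} (adj : Fin m → V → Prop)
    (g : Fin m → Option V) : Prop :=
  (∀ u v, g u = some v → adj u v) ∧
  (∀ u u' v, g u = some v → g u' = some v → u = u')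

/-- Keyword `u` earns profit 1: it is matched to some bidder `v`, and at the moment
of its arrival some other neighbor `v'` of `u` is still unmatched. -/
def Profitable {m : ℕ} {V : Type*} (adj : Fin m → V → Prop)
    (g : Fin m → Option V) (u : Fin m) : Prop :=
  ∃ v v', g u = some v ∧ v' ≠ v ∧ adj u v' ∧ ∀ u' : Fin m, u' ≤ u → g u' ≠ some v'

-- The value of a second-price matching: the number of keywords matched for profit.
open scoped Classical in
noncomputable def spmValue {m : ℕ} {V : Type*} (adj : Fin m → V → Prop)
    (g : Fin m → Option V) : ℕ :=
  (Finset.univ.filter fun u : Fin m => Profitable adj g u).card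

-- The number of keywords matched by an assignment (its size as a plain matching).
open scoped Classical in
noncomputable def matchSize {m : ℕ} {V : Type*} (g : Fin m → Option V) : ℕ :=
  (Finset.univ.filter fun u : Fin m => (g u).isSome).card


noncomputable section
namespace RM
open Classical

variable {m : ℕ} {V : Type*}

/-- `u` has a "down-edge": a neighbor other than its match that is not matched to
any keyword arriving no later. -/
def Good (adj : Fin m → V → Prop) (f : Fin m → Option V) (u : Fin m) : Prop :=
  ∃ v', adj u v' ∧ (some v' : Option V) ≠ f u ∧ ∀ u' ≤ u, f u' ≠ some v'

theorem exists_alt (adj : Fin m → V → Prop) (f : Fin m → Option V)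
    (hdeg : ∀ u : Fin m, ∃ v v' : V, v ≠ v' ∧ adj u v ∧ adj u v') (u : Fin m) :
    ∃ v', adj u v' ∧ (some v' : Option V) ≠ f u := by
  obtain ⟨v, v', hne, h1, h2⟩ := hdeg u
  by_cases h : (some v : Option V) = f u
  · refine ⟨v', h2, ?_⟩
    rw [← h]
    simp [hne.symm]
  · exact ⟨v, h1, h⟩

/-- The second-price witness chosen for keyword `u`. -/
def w (adj : Fin m → V → Prop) (f : Fin m → Option V)
    (hdeg : ∀ u : Fin m, ∃ v v' : V, v ≠ v' ∧ adj u v ∧ adj u v') (u : Fin m) : V :=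
  if h : Good adj f u then h.choose else (exists_alt adj f hdeg u).choose

theorem w_adj (adj : Fin m → V → Prop) (f : Fin m → Option V) (hdeg) (u : Fin m) :
    adj u (w adj f hdeg u) := by
  unfold w
  split
  · exact (‹Good adj f u›).choose_spec.1
  · exact (exists_alt adj f hdeg u).choose_spec.1

theorem w_ne (adj : Fin m → V → Prop) (f : Fin m → Option V) (hdeg) (u : Fin m) :
    (some (w adj f hdeg u) : Option V) ≠ f u := by
  unfold w
  split
  · exact (‹Good adj f u›).choose_spec.2.1
  · exact (exists_alt adj f hdeg u).choose_spec.2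

theorem w_good (adj : Fin m → V → Prop) (f : Fin m → Option V) (hdeg) (u : Fin m)
    (h : Good adj f u) : ∀ u' ≤ u, f u' ≠ some (w adj f hdeg u) := by
  unfold w
  rw [dif_pos h]
  exact h.choose_spec.2.2

/-- `u` is matched but has no down-edge. -/
def Bad (adj : Fin m → V → Prop) (f : Fin m → Option V) (u : Fin m) : Prop :=
  (f u).isSome ∧ ¬ Good adj f u

theorem bad_ex (adj : Fin m → V → Prop) (f : Fin m → Option V) (hdeg) (u : Fin m)
    (h : Bad adj f u) : ∃ u' ≤ u, f u' = some (w adj f hdeg u) := by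
  have h2 := h.2
  unfold Good at h2
  push_neg at h2
  obtain ⟨u', hle, heq⟩ := h2 (w adj f hdeg u) (w_adj adj f hdeg u) (w_ne adj f hdeg u)
  exact ⟨u', hle, heq⟩

/-- The earlier keyword whose match is stolen when `u` is bad. -/
def r (adj : Fin m → V → Prop) (f : Fin m → Option V)
    (hdeg : ∀ u : Fin m, ∃ v v' : V, v ≠ v' ∧ adj u v ∧ adj u v') (u : Fin m) : Fin m :=
  if h : ∃ u' ≤ u, f u' = some (w adj f hdeg u) then h.choose else u

theorem r_spec (adj : Fin m → V → Prop) (f : Fin m → Option V) (hdeg) (u : Fin m)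
    (h : Bad adj f u) :
    r adj f hdeg u ≤ u ∧ f (r adj f hdeg u) = some (w adj f hdeg u) := by
  have hex := bad_ex adj f hdeg u h
  unfold r
  rw [dif_pos hex]
  exact ⟨hex.choose_spec.1, hex.choose_spec.2⟩

theorem r_lt (adj : Fin m → V → Prop) (f : Fin m → Option V) (hdeg) (u : Fin m)
    (h : Bad adj f u) : r adj f hdeg u < u := by
  obtain ⟨hle, heq⟩ := r_spec adj f hdeg u h
  rcases lt_or_eq_of_le hle with h' | h'
  · exact h'
  · exact absurd (h' ▸ heq).symm (w_ne adj f hdeg u)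

/-- Which keywords remain matched after ReverseMatch. -/
def kept (adj : Fin m → V → Prop) (f : Fin m → Option V)
    (hdeg : ∀ u : Fin m, ∃ v v' : V, v ≠ v' ∧ adj u v ∧ adj u v') (u : Fin m) : Prop :=
  (f u).isSome ∧ ∀ u' : Fin m, u < u' →
    ¬(kept adj f hdeg u' ∧ Bad adj f u' ∧ r adj f hdeg u' = u)
termination_by m - u.val
decreasing_by
  have h1 := u'.isLt
  have h2 : u.val < u'.val := ‹u < u'›
  omega

theorem kept_iff (adj : Fin m → V → Prop) (f : Fin m → Option V) (hdeg) (u : Fin m) :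
    kept adj f hdeg u ↔ (f u).isSome ∧ ∀ u' : Fin m, u < u' →
      ¬(kept adj f hdeg u' ∧ Bad adj f u' ∧ r adj f hdeg u' = u) := by
  rw [kept]

end RM
end

/-- ReverseMatch is a 2-approximation for Second-Price Matching: from a
maximum matching `f` of `G` it constructs a second-price matching whose value is at
least half the size of `f`, hence at least half the optimal second-price matching value. -/
theorem reverseMatch_two_approx {m : ℕ} {V : Type*}
    (adj : Fin m → V → Prop)
    (hdeg : ∀ u : Fin m, ∃ v v' : V, v ≠ v' ∧ adj u v ∧ adj u v')
    (f : Fin m → Option V)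
    (hf : IsPartialMatching adj f)
    (hfmax : ∀ g, IsPartialMatching adj g → matchSize g ≤ matchSize f) :
    ∃ g, IsPartialMatching adj g ∧
      matchSize f ≤ 2 * spmValue adj g ∧
      ∀ g', IsPartialMatching adj g' → spmValue adj g' ≤ 2 * spmValue adj g := by
  classical
  set g : Fin m → Option V := fun u => if RM.kept adj f hdeg u then f u else none with hgdef
  have hg_some : ∀ u v, g u = some v → f u = some v := by
    intro u v h
    simp only [hgdef] at h
    split at h
    · exact h
    · exact absurd h (by simp)
  have hg_kept : ∀ u v, g u = some v → RM.kept adj f hdeg u := by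
    intro u v h
    simp only [hgdef] at h
    split at h
    · assumption
    · exact absurd h (by simp)
  have hgpm : IsPartialMatching adj g :=
    ⟨fun u v h => hf.1 u v (hg_some u v h),
     fun u u' v h h' => hf.2 u u' v (hg_some _ _ h) (hg_some _ _ h')⟩
  -- every kept keyword is profitable
  have hprof : ∀ u, RM.kept adj f hdeg u → Profitable adj g u := by
    intro u hk
    have hsome : (f u).isSome := ((RM.kept_iff adj f hdeg u).mp hk).1
    obtain ⟨v, hv⟩ := Option.isSome_iff_exists.mp hsome
    have hgu : g u = some v := by simp [hgdef, hk, hv]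
    refine ⟨v, RM.w adj f hdeg u, hgu, ?_, RM.w_adj adj f hdeg u, ?_⟩
    · intro hcontra
      exact RM.w_ne adj f hdeg u (by rw [hcontra, hv])
    · by_cases hgood : RM.Good adj f u
      · intro u' hle hgu'
        exact RM.w_good adj f hdeg u hgood u' hle (hg_some _ _ hgu')
      · have hbad : RM.Bad adj f u := ⟨hsome, hgood⟩
        obtain ⟨_, hreq⟩ := RM.r_spec adj f hdeg u hbad
        have hrlt := RM.r_lt adj f hdeg u hbad
        intro u' _ hgu'
        have hu' : u' = RM.r adj f hdeg u :=
          hf.2 u' (RM.r adj f hdeg u) _ (hg_some _ _ hgu') hreq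
        have hku' : RM.kept adj f hdeg u' := hg_kept _ _ hgu'
        rw [hu'] at hku'
        exact ((RM.kept_iff adj f hdeg _).mp hku').2 u hrlt ⟨hk, hbad, rfl⟩
  set K : Finset (Fin m) := Finset.univ.filter (fun u => RM.kept adj f hdeg u) with hKdef
  set Mset : Finset (Fin m) := Finset.univ.filter (fun u => (f u).isSome) with hMdef
  have hKM : K ⊆ Mset := by
    intro u hu
    simp only [hKdef, Finset.mem_filter, Finset.mem_univ, true_and] at hu
    simp only [hMdef, Finset.mem_filter, Finset.mem_univ, true_and]
    exact ((RM.kept_iff adj f hdeg u).mp hu).1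
  have hsub : Mset \ K ⊆ K.image (RM.r adj f hdeg) := by
    intro u hu
    simp only [Finset.mem_sdiff, hMdef, hKdef, Finset.mem_filter, Finset.mem_univ,
      true_and] at hu
    obtain ⟨hsome, hnk⟩ := hu
    rw [RM.kept_iff] at hnk
    push_neg at hnk
    obtain ⟨u', hlt, hku', _, hr⟩ := hnk hsome
    simp only [Finset.mem_image, hKdef, Finset.mem_filter, Finset.mem_univ, true_and]
    exact ⟨u', hku', hr⟩
  have hMK : Mset.card ≤ 2 * K.card := by
    have h1 : (Mset \ K).card + K.card = Mset.card := Finset.card_sdiff_add_card_eq_card hKM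
    have h2 : (Mset \ K).card ≤ K.card :=
      le_trans (Finset.card_le_card hsub) (Finset.card_image_le)
    omega
  have hMsize : matchSize f = Mset.card := by
    unfold matchSize
    congr 1
  have hKval : K.card ≤ spmValue adj g := by
    unfold spmValue
    refine Finset.card_le_card ?_
    intro u hu
    simp only [hKdef, Finset.mem_filter, Finset.mem_univ, true_and] at hu ⊢
    exact hprof u hu
  refine ⟨g, hgpm, ?_, ?_⟩
  · rw [hMsize]; omega
  · intro g' hg'
    have h1 : spmValue adj g' ≤ matchSize g' := by
      unfold spmValue matchSize
      refine Finset.card_le_card ?_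
      intro u hu
      simp only [Finset.mem_filter, Finset.mem_univ, true_and] at hu ⊢
      obtain ⟨v, v', hgu, _⟩ := hu
      rw [hgu]; rfl
    have h2 := hfmax g' hg'
    rw [hMsize] at h2
    omega
end

section
/- For any m ≥ 1, there is an adversary strategy producing instances of online Second-Price Matching with m keywords against which every deterministic online algorithm achieves profit at most 1, while the optimal offline second-price matching has value m. Hence no deterministic online algorithm has competitive ratio better than m. -/
/-- Run a deterministic online algorithm `A` (which, for keyword `t`, sees only the
neighborhoods of keywords `0..t`) on the instance with neighborhoods `adj`, producing
the list of (feasibility-checked) decisions for the first `t` keywords. -/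
def runList (A : (t : ℕ) → (Fin (t + 1) → Finset ℕ) → Option ℕ)
    (adj : ℕ → Finset ℕ) : ℕ → List (Option ℕ)
  | 0 => []
  | t + 1 =>
    let prev := runList A adj t
    let d := A t fun s : Fin (t + 1) => adj s
    prev ++ [d.bind fun v => if v ∈ adj t ∧ some v ∉ prev then some v else none]

namespace SPMLB

variable (A : (t : ℕ) → (Fin (t + 1) → Finset ℕ) → Option ℕ)

def advAdj (t : ℕ) (ds : List (Option ℕ)) : Finset ℕ :=
  (ds.findSome? id).elim {2*t, 2*t+1} (fun v => {v, 2*t+1})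

def hist : ℕ → List (Finset ℕ) × List (Option ℕ)
  | 0 => ([], [])
  | t+1 =>
    let p := hist t
    let a := advAdj t p.2
    let as := p.1 ++ [a]
    (as, p.2 ++ [(A t fun s : Fin (t+1) => as.getD s ∅).bind
        fun v => if v ∈ a ∧ some v ∉ p.2 then some v else none])

def adjA (t : ℕ) : Finset ℕ := advAdj t (hist A t).2

def entry (t : ℕ) : Option ℕ := (hist A (t+1)).2.getD t none

lemma len1 (t : ℕ) : (hist A t).1.length = t := by
  induction t with
  | zero => rfl
  | succ t ih => simp [hist, ih]

lemma len2 (t : ℕ) : (hist A t).2.length = t := by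
  induction t with
  | zero => rfl
  | succ t ih => simp [hist, ih]

lemma hist1_succ (t : ℕ) : (hist A (t+1)).1 = (hist A t).1 ++ [adjA A t] := rfl

lemma hist2_succ (t : ℕ) : (hist A (t+1)).2 = (hist A t).2 ++
    [(A t fun s : Fin (t+1) => ((hist A t).1 ++ [adjA A t]).getD s ∅).bind
      fun v => if v ∈ adjA A t ∧ some v ∉ (hist A t).2 then some v else none] := rfl

lemma hist1_getD : ∀ {t s}, s < t → (hist A t).1.getD s ∅ = adjA A s := by
  intro t
  induction t with
  | zero => omega
  | succ t ih =>
    intro s hs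
    rw [hist1_succ]
    rcases Nat.lt_or_ge s t with h | h
    · rw [List.getD_append _ _ _ _ (by rw [len1]; exact h), ih h]
    · have hst : s = t := by omega
      subst hst
      rw [List.getD_eq_getElem _ _ (by simp [len1])]
      simp [len1]

lemma entry_eq : ∀ {t s}, s < t → (hist A t).2.getD s none = entry A s := by
  intro t
  induction t with
  | zero => omega
  | succ t ih =>
    intro s hs
    rcases Nat.lt_or_ge s t with h | h
    · rw [hist2_succ, List.getD_append _ _ _ _ (by rw [len2]; exact h), ih h]
    · have hst : s = t := by omega
      subst hst; rfl

lemma runList_eq : ∀ t, runList A (adjA A) t = (hist A t).2 := by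
  intro t
  induction t with
  | zero => rfl
  | succ t ih =>
    rw [runList, ih, hist2_succ]
    have hA : (fun s : Fin (t+1) => adjA A s) =
        fun s : Fin (t+1) => ((hist A t).1 ++ [adjA A t]).getD s ∅ := by
      funext s
      rw [← hist1_succ, hist1_getD A s.isLt]
    rw [hA]

lemma entry_some {t v} (h : entry A t = some v) :
    v ∈ adjA A t ∧ ∀ u < t, entry A u ≠ some v := by
  have he : entry A t = (A t fun s : Fin (t+1) => ((hist A t).1 ++ [adjA A t]).getD s ∅).bind
      (fun v => if v ∈ adjA A t ∧ some v ∉ (hist A t).2 then some v else none) := by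
    rw [entry, hist2_succ, List.getD_eq_getElem _ _ (by simp [len2])]
    simp [len2]
  rw [he] at h
  rcases hd : (A t fun s : Fin (t+1) => ((hist A t).1 ++ [adjA A t]).getD s ∅) with _ | v₂
  · rw [hd] at h; exact absurd h (by simp)
  · rw [hd] at h
    simp only [Option.bind_some] at h
    split_ifs at h with hc
    · obtain ⟨hmem, hnin⟩ := hc
      obtain rfl : v₂ = v := by simpa using h
      refine ⟨hmem, fun u hu hcon => hnin ?_⟩
      rw [← entry_eq A hu] at hcon
      rw [← hcon]
      rw [List.getD_eq_getElem _ _ (by rw [len2]; exact hu)]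
      exact List.getElem_mem _

lemma mem_hist2 {u t : ℕ} (hu : u < t) : entry A u ∈ (hist A t).2 := by
  rw [← entry_eq A hu, List.getD_eq_getElem _ _ (by rw [len2]; exact hu)]
  exact List.getElem_mem _

lemma adjA_first {t : ℕ} (hnone : ∀ u < t, entry A u = none) :
    adjA A t = {2*t, 2*t+1} := by
  have : (hist A t).2.findSome? id = none := by
    rw [List.findSome?_eq_none_iff]
    intro x hx
    obtain ⟨n, hn, hxn⟩ := List.mem_iff_getElem.1 hx
    rw [len2] at hn
    have := hnone n hn
    rw [← entry_eq A hn, List.getD_eq_getElem _ _ (by rw [len2]; exact hn)] at this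
    simp [← hxn, this]
  rw [adjA, advAdj, this, Option.elim_none]

lemma adjA_late {t u v : ℕ} (hu : u < t) (hv : entry A u = some v) :
    ∃ w, (∃ u' < t, entry A u' = some w) ∧ adjA A t = {w, 2*t+1} := by
  rcases hfs : (hist A t).2.findSome? id with _ | w
  · exfalso
    have := List.findSome?_eq_none_iff.1 hfs _ (hv ▸ mem_hist2 A hu)
    simp at this
  · refine ⟨w, ?_, by rw [adjA, advAdj, hfs, Option.elim_some]⟩
    obtain ⟨a, ha, hia⟩ := List.exists_of_findSome?_eq_some hfs
    obtain ⟨n, hn, hna⟩ := List.mem_iff_getElem.1 ha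
    rw [len2] at hn
    refine ⟨n, hn, ?_⟩
    rw [← entry_eq A hn, List.getD_eq_getElem _ _ (by rw [len2]; exact hn), hna]
    simpa using hia

lemma adjA_bound : ∀ t, ∀ v ∈ adjA A t, v < 2*t+2 := by
  intro t
  induction t using Nat.strong_induction_on with
  | _ t ih =>
    intro v hv
    rcases hfs : (hist A t).2.findSome? id with _ | w
    · rw [adjA, advAdj, hfs, Option.elim_none] at hv
      simp only [Finset.mem_insert, Finset.mem_singleton] at hv
      omega
    · rw [adjA, advAdj, hfs, Option.elim_some] at hv
      simp only [Finset.mem_insert, Finset.mem_singleton] at hv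
      obtain ⟨a, ha, hia⟩ := List.exists_of_findSome?_eq_some hfs
      obtain ⟨n, hn, hna⟩ := List.mem_iff_getElem.1 ha
      rw [len2] at hn
      have hew : entry A n = some w := by
        rw [← entry_eq A hn, List.getD_eq_getElem _ _ (by rw [len2]; exact hn), hna]
        simpa using hia
      have hwmem : w ∈ adjA A n := (entry_some A hew).1
      have := ih n hn w hwmem
      rcases hv with rfl | rfl <;> omega

lemma card2 (t : ℕ) : (adjA A t).card = 2 := by
  rcases hfs : (hist A t).2.findSome? id with _ | w
  · rw [adjA, advAdj, hfs, Option.elim_none, Finset.card_pair (by omega)]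
  · rw [adjA, advAdj, hfs]
    obtain ⟨a, ha, hia⟩ := List.exists_of_findSome?_eq_some hfs
    obtain ⟨n, hn, hna⟩ := List.mem_iff_getElem.1 ha
    rw [len2] at hn
    have hew : entry A n = some w := by
      rw [← entry_eq A hn, List.getD_eq_getElem _ _ (by rw [len2]; exact hn), hna]
      simpa using hia
    have := adjA_bound A n w (entry_some A hew).1
    rw [Option.elim_some, Finset.card_pair (by omega)]

lemma adjA_first_some {s0 v0 : ℕ} (h0 : ∀ u < s0, entry A u = none)
    (hs : entry A s0 = some v0) {t : ℕ} (ht : s0 < t) :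
    adjA A t = {v0, 2*t+1} := by
  have hfs : (hist A t).2.findSome? id = some v0 := by
    have hlen : s0 < (hist A t).2.length := by rw [len2]; exact ht
    have hsplit := List.take_append_drop s0 (hist A t).2
    rw [← hsplit, List.findSome?_append]
    have h1 : ((hist A t).2.take s0).findSome? id = none := by
      rw [List.findSome?_eq_none_iff]
      intro x hx
      obtain ⟨n, hn, hxn⟩ := List.mem_iff_getElem.1 hx
      have hn' : n < s0 := by
        have := hn; simp at this; omega
      rw [List.getElem_take] at hxn
      have hne : entry A n = none := h0 n hn'
      rw [← entry_eq A (by omega : n < t),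
        List.getD_eq_getElem _ _ (by rw [len2]; omega)] at hne
      simp [← hxn, hne]
    have h2 : ((hist A t).2.drop s0).findSome? id = some v0 := by
      rw [List.drop_eq_getElem_cons hlen, List.findSome?_cons]
      have : (hist A t).2[s0] = some v0 := by
        rw [← List.getD_eq_getElem _ none hlen, entry_eq A ht, hs]
      rw [this]
      simp
    rw [h1, h2]
    rfl
  rw [adjA, advAdj, hfs, Option.elim_some]

lemma prof_not {m : ℕ} (a b : Fin m) (hab : a < b) {va : ℕ}
    (hva : entry A a.val = some va) :
    ¬ Profitable (fun (u : Fin m) (v : ℕ) => v ∈ adjA A u)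
      (fun t : Fin m => entry A t.val) b := by
  rintro ⟨x, v', hgb, hne, hv', hub⟩
  obtain ⟨w, ⟨u1, hu1b, hu1w⟩, hadjb⟩ := adjA_late A (hu := hab) hva
  obtain ⟨hxmem, hxnew⟩ := entry_some A hgb
  have hxw : x ≠ w := fun h => hxnew u1 hu1b (by rw [hu1w, h])
  rw [hadjb] at hxmem
  simp only [Finset.mem_insert, Finset.mem_singleton] at hxmem
  have hx : x = 2*b.val+1 := by tauto
  have hv'2 : v' ∈ adjA A b.val := hv'
  rw [hadjb] at hv'2
  simp only [Finset.mem_insert, Finset.mem_singleton] at hv'2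
  have hv'w : v' = w := by
    rcases hv'2 with h | h
    · exact h
    · exact absurd (h.trans hx.symm) hne
  exact hub ⟨u1, lt_trans hu1b b.isLt⟩ (le_of_lt hu1b) (by simpa [hv'w] using hu1w)

end SPMLB

/-- for any `m ≥ 1` there is an adversary instance of online Second-Price
Matching with `m` keywords on which any given deterministic online algorithm earns
profit at most `1`, while the optimal offline second-price matching has value `m`. -/
theorem online_deterministic_lower_bound (m : ℕ) (hm : 1 ≤ m)
    (A : (t : ℕ) → (Fin (t + 1) → Finset ℕ) → Option ℕ) :
    ∃ adj : ℕ → Finset ℕ,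
      (∀ t : Fin m, 2 ≤ (adj t).card) ∧
      spmValue (fun (u : Fin m) (v : ℕ) => v ∈ adj u)
        (fun t : Fin m => (runList A adj m).getD t.val none) ≤ 1 ∧
      ∃ g, IsPartialMatching (fun (u : Fin m) (v : ℕ) => v ∈ adj u) g ∧
        spmValue (fun (u : Fin m) (v : ℕ) => v ∈ adj u) g = m := by
  classical
  open SPMLB in
  refine ⟨adjA A, fun t => by rw [card2], ?_, ?_⟩
  · -- online profit ≤ 1
    have hfun : (fun t : Fin m => (runList A (adjA A) m).getD t.val none) =
        fun t : Fin m => entry A t.val := by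
      funext t
      rw [runList_eq, entry_eq A t.isLt]
    rw [hfun]
    unfold spmValue
    rw [Finset.card_le_one]
    intro a ha b hb
    simp only [Finset.mem_filter, Finset.mem_univ, true_and] at ha hb
    rcases lt_trichotomy a b with h | h | h
    · obtain ⟨xa, va', hga, -⟩ := ha
      exact absurd hb (prof_not A a b h hga)
    · exact h
    · obtain ⟨xb, vb', hgb, -⟩ := hb
      exact absurd ha (prof_not A b a h hgb)
  · -- offline optimum = m
    by_cases hall : ∀ u < m, entry A u = none
    · refine ⟨fun t : Fin m => some (2*t.val), ⟨?_, ?_⟩, ?_⟩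
      · intro u v hgv
        obtain rfl : 2*u.val = v := by simpa using hgv
        rw [adjA_first A (fun u' hu' => hall u' (lt_trans hu' u.isLt))]
        simp
      · intro u u' v h1 h2
        apply Fin.ext
        simp only [Option.some.injEq] at h1 h2
        omega
      · unfold spmValue
        rw [Finset.filter_true_of_mem, Finset.card_univ, Fintype.card_fin]
        intro u _
        refine ⟨2*u.val, 2*u.val+1, rfl, by omega, ?_, ?_⟩
        · show 2*u.val+1 ∈ adjA A u.val
          rw [adjA_first A (fun u' hu' => hall u' (lt_trans hu' u.isLt))]
          simp
        · intro u' _ hcon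
          simp only [Option.some.injEq] at hcon
          omega
    · push_neg at hall
      obtain ⟨u0, hu0m, hu0⟩ := hall
      have hall' : ∃ u, u < m ∧ entry A u ≠ none := ⟨u0, hu0m, hu0⟩
      set s0 := Nat.find hall' with hs0def
      obtain ⟨hs0m, hs0ne⟩ := Nat.find_spec hall'
      obtain ⟨v0, hv0⟩ := Option.ne_none_iff_exists'.1 hs0ne
      have hmin : ∀ u < s0, entry A u = none := by
        intro u hu
        have := Nat.find_min hall' hu
        push_neg at this
        exact this (lt_trans hu hs0m)
      have hadj0 : adjA A s0 = {2*s0, 2*s0+1} := adjA_first A hmin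
      have hv0mem : v0 ∈ adjA A s0 := (entry_some A hv0).1
      rw [hadj0] at hv0mem
      simp only [Finset.mem_insert, Finset.mem_singleton] at hv0mem
      set w := if v0 = 2*s0 then 2*s0+1 else 2*s0 with hwdef
      have hwb : 2*s0 ≤ w ∧ w ≤ 2*s0+1 ∧ w ≠ v0 := by
        rw [hwdef]; split_ifs with h <;> omega
      have hv0b : 2*s0 ≤ v0 ∧ v0 ≤ 2*s0+1 := by omega
      have hwmem : w ∈ adjA A s0 := by
        rw [hadj0]
        simp only [Finset.mem_insert, Finset.mem_singleton]
        omega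
      have hlate : ∀ t, s0 < t → adjA A t = {v0, 2*t+1} :=
        fun t ht => adjA_first_some A hmin hv0 ht
      set f : ℕ → ℕ := fun t => if t < s0 then 2*t else if t = s0 then w else 2*t+1 with hfdef
      have hfadj : ∀ t : Fin m, f t.val ∈ adjA A t.val := by
        intro t
        simp only [hfdef]
        rcases lt_trichotomy t.val s0 with h | h | h
        · rw [if_pos h, adjA_first A (fun u' hu' => hmin u' (lt_trans hu' h))]
          simp
        · rw [if_neg (by omega), if_pos h, h]
          exact hwmem
        · rw [if_neg (by omega), if_neg (by omega), hlate t.val h]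
          simp
      refine ⟨fun t : Fin m => some (f t.val), ⟨?_, ?_⟩, ?_⟩
      · intro u v hgv
        obtain rfl : f u.val = v := by simpa using hgv
        exact hfadj u
      · intro u u' v h1 h2
        apply Fin.ext
        simp only [Option.some.injEq] at h1 h2
        simp only [hfdef] at h1 h2
        split_ifs at h1 h2 <;> omega
      · unfold spmValue
        rw [Finset.filter_true_of_mem, Finset.card_univ, Fintype.card_fin]
        intro u _
        rcases lt_trichotomy u.val s0 with h | h | h
        · refine ⟨f u.val, 2*u.val+1, rfl, by simp only [hfdef]; rw [if_pos h]; omega, ?_, ?_⟩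
          · show 2*u.val+1 ∈ adjA A u.val
            rw [adjA_first A (fun u' hu' => hmin u' (lt_trans hu' h))]
            simp
          · intro u' hu' hcon
            have : u'.val ≤ u.val := hu'
            simp only [Option.some.injEq, hfdef] at hcon
            split_ifs at hcon <;> omega
        · refine ⟨f u.val, v0, rfl, by simp only [hfdef]; rw [if_neg (by omega), if_pos h]; omega, ?_, ?_⟩
          · show v0 ∈ adjA A u.val
            rw [h]
            exact (entry_some A hv0).1
          · intro u' hu' hcon
            have : u'.val ≤ u.val := hu'
            simp only [Option.some.injEq, hfdef] at hcon
            split_ifs at hcon <;> omega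
        · refine ⟨f u.val, v0, rfl, by simp only [hfdef]; rw [if_neg (by omega), if_neg (by omega)]; omega, ?_, ?_⟩
          · show v0 ∈ adjA A u.val
            rw [hlate u.val h]
            simp
          · intro u' hu' hcon
            have : u'.val ≤ u.val := hu'
            simp only [Option.some.injEq, hfdef] at hcon
            split_ifs at hcon <;> omega
end

section
/- Define sequences X_m, Y_m with X_1 ≤ 1, Y_1 ≤ 0, and satisfying X_m ≤ max{X_{m-1}, (X_{m-1}+Y_{m-1})/2 + 1} and Y_m ≤ max{Y_{m-1}, (X_{m-1}+Y_{m-1})/2} for m ≥ 2. Then X_m ≤ (m+1)/2 and Y_m ≤ (m−1)/2 for all m ≥ 1. -/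
/-- sequences with `X 1 ≤ 1`, `Y 1 ≤ 0` and
`X m ≤ max (X (m-1)) ((X (m-1) + Y (m-1))/2 + 1)`,
`Y m ≤ max (Y (m-1)) ((X (m-1) + Y (m-1))/2)` for `m ≥ 2`
satisfy `X m ≤ (m+1)/2` and `Y m ≤ (m−1)/2` for all `m ≥ 1`. -/
theorem optimal_online_upper_bound (X Y : ℕ → ℝ)
    (hX1 : X 1 ≤ 1) (hY1 : Y 1 ≤ 0)
    (hX : ∀ m : ℕ, 1 ≤ m → X (m + 1) ≤ max (X m) ((X m + Y m) / 2 + 1))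
    (hY : ∀ m : ℕ, 1 ≤ m → Y (m + 1) ≤ max (Y m) ((X m + Y m) / 2)) :
    ∀ m : ℕ, 1 ≤ m → X m ≤ ((m : ℝ) + 1) / 2 ∧ Y m ≤ ((m : ℝ) - 1) / 2 := by
  intro m hm
  induction m with
  | zero => omega
  | succ n ih =>
    rcases Nat.eq_or_lt_of_le hm with h | h
    · simp [← h]; constructor <;> [linarith; linarith]
    · have hn : 1 ≤ n := by omega
      obtain ⟨ihX, ihY⟩ := ih hn
      have hx := hX n hn
      have hy := hY n hn
      push_cast
      constructor
      · rcases le_max_iff.mp hx with h' | h' <;> linarith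
      · rcases le_max_iff.mp hy with h' | h' <;> linarith
end

section
/- For the random distribution of instances in which the optimal offline second-price matching has value m while every online algorithm has expected profit at most (m+1)/2, Yao's principle implies that every randomized online algorithm for Second-Price Matching has competitive ratio at least 2m/(m+1), hence at least 2 asymptotically. -/
open Finset

/-- Yao's principle for the 2PM lower bound: if there is a distribution
`p` over instances on which the offline optimum is `m` while every deterministic
algorithm has expected performance at most `(m+1)/2`, then any randomized algorithm
(a distribution `q` over deterministic algorithms) that is `ρ`-competitive — i.e. on
every instance the optimum `m` is at most `ρ` times its expected performance — has
`ρ ≥ 2m/(m+1)`, hence asymptotically at least `2`. -/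
theorem yao_randomized_lower_bound {NI NA : ℕ} (m : ℕ) (hm : 1 ≤ m)
    (perf : Fin NA → Fin NI → ℝ) (hperf : ∀ d i, 0 ≤ perf d i)
    (p : Fin NI → ℝ) (hp0 : ∀ i, 0 ≤ p i) (hp1 : ∑ i, p i = 1)
    (hdist : ∀ d : Fin NA, ∑ i, p i * perf d i ≤ ((m : ℝ) + 1) / 2)
    (q : Fin NA → ℝ) (hq0 : ∀ d, 0 ≤ q d) (hq1 : ∑ d, q d = 1)
    (ρ : ℝ) (hρ : ∀ i : Fin NI, (m : ℝ) ≤ ρ * ∑ d, q d * perf d i) :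
    2 * (m : ℝ) / ((m : ℝ) + 1) ≤ ρ := by
  have hm1 : (1 : ℝ) ≤ (m : ℝ) := by exact_mod_cast hm
  have hNI : NI ≠ 0 := by rintro rfl; simp at hp1
  have hρ0 : 0 ≤ ρ := by
    obtain ⟨i0⟩ := Fin.pos_iff_nonempty.mp (Nat.pos_of_ne_zero hNI)
    by_contra h
    push_neg at h
    have hS : 0 ≤ ∑ d, q d * perf d i0 :=
      Finset.sum_nonneg fun d _ => mul_nonneg (hq0 d) (hperf d i0)
    have := hρ i0
    nlinarith
  have key : (m : ℝ) ≤ ρ * (((m : ℝ) + 1) / 2) := by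
    have h1 : (m : ℝ) = ∑ i, p i * (m : ℝ) := by
      rw [← Finset.sum_mul, hp1, one_mul]
    have h2 : ∑ i, p i * (m : ℝ) ≤ ∑ i, p i * (ρ * ∑ d, q d * perf d i) :=
      Finset.sum_le_sum fun i _ => mul_le_mul_of_nonneg_left (hρ i) (hp0 i)
    have h3 : ∑ i, p i * (ρ * ∑ d, q d * perf d i)
        = ρ * ∑ d, q d * ∑ i, p i * perf d i := by
      simp_rw [Finset.mul_sum]
      rw [Finset.sum_comm]
      exact Finset.sum_congr rfl fun d _ => Finset.sum_congr rfl fun i _ => by ring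
    have h4 : ∑ d, q d * ∑ i, p i * perf d i ≤ ((m : ℝ) + 1) / 2 := by
      calc ∑ d, q d * ∑ i, p i * perf d i
          ≤ ∑ d, q d * (((m : ℝ) + 1) / 2) :=
            Finset.sum_le_sum fun d _ =>
              mul_le_mul_of_nonneg_left (hdist d) (hq0 d)
        _ = ((m : ℝ) + 1) / 2 := by rw [← Finset.sum_mul, hq1, one_mul]
    calc (m : ℝ) ≤ ρ * ∑ d, q d * ∑ i, p i * perf d i := by
          rw [h1]; rw [h3] at h2; exact h2
      _ ≤ ρ * (((m : ℝ) + 1) / 2) := mul_le_mul_of_nonneg_left h4 hρ0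
  rw [div_le_iff₀ (by linarith : (0 : ℝ) < (m : ℝ) + 1)]
  nlinarith
end

section
/- For online bipartite matching, the matching produced by Ranking with keyword arrival order π and bidder ranking σ equals the matching produced by the dual process Ranking' in which bidders arrive in order σ and each arriving bidder is matched to the available keyword minimizing π. -/
section RankingDualityAux

open List

variable {α β : Type*}

/-- Greedy matching: process left elements in list order, match each to the first
available right element (right list kept in rank order, matched ones erased). -/
def greedy [DecidableEq β] (E : α → β → Bool) : List α → List β → List (α × β)
  | [], _ => []
  | u :: L, R =>
    match R.find? (fun v => E u v) with
    | some v => (u, v) :: greedy E L (R.erase v)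
    | none => greedy E L R

lemma greedy_nil_right [DecidableEq β] (E : α → β → Bool) (L : List α) :
    greedy E L [] = [] := by
  induction L with
  | nil => rfl
  | cons u L ih => rw [greedy]; simpa using ih

lemma find?_split {p : α → Bool} {l : List α} {a : α} (h : l.find? p = some a) :
    ∃ l₁ l₂, l = l₁ ++ a :: l₂ ∧ ∀ x ∈ l₁, p x = false := by
  induction l with
  | nil => simp at h
  | cons b l ih =>
    by_cases hb : p b
    · rw [List.find?_cons_of_pos hb, Option.some_inj] at h
      exact ⟨[], l, by simp [h], by simp⟩
    · rw [List.find?_cons_of_neg hb] at h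
      obtain ⟨l₁, l₂, rfl, hl₁⟩ := ih h
      exact ⟨b :: l₁, l₂, rfl, by
        intro x hx
        rcases List.mem_cons.mp hx with rfl | hx
        · simpa using hb
        · exact hl₁ x hx⟩

lemma greedy_skip [DecidableEq α] (E' : β → α → Bool) (u : α) (L : List α) (R : List β)
    (h : ∀ v ∈ R, E' v u = false) :
    greedy E' R (u :: L) = greedy E' R L := by
  induction R generalizing L with
  | nil => rfl
  | cons v R ih =>
    have hv : E' v u = false := h v (List.mem_cons_self ..)
    rw [greedy, greedy, List.find?_cons_of_neg (by simp [hv])]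
    cases hfind : L.find? (fun a => E' v a) with
    | none => simp only [hfind]; exact ih L (fun w hw => h w (List.mem_cons_of_mem _ hw))
    | some u' =>
      have hne : u' ≠ u := by
        intro e
        have := List.find?_some hfind
        rw [e, hv] at this; exact Bool.false_ne_true this
      simp only [hfind]
      rw [List.erase_cons_tail (show ¬(u == u') = true by simp [Ne.symm hne]),
        ih (L.erase u') (fun w hw => h w (List.mem_cons_of_mem _ hw))]

lemma greedy_cons_split [DecidableEq α] [DecidableEq β] (E' : β → α → Bool) (u : α)
    (L : List α) (R₁ R₂ : List β) (v₀ : β) (h₀ : E' v₀ u = true)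
    (h₁ : ∀ v ∈ R₁, E' v u = false) (hu : u ∉ L) :
    (greedy E' (R₁ ++ v₀ :: R₂) (u :: L)).Perm ((v₀, u) :: greedy E' (R₁ ++ R₂) L) := by
  induction R₁ generalizing L with
  | nil =>
    simp only [List.nil_append]
    rw [greedy, List.find?_cons_of_pos (by simpa using h₀)]
    simp only [List.erase_cons_head]
    exact List.Perm.refl _
  | cons v R₁ ih =>
    have hv : E' v u = false := h₁ v (List.mem_cons_self ..)
    simp only [List.cons_append]
    rw [greedy, greedy, List.find?_cons_of_neg (by simp [hv])]
    cases hfind : L.find? (fun a => E' v a) with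
    | none =>
      simp only [hfind]
      exact ih L (fun w hw => h₁ w (List.mem_cons_of_mem _ hw)) hu
    | some u' =>
      have hu'L : u' ∈ L := List.mem_of_find?_eq_some hfind
      have hne : u' ≠ u := fun e => hu (e ▸ hu'L)
      simp only [hfind]
      rw [List.erase_cons_tail (show ¬(u == u') = true by simp [Ne.symm hne])]
      have hmem : u ∉ L.erase u' := fun h => hu (List.mem_of_mem_erase h)
      have key := ih (L.erase u') (fun w hw => h₁ w (List.mem_cons_of_mem _ hw)) hmem
      exact (key.cons (v, u')).trans (List.Perm.swap _ _ _)

theorem greedy_swap [DecidableEq α] [DecidableEq β] (E : α → β → Bool)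
    (L : List α) (R : List β) (hL : L.Nodup) :
    (List.map Prod.swap (greedy E L R)).Perm (greedy (fun v u => E u v) R L) := by
  induction L generalizing R with
  | nil => simp [greedy, greedy_nil_right]
  | cons u L ih =>
    have hu : u ∉ L := (List.nodup_cons.mp hL).1
    have hL' : L.Nodup := (List.nodup_cons.mp hL).2
    rw [greedy]
    cases hfind : R.find? (fun v => E u v) with
    | none =>
      have hall : ∀ v ∈ R, E u v = false := by
        intro v hv
        simpa using List.find?_eq_none.mp hfind v hv
      rw [greedy_skip _ _ _ _ hall]
      simp only [hfind]
      exact ih R hL'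
    | some v₀ =>
      obtain ⟨R₁, R₂, rfl, hR₁⟩ := find?_split hfind
      have h₀ : E u v₀ = true := List.find?_some hfind
      have hv₀R₁ : v₀ ∉ R₁ := fun h => by rw [hR₁ v₀ h] at h₀; exact Bool.false_ne_true h₀
      have herase : (R₁ ++ v₀ :: R₂).erase v₀ = R₁ ++ R₂ := by
        rw [List.erase_append_right _ hv₀R₁, List.erase_cons_head]
      simp only [hfind, herase]
      have key := greedy_cons_split (fun v u => E u v) u L R₁ R₂ v₀ h₀ hR₁ hu
      refine List.Perm.trans ?_ key.symm
      simpa using (ih (R₁ ++ R₂) hL').cons (v₀, u)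


end RankingDualityAux


/-- One pass of the Ranking algorithm: process the keywords in the given arrival list,
matching each arriving keyword to its unmatched neighbor `v` minimizing `σ v` (bidders
are elements of `Fin p`, and `σ.symm r` is the bidder of rank `r`). -/
def rankingAux {α : Type*} {p : ℕ} (E : α → Fin p → Bool) (σ : Equiv.Perm (Fin p)) :
    List α → Finset (Fin p) → List (α × Fin p)
  | [], _ => []
  | u :: rest, matched =>
    let cand : Finset (Fin p) :=
      Finset.univ.filter fun r => E u (σ.symm r) = true ∧ σ.symm r ∉ matched
    if h : cand.Nonempty then
      (u, σ.symm (cand.min' h)) ::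
        rankingAux E σ rest (insert (σ.symm (cand.min' h)) matched)
    else rankingAux E σ rest matched

/-- The matching produced by Ranking on the bipartite graph `E` when keywords arrive
in the order given by `π` (the keyword arriving at time `t` is `π.symm t`) and bidders
are ranked by `σ`. -/
def ranking {n p : ℕ} (E : Fin n → Fin p → Bool) (π : Equiv.Perm (Fin n))
    (σ : Equiv.Perm (Fin p)) : List (Fin n × Fin p) :=
  rankingAux E σ ((List.finRange n).map π.symm) ∅

/-- The dual process Ranking': bidders arrive in the order given by `σ`, and each
arriving bidder is matched to its available (unmatched) neighboring keyword `u`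
minimizing `π u`. -/
def ranking' {n p : ℕ} (E : Fin n → Fin p → Bool) (π : Equiv.Perm (Fin n))
    (σ : Equiv.Perm (Fin p)) : List (Fin n × Fin p) :=
  (rankingAux (fun (v : Fin p) (u : Fin n) => E u v) π ((List.finRange p).map σ.symm) ∅).map
    fun x => (x.2, x.1)

section RankingDualityAux

/-- On a strictly increasing list, `find?` returns the minimum satisfying element. -/
lemma find?_le_of_pairwise {p : ℕ} {l : List (Fin p)} (hl : l.Pairwise (· < ·))
    {q : Fin p → Bool} {x y : Fin p} (hfind : l.find? q = some x)
    (hy : y ∈ l) (hqy : q y = true) : x ≤ y := by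
  obtain ⟨l₁, l₂, rfl, hl₁⟩ := find?_split hfind
  rcases List.mem_append.mp hy with h | h
  · rw [hl₁ y h] at hqy; exact absurd hqy (by simp)
  · rcases List.mem_cons.mp h with rfl | h
    · exact le_refl _
    · exact le_of_lt ((List.pairwise_cons.mp (List.pairwise_append.mp hl).2.1).1 y h)

lemma rankingAux_eq_greedy {α : Type*} [DecidableEq α] {p : ℕ} (E : α → Fin p → Bool)
    (σ : Equiv.Perm (Fin p)) (l : List α) (matched : Finset (Fin p)) :
    rankingAux E σ l matched
      = greedy E l (((List.finRange p).map σ.symm).filter (fun v => v ∉ matched)) := by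
  induction l generalizing matched with
  | nil => rfl
  | cons u l ih =>
    rw [rankingAux, greedy]
    set cand : Finset (Fin p) :=
      Finset.univ.filter fun r => E u (σ.symm r) = true ∧ σ.symm r ∉ matched with hcand
    set q : Fin p → Bool := fun r => E u (σ.symm r) with hq
    set l₀ : List (Fin p) :=
      (List.finRange p).filter (fun r => decide (σ.symm r ∉ matched)) with hl₀
    have hR : ((List.finRange p).map σ.symm).filter (fun v => v ∉ matched)
        = l₀.map σ.symm := by
      rw [List.filter_map]; rfl
    have hl₀mem : ∀ r : Fin p, r ∈ l₀ ↔ σ.symm r ∉ matched := by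
      intro r; simp [hl₀, List.mem_filter]
    have hcandmem : ∀ r : Fin p, r ∈ cand ↔ (q r = true ∧ r ∈ l₀) := by
      intro r; simp [hcand, hl₀mem, hq, and_comm]
    have hpw : l₀.Pairwise (· < ·) :=
      (List.pairwise_lt_finRange p).sublist List.filter_sublist
    have hfind : (((List.finRange p).map σ.symm).filter (fun v => v ∉ matched)).find?
        (fun v => E u v) = Option.map σ.symm (l₀.find? q) := by
      rw [hR, List.find?_map]; rfl
    by_cases h : cand.Nonempty
    · -- find? must return the min of cand
      have hx : cand.min' h ∈ cand := cand.min'_mem h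
      have hqx : q (cand.min' h) = true := ((hcandmem _).mp hx).1
      have hxl₀ : cand.min' h ∈ l₀ := ((hcandmem _).mp hx).2
      have hsome : l₀.find? q = some (cand.min' h) := by
        cases hf : l₀.find? q with
        | none => exact absurd hqx (by simpa using List.find?_eq_none.mp hf _ hxl₀)
        | some y =>
          have hy₁ : y ∈ cand := (hcandmem y).mpr
            ⟨List.find?_some hf, List.mem_of_find?_eq_some hf⟩
          have h₁ : cand.min' h ≤ y := cand.min'_le _ hy₁
          have h₂ : y ≤ cand.min' h := find?_le_of_pairwise hpw hf hxl₀ hqx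
          rw [le_antisymm h₂ h₁]
      rw [hfind, hsome]
      simp only [Option.map_some, dif_pos h]
      congr 1
      rw [ih]
      congr 1
      have hnodup : (((List.finRange p).map σ.symm).filter (fun v => v ∉ matched)).Nodup :=
        (((List.nodup_finRange p).map σ.symm.injective).filter _)
      rw [List.Nodup.erase_eq_filter hnodup, hR, List.filter_map, List.filter_map]
      congr 1
      rw [List.filter_filter]
      apply List.filter_congr
      intro r _
      show decide (σ.symm r ∉ insert (σ.symm (cand.min' h)) matched)
          = ((σ.symm r != σ.symm (cand.min' h)) && decide (σ.symm r ∉ matched))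
      simp only [Finset.mem_insert, not_or, Bool.and_comm, bne]
      by_cases hrx : r = cand.min' h
      · simp [hrx]
      · simp [hrx, σ.symm.injective.ne hrx]
    · have hnone : l₀.find? q = none := by
        rw [List.find?_eq_none]
        intro r hr
        intro hqr
        exact h ⟨r, (hcandmem r).mpr ⟨hqr, hr⟩⟩
      rw [hfind, hnone]
      simp only [Option.map_none, dif_neg h]
      exact ih matched

end RankingDualityAux

/-- the matching produced by Ranking (keywords arrive by `π`, greedy by
`σ`) equals the matching produced by the dual process Ranking' (bidders arrive by `σ`,
greedy by `π`). -/

theorem ranking_duality {n p : ℕ} (E : Fin n → Fin p → Bool)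
    (π : Equiv.Perm (Fin n)) (σ : Equiv.Perm (Fin p)) :
    (ranking E π σ).toFinset = (ranking' E π σ).toFinset := by
  have hfilter₁ : (((List.finRange p).map σ.symm).filter
      (fun v => v ∉ (∅ : Finset (Fin p)))) = (List.finRange p).map σ.symm := by
    apply List.filter_eq_self.mpr
    intro v _
    simp
  have hfilter₂ : (((List.finRange n).map π.symm).filter
      (fun u => u ∉ (∅ : Finset (Fin n)))) = (List.finRange n).map π.symm := by
    apply List.filter_eq_self.mpr
    intro v _
    simp
  have h1 : ranking E π σ
      = greedy E ((List.finRange n).map π.symm) ((List.finRange p).map σ.symm) := by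
    rw [ranking, rankingAux_eq_greedy, hfilter₁]
  have h2 : ranking' E π σ
      = (greedy (fun v u => E u v) ((List.finRange p).map σ.symm)
          ((List.finRange n).map π.symm)).map Prod.swap := by
    rw [ranking', rankingAux_eq_greedy, hfilter₂]
    rfl
  rw [h1, h2]
  have hperm := greedy_swap E ((List.finRange n).map π.symm)
    ((List.finRange p).map σ.symm) ((List.nodup_finRange n).map π.symm.injective)
  have hperm2 : (greedy E ((List.finRange n).map π.symm) ((List.finRange p).map σ.symm)).Perm
      ((greedy (fun v u => E u v) ((List.finRange p).map σ.symm)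
        ((List.finRange n).map π.symm)).map Prod.swap) := by
    simpa [List.map_map, Function.comp, Prod.swap_swap] using hperm.map Prod.swap
  exact List.toFinset_eq_of_perm _ _ hperm2
end

section
/- Monotonicity of Ranking: let H be a bipartite graph with arrival order π and ranking σ, let x be any vertex of H, and let H' = H \ {x} with the induced orderings. Then the size of the matching produced by Ranking on H' is at most the size of the matching produced by Ranking on H. -/
lemma rankingAux_cons {α : Type*} {p : ℕ} (E : α → Fin p → Bool) (σ : Equiv.Perm (Fin p))
    (u : α) (rest : List α) (M : Finset (Fin p)) :
    rankingAux E σ (u :: rest) M =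
      if h : (Finset.univ.filter fun r => E u (σ.symm r) = true ∧ σ.symm r ∉ M).Nonempty then
        (u, σ.symm ((Finset.univ.filter fun r => E u (σ.symm r) = true ∧ σ.symm r ∉ M).min' h)) ::
          rankingAux E σ rest
            (insert (σ.symm ((Finset.univ.filter
              fun r => E u (σ.symm r) = true ∧ σ.symm r ∉ M).min' h)) M)
      else rankingAux E σ rest M := rfl

lemma key {α : Type*} {p : ℕ} (E : α → Fin p → Bool) (σ : Equiv.Perm (Fin p)) :
    ∀ (L : List α) (M : Finset (Fin p)) (w : Fin p),
      (rankingAux E σ L (insert w M)).length ≤ (rankingAux E σ L M).length ∧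
      (rankingAux E σ L M).length ≤ (rankingAux E σ L (insert w M)).length + 1 := by
  intro L
  induction L with
  | nil => intro M w; simp [rankingAux]
  | cons u rest ih =>
    intro M w
    rw [rankingAux_cons, rankingAux_cons]
    set cand : Finset (Fin p) :=
      Finset.univ.filter fun r => E u (σ.symm r) = true ∧ σ.symm r ∉ M with hcand
    set cand' : Finset (Fin p) :=
      Finset.univ.filter fun r => E u (σ.symm r) = true ∧ σ.symm r ∉ insert w M with hcand'
    have hce : cand' = cand.erase (σ w) := by
      ext r
      simp only [hcand, hcand', Finset.mem_erase, Finset.mem_filter, Finset.mem_univ,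
        true_and, Finset.mem_insert, not_or]
      constructor
      · rintro ⟨hE, hne, hM⟩
        refine ⟨fun h => hne (by rw [h]; simp), hE, hM⟩
      · rintro ⟨hne, hE, hM⟩
        exact ⟨hE, fun h => hne (by rw [← h]; simp), hM⟩
    by_cases h' : cand'.Nonempty
    · have hsub : cand' ⊆ cand := by rw [hce]; exact Finset.erase_subset _ _
      have h : cand.Nonempty := h'.mono hsub
      rw [dif_pos h, dif_pos h']
      by_cases hmw : cand.min' h = σ w
      · -- M matches w; M' matches its min m'
        have hwM : w ∉ M := by
          have := Finset.min'_mem cand h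
          rw [hmw] at this
          simp [hcand] at this
          simpa using this.2
        have hsm : σ.symm (cand.min' h) = w := by rw [hmw]; simp
        rw [hsm]
        have hstep := ih (insert w M) (σ.symm (cand'.min' h'))
        constructor
        · simp only [List.length_cons]
          omega
        · simp only [List.length_cons]
          omega
      · -- mins agree
        have hmem : cand.min' h ∈ cand' := by
          rw [hce]
          exact Finset.mem_erase.2 ⟨hmw, Finset.min'_mem _ _⟩
        have h1 : cand'.min' h' ≤ cand.min' h := Finset.min'_le _ _ hmem
        have h2 : cand.min' h ≤ cand'.min' h' :=
          Finset.min'_le _ _ (hsub (Finset.min'_mem _ _))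
        have heq : cand'.min' h' = cand.min' h := le_antisymm h1 h2
        rw [heq]
        have hic : insert (σ.symm (cand.min' h)) (insert w M)
            = insert w (insert (σ.symm (cand.min' h)) M) := Finset.insert_comm _ _ _
        rw [hic]
        have hstep := ih (insert (σ.symm (cand.min' h)) M) w
        constructor
        · simp only [List.length_cons]; omega
        · simp only [List.length_cons]; omega
    · rw [dif_neg h']
      by_cases h : cand.Nonempty
      · have hmw : cand.min' h = σ w := by
          by_contra hne
          exact h' ⟨cand.min' h, hce ▸ Finset.mem_erase.2 ⟨hne, Finset.min'_mem _ _⟩⟩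
        have hsm : σ.symm (cand.min' h) = w := by rw [hmw]; simp
        rw [dif_pos h, hsm]
        simp only [List.length_cons]
        omega
      · rw [dif_neg h]
        have hstep := ih M w
        omega

lemma erase_le {α : Type*} [DecidableEq α] {p : ℕ} (E : α → Fin p → Bool)
    (σ : Equiv.Perm (Fin p)) (x : α) :
    ∀ (L : List α) (M : Finset (Fin p)),
      (rankingAux E σ (L.erase x) M).length ≤ (rankingAux E σ L M).length := by
  intro L
  induction L with
  | nil => intro M; simp
  | cons u rest ih =>
    intro M
    by_cases hux : u = x
    · subst hux
      rw [List.erase_cons_head]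
      rw [rankingAux_cons]
      split_ifs with h
      · have := (key E σ rest M (σ.symm ((Finset.univ.filter
          fun r => E u (σ.symm r) = true ∧ σ.symm r ∉ M).min' h))).2
        simp only [List.length_cons]
        omega
      · exact le_refl _
    · rw [List.erase_cons_tail (by simp [hux])]
      rw [rankingAux_cons, rankingAux_cons]
      split_ifs with h
      · simp only [List.length_cons]
        exact Nat.succ_le_succ (ih _)
      · exact ih M

lemma delete_bidder {α : Type*} {p : ℕ} (E : α → Fin p → Bool) (σ : Equiv.Perm (Fin p))
    (x : Fin p) :
    ∀ (L : List α) (M : Finset (Fin p)),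
      rankingAux (fun u v => E u v && (v != x)) σ L M = rankingAux E σ L (insert x M) := by
  intro L
  induction L with
  | nil => intro M; rfl
  | cons u rest ih =>
    intro M
    rw [rankingAux_cons, rankingAux_cons]
    have hceq : (Finset.univ.filter fun r =>
        (fun u v => E u v && (v != x)) u (σ.symm r) = true ∧ σ.symm r ∉ M)
        = (Finset.univ.filter fun r => E u (σ.symm r) = true ∧ σ.symm r ∉ insert x M) := by
      ext r
      simp only [Finset.mem_filter, Finset.mem_univ, true_and, Bool.and_eq_true,
        bne_iff_ne, ne_eq, Finset.mem_insert, not_or]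
      tauto
    rw [hceq]
    split_ifs with h
    · congr 1
      rw [ih, Finset.insert_comm]
    · exact ih M

/-- monotonicity of Ranking: deleting a single vertex `x` of `H` (a
keyword, removed from the arrival order, or a bidder, made unavailable), keeping the
induced arrival order and ranking, can only decrease the size of the matching
produced by Ranking. -/
theorem ranking_monotone {n p : ℕ} (E : Fin n → Fin p → Bool)
    (π : Equiv.Perm (Fin n)) (σ : Equiv.Perm (Fin p)) :
    (∀ x : Fin n,
      (rankingAux E σ ((((List.finRange n).map π.symm)).erase x) ∅).length ≤
        (ranking E π σ).length) ∧
    (∀ x : Fin p,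
      (ranking (fun u v => E u v && (v != x)) π σ).length ≤ (ranking E π σ).length) := by
  constructor
  · intro x
    exact erase_le E σ x _ ∅
  · intro x
    unfold ranking
    rw [delete_bidder]
    exact (key E σ _ ∅ x).1
end

section
/- Let H be a bipartite graph on U_H ∪ V with a map f : U_H → V such that each u is adjacent to f(u). For any ranking σ, if v = f(u) is unmatched by Ranking(σ), then u is matched by Ranking(σ) to a vertex whose rank under σ is strictly less than σ(v). -/
theorem rankingAux_key {α : Type*} {p : ℕ} (E : α → Fin p → Bool)
    (σ : Equiv.Perm (Fin p)) (v : Fin p) :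
    ∀ (l : List α) (matched : Finset (Fin p)), v ∉ matched →
      v ∉ (rankingAux E σ l matched).map Prod.snd →
      ∀ u ∈ l, E u v = true →
      ∃ w, (u, w) ∈ rankingAux E σ l matched ∧ σ w < σ v := by
  intro l
  induction l with
  | nil => intro _ _ _ u hu; exact absurd hu List.not_mem_nil
  | cons u' rest ih =>
    intro matched hvm hvs u hu hE
    rw [rankingAux] at hvs ⊢
    set cand : Finset (Fin p) :=
      Finset.univ.filter fun r => E u' (σ.symm r) = true ∧ σ.symm r ∉ matched with hcand
    rcases List.mem_cons.1 hu with rfl | hu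
    · have hmem : σ v ∈ cand := by
        simp [hcand, hE, hvm]
      have hne : cand.Nonempty := ⟨_, hmem⟩
      simp only [dif_pos hne] at hvs ⊢
      refine ⟨σ.symm (cand.min' hne), List.mem_cons_self, ?_⟩
      simp only [Equiv.apply_symm_apply]
      have hle : cand.min' hne ≤ σ v := Finset.min'_le _ _ hmem
      have hneq : cand.min' hne ≠ σ v := by
        intro h
        apply hvs
        rw [List.map_cons, h]
        simp
      exact lt_of_le_of_ne hle hneq
    · by_cases hne : cand.Nonempty
      · simp only [dif_pos hne] at hvs ⊢
        have hvne : v ≠ σ.symm (cand.min' hne) := by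
          intro h
          apply hvs
          rw [List.map_cons, h]
          simp
        have hvm' : v ∉ insert (σ.symm (cand.min' hne)) matched := by
          simp [hvne, hvm]
        have hvs' : v ∉ (rankingAux E σ rest
            (insert (σ.symm (cand.min' hne)) matched)).map Prod.snd := by
          intro h
          exact hvs (by rw [List.map_cons]; exact List.mem_cons_of_mem _ h)
        obtain ⟨w, hw, hlt⟩ := ih _ hvm' hvs' u hu hE
        exact ⟨w, List.mem_cons_of_mem _ hw, hlt⟩
      · simp only [dif_neg hne] at hvs ⊢
        exact ih _ hvm hvs u hu hE

/-- if `f : U_H → V` assigns to each keyword an adjacent bidder and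
`v = f u` is left unmatched by Ranking with ranking `σ`, then `u` is matched by
Ranking to a bidder of strictly smaller rank than `σ (f u)`. -/
theorem ranking_unmatched_implies_lower_rank {n p : ℕ}
    (E : Fin n → Fin p → Bool) (π : Equiv.Perm (Fin n)) (σ : Equiv.Perm (Fin p))
    (f : Fin n → Fin p) (hf : ∀ u, E u (f u) = true) (u : Fin n)
    (hunmatched : f u ∉ (ranking E π σ).map Prod.snd) :
    ∃ v' : Fin p, (u, v') ∈ ranking E π σ ∧ σ v' < σ (f u) := by
  have hu : u ∈ (List.finRange n).map π.symm :=
    List.mem_map.2 ⟨π u, List.mem_finRange _, π.symm_apply_apply u⟩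
  exact rankingAux_key E σ (f u) _ ∅ (Finset.notMem_empty _) hunmatched u hu (hf u)
end

section
/- Let u ∈ U_H with v = f(u) adjacent to u, fix 1 ≤ t ≤ n = |V|, let σ be a ranking of V and let σ' be obtained from σ by removing v and reinserting it at rank t. If v is unmatched by Ranking(σ'), then u is matched by Ranking(σ) to a vertex whose rank in σ is at most t. -/
namespace RankingReinsertion

variable {α : Type*} {p : ℕ}

/-- The candidate set (of ranks) for keyword `u` given matched set `M`. -/
def cand (E : α → Fin p → Bool) (σ : Equiv.Perm (Fin p)) (u : α) (M : Finset (Fin p)) :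
    Finset (Fin p) :=
  Finset.univ.filter fun r => E u (σ.symm r) = true ∧ σ.symm r ∉ M

lemma mem_cand {E : α → Fin p → Bool} {σ : Equiv.Perm (Fin p)} {u : α}
    {M : Finset (Fin p)} {r : Fin p} :
    r ∈ cand E σ u M ↔ E u (σ.symm r) = true ∧ σ.symm r ∉ M := by
  simp [cand]

lemma rankingAux_cons (E : α → Fin p → Bool) (σ : Equiv.Perm (Fin p)) (u : α)
    (rest : List α) (M : Finset (Fin p)) :
    rankingAux E σ (u :: rest) M =
      if h : (cand E σ u M).Nonempty then
        (u, σ.symm ((cand E σ u M).min' h)) ::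
          rankingAux E σ rest (insert (σ.symm ((cand E σ u M).min' h)) M)
      else rankingAux E σ rest M := rfl

lemma rankingAux_cons_pos (E : α → Fin p → Bool) (σ : Equiv.Perm (Fin p)) (u : α)
    (rest : List α) (M : Finset (Fin p)) (h : (cand E σ u M).Nonempty) :
    rankingAux E σ (u :: rest) M =
      (u, σ.symm ((cand E σ u M).min' h)) ::
        rankingAux E σ rest (insert (σ.symm ((cand E σ u M).min' h)) M) := by
  rw [rankingAux_cons, dif_pos h]

lemma rankingAux_cons_neg (E : α → Fin p → Bool) (σ : Equiv.Perm (Fin p)) (u : α)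
    (rest : List α) (M : Finset (Fin p)) (h : ¬ (cand E σ u M).Nonempty) :
    rankingAux E σ (u :: rest) M = rankingAux E σ rest M := by
  rw [rankingAux_cons, dif_neg h]

lemma cand_insert (E : α → Fin p → Bool) (σ : Equiv.Perm (Fin p)) (u : α)
    (M : Finset (Fin p)) (v : Fin p) :
    cand E σ u (insert v M) = (cand E σ u M).erase (σ v) := by
  ext r
  simp only [mem_cand, Finset.mem_erase, Finset.mem_insert]
  constructor
  · rintro ⟨hE, hne⟩
    refine ⟨fun hr => hne ?_, hE, fun hM => hne (Or.inr hM)⟩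
    subst hr; exact Or.inl (σ.symm_apply_apply v)
  · rintro ⟨hr, hE, hM⟩
    refine ⟨hE, ?_⟩
    rintro (h1 | h2)
    · exact hr (by rw [← h1, Equiv.apply_symm_apply])
    · exact hM h2

lemma cand_insert_subset (E : α → Fin p → Bool) (σ : Equiv.Perm (Fin p)) (u : α)
    (M : Finset (Fin p)) (v : Fin p) :
    cand E σ u (insert v M) ⊆ cand E σ u M := by
  rw [cand_insert]; exact Finset.erase_subset _ _

lemma mem_cand_insert {E : α → Fin p → Bool} {σ : Equiv.Perm (Fin p)} {u : α}
    {M : Finset (Fin p)} {v : Fin p} {r : Fin p} :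
    r ∈ cand E σ u (insert v M) ↔ r ≠ σ v ∧ r ∈ cand E σ u M := by
  rw [cand_insert, Finset.mem_erase]

lemma min'_cand_insert (E : α → Fin p → Bool) (σ : Equiv.Perm (Fin p)) (u : α)
    (M : Finset (Fin p)) (v : Fin p)
    (h : (cand E σ u M).Nonempty) (hmne : (cand E σ u M).min' h ≠ σ v)
    (h'' : (cand E σ u (insert v M)).Nonempty) :
    (cand E σ u (insert v M)).min' h'' = (cand E σ u M).min' h := by
  apply le_antisymm
  · exact Finset.min'_le _ _ (mem_cand_insert.2 ⟨hmne, Finset.min'_mem _ h⟩)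
  · exact Finset.le_min' _ _ _ fun y hy =>
      Finset.min'_le _ _ (cand_insert_subset E σ u M v hy)

/-- Lemma A: if `v` is never matched in a run, pre-matching it does not change the run. -/
lemma run_insert_unmatched (E : α → Fin p → Bool) (σ' : Equiv.Perm (Fin p)) (v : Fin p)
    (l : List α) :
    ∀ M : Finset (Fin p),
      v ∉ (rankingAux E σ' l M).map Prod.snd →
      rankingAux E σ' l (insert v M) = rankingAux E σ' l M := by
  induction l with
  | nil => intro M _; rfl
  | cons u rest ih =>
    intro M hv
    by_cases h : (cand E σ' u M).Nonempty
    · rw [rankingAux_cons_pos E σ' u rest M h] at hv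
      have hne : σ'.symm ((cand E σ' u M).min' h) ≠ v := by
        intro heq; exact hv (by simp [heq])
      have hmne : (cand E σ' u M).min' h ≠ σ' v := by
        intro heq; exact hne (by rw [heq]; exact σ'.symm_apply_apply v)
      have h'' : (cand E σ' u (insert v M)).Nonempty :=
        ⟨_, mem_cand_insert.2 ⟨hmne, Finset.min'_mem _ h⟩⟩
      have hv' : v ∉ (rankingAux E σ' rest
          (insert (σ'.symm ((cand E σ' u M).min' h)) M)).map Prod.snd := by
        intro hmem; exact hv (by simp [hmem])
      rw [rankingAux_cons_pos E σ' u rest (insert v M) h'',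
        rankingAux_cons_pos E σ' u rest M h,
        min'_cand_insert E σ' u M v h hmne h'',
        Finset.insert_comm, ih _ hv']
    · have h'' : ¬ (cand E σ' u (insert v M)).Nonempty := by
        rintro ⟨r, hr⟩; exact h ⟨r, cand_insert_subset E σ' u M v hr⟩
      rw [rankingAux_cons_neg E σ' u rest M h] at hv
      rw [rankingAux_cons_neg E σ' u rest (insert v M) h'',
        rankingAux_cons_neg E σ' u rest M h, ih _ hv]

/-- Lemma B: if `v` is already matched, two rankings agreeing on the order of the
other bidders produce identical runs. -/
lemma run_perm_eq (E : α → Fin p → Bool) (σ σ' : Equiv.Perm (Fin p)) (v : Fin p)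
    (horder : ∀ w w' : Fin p, w ≠ v → w' ≠ v → (σ w ≤ σ w' ↔ σ' w ≤ σ' w'))
    (l : List α) :
    ∀ M : Finset (Fin p), v ∈ M →
      rankingAux E σ l M = rankingAux E σ' l M := by
  induction l with
  | nil => intro M _; rfl
  | cons u rest ih =>
    intro M hvM
    by_cases h : (cand E σ u M).Nonempty
    · have h' : (cand E σ' u M).Nonempty := by
        obtain ⟨r, hr⟩ := h
        rw [mem_cand] at hr
        exact ⟨σ' (σ.symm r), by rw [mem_cand]; simpa using hr⟩
      set b := σ.symm ((cand E σ u M).min' h) with hb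
      set b' := σ'.symm ((cand E σ' u M).min' h') with hb'
      have hbmem : E u b = true ∧ b ∉ M := mem_cand.1 ((cand E σ u M).min'_mem h)
      have hb'mem : E u b' = true ∧ b' ∉ M := mem_cand.1 ((cand E σ' u M).min'_mem h')
      have hbmin : ∀ w : Fin p, E u w = true → w ∉ M → σ b ≤ σ w := by
        intro w hw hwM
        have hmem : σ w ∈ cand E σ u M := mem_cand.2 (by simpa using And.intro hw hwM)
        have hle := Finset.min'_le _ _ hmem
        rw [hb, Equiv.apply_symm_apply]
        exact hle
      have hb'min : ∀ w : Fin p, E u w = true → w ∉ M → σ' b' ≤ σ' w := by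
        intro w hw hwM
        have hmem : σ' w ∈ cand E σ' u M := mem_cand.2 (by simpa using And.intro hw hwM)
        have hle := Finset.min'_le _ _ hmem
        rw [hb', Equiv.apply_symm_apply]
        exact hle
      have hbv : b ≠ v := fun hh => hbmem.2 (hh ▸ hvM)
      have hb'v : b' ≠ v := fun hh => hb'mem.2 (hh ▸ hvM)
      have hbb' : b = b' := by
        have h1 : σ b ≤ σ b' := hbmin b' hb'mem.1 hb'mem.2
        have h2 : σ' b ≤ σ' b' := (horder b b' hbv hb'v).1 h1
        have h3 : σ' b' ≤ σ' b := hb'min b hbmem.1 hbmem.2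
        exact σ'.injective (le_antisymm h2 h3)
      rw [rankingAux_cons_pos E σ u rest M h, rankingAux_cons_pos E σ' u rest M h',
        ← hb, ← hb', ← hbb', ih _ (Finset.mem_insert_of_mem hvM)]
    · have h' : ¬ (cand E σ' u M).Nonempty := by
        rintro ⟨r, hr⟩
        rw [mem_cand] at hr
        exact h ⟨σ (σ'.symm r), by rw [mem_cand]; simpa using hr⟩
      rw [rankingAux_cons_neg E σ u rest M h, rankingAux_cons_neg E σ' u rest M h',
        ih _ hvM]

/-- Lemma C (alternating path / monotonicity): pre-matching one extra bidder can only
worsen (weakly) the rank of the bidder each keyword receives. -/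
lemma run_mono (E : α → Fin p → Bool) (σ : Equiv.Perm (Fin p)) (l : List α) :
    ∀ (A : Finset (Fin p)) (b : Fin p), b ∉ A →
      ∀ q ∈ rankingAux E σ l (insert b A),
        ∃ y, (q.1, y) ∈ rankingAux E σ l A ∧ σ y ≤ σ q.2 := by
  induction l with
  | nil => intro A b _ q hq; simp [rankingAux] at hq
  | cons u rest ih =>
    intro A b hbA q hq
    by_cases hA : (cand E σ u A).Nonempty
    · rw [rankingAux_cons_pos E σ u rest A hA]
      set m := (cand E σ u A).min' hA with hm
      by_cases hB : (cand E σ u (insert b A)).Nonempty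
      · rw [rankingAux_cons_pos E σ u rest (insert b A) hB] at hq
        set m' := (cand E σ u (insert b A)).min' hB with hm'
        have hm'B : m' ∈ cand E σ u (insert b A) := Finset.min'_mem _ hB
        have hm'A : m' ∈ cand E σ u A := cand_insert_subset E σ u A b hm'B
        have hmm' : m ≤ m' := Finset.min'_le _ _ hm'A
        by_cases hEq : m' = m
        · -- same choice in both runs
          have hbc : b ≠ σ.symm m := by
            intro hh
            have hne : m' ≠ σ b := (mem_cand_insert.1 hm'B).1
            exact hne (by rw [hEq, hh, Equiv.apply_symm_apply])
          rcases List.mem_cons.1 hq with rfl | hq'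
          · exact ⟨σ.symm m, List.mem_cons_self, by rw [hEq]⟩
          · have hset : insert (σ.symm m') (insert b A)
                = insert b (insert (σ.symm m) A) := by
              rw [hEq, Finset.insert_comm]
            rw [hset] at hq'
            have hbA' : b ∉ insert (σ.symm m) A := by
              simp only [Finset.mem_insert]
              rintro (hh | hh)
              · exact hbc hh
              · exact hbA hh
            obtain ⟨y, hy, hyle⟩ := ih _ b hbA' q hq'
            exact ⟨y, List.mem_cons_of_mem _ hy, hyle⟩
        · -- the run on `A` takes `b` here
          have hmb : m ∉ cand E σ u (insert b A) := by
            intro hmem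
            exact hEq (le_antisymm (Finset.min'_le _ _ hmem) hmm')
          have hcb : σ.symm m = b := by
            have hmA : m ∈ cand E σ u A := Finset.min'_mem _ hA
            by_contra hne
            exact hmb (mem_cand_insert.2 ⟨fun hh => hne (by rw [hh, Equiv.symm_apply_apply]), hmA⟩)
          rcases List.mem_cons.1 hq with rfl | hq'
          · refine ⟨σ.symm m, List.mem_cons_self, ?_⟩
            simp only [Equiv.apply_symm_apply]
            exact hmm'
          · have hset : insert (σ.symm m') (insert b A)
                = insert (σ.symm m') (insert (σ.symm m) A) := by rw [hcb]
            rw [hset] at hq'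
            have hnm : σ.symm m' ∉ insert (σ.symm m) A := by
              rw [hcb]
              exact (mem_cand.1 hm'B).2
            obtain ⟨y, hy, hyle⟩ := ih _ _ hnm q hq'
            exact ⟨y, List.mem_cons_of_mem _ hy, hyle⟩
      · -- no candidate once `b` is also matched: the run on `A` takes `b`, then coincide
        rw [rankingAux_cons_neg E σ u rest (insert b A) hB] at hq
        have hcb : σ.symm m = b := by
          have hmA : m ∈ cand E σ u A := Finset.min'_mem _ hA
          by_contra hne
          exact hB ⟨m, mem_cand_insert.2
            ⟨fun hh => hne (by rw [hh, Equiv.symm_apply_apply]), hmA⟩⟩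
        refine ⟨q.2, List.mem_cons_of_mem _ ?_, le_refl _⟩
        rw [hcb]
        exact hq
    · have hB : ¬ (cand E σ u (insert b A)).Nonempty := by
        rintro ⟨r, hr⟩; exact hA ⟨r, cand_insert_subset E σ u A b hr⟩
      rw [rankingAux_cons_neg E σ u rest (insert b A) hB] at hq
      rw [rankingAux_cons_neg E σ u rest A hA]
      exact ih _ _ hbA q hq

/-- Lemma D: if `v` is adjacent to `u`, never gets matched and was not pre-matched,
then `u` gets matched to a bidder of rank at most `σ' v`. -/
lemma run_matches_u (E : α → Fin p → Bool) (σ' : Equiv.Perm (Fin p)) (v : Fin p) (u : α)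
    (hadj : E u v = true) (l : List α) :
    ∀ M : Finset (Fin p), u ∈ l → v ∉ M →
      v ∉ (rankingAux E σ' l M).map Prod.snd →
      ∃ x, (u, x) ∈ rankingAux E σ' l M ∧ σ' x ≤ σ' v := by
  induction l with
  | nil => intro M hu; simp at hu
  | cons u0 rest ih =>
    intro M hu hvM hvout
    by_cases h : (cand E σ' u0 M).Nonempty
    · rw [rankingAux_cons_pos E σ' u0 rest M h] at hvout ⊢
      have hne : σ'.symm ((cand E σ' u0 M).min' h) ≠ v := by
        intro heq; exact hvout (by simp [heq])
      rcases List.mem_cons.1 hu with rfl | hu'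
      · refine ⟨σ'.symm ((cand E σ' u M).min' h), List.mem_cons_self, ?_⟩
        have hvc : σ' v ∈ cand E σ' u M :=
          mem_cand.2 ⟨by simpa using hadj, by simpa using hvM⟩
        have hle := Finset.min'_le _ _ hvc
        simpa using hle
      · have hvM' : v ∉ insert (σ'.symm ((cand E σ' u0 M).min' h)) M := by
          simp only [Finset.mem_insert]
          rintro (hh | hh)
          · exact hne hh.symm
          · exact hvM hh
        have hvout' : v ∉ (rankingAux E σ' rest
            (insert (σ'.symm ((cand E σ' u0 M).min' h)) M)).map Prod.snd := by
          intro hmem; exact hvout (by simp [hmem])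
        obtain ⟨x, hx, hxle⟩ := ih _ hu' hvM' hvout'
        exact ⟨x, List.mem_cons_of_mem _ hx, hxle⟩
    · rcases List.mem_cons.1 hu with rfl | hu'
      · exact absurd ⟨σ' v, mem_cand.2 ⟨by simpa using hadj, by simpa using hvM⟩⟩ h
      · rw [rankingAux_cons_neg E σ' u0 rest M h] at hvout ⊢
        exact ih _ hu' hvM hvout

lemma rank_card (σ : Equiv.Perm (Fin p)) (x : Fin p) :
    (Finset.univ.filter fun w => σ w < σ x).card = (σ x : ℕ) := by
  have himg : Finset.univ.filter (fun w => σ w < σ x)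
      = (Finset.Iio (σ x)).image σ.symm := by
    ext w
    simp only [Finset.mem_filter, Finset.mem_univ, true_and, Finset.mem_image,
      Finset.mem_Iio]
    constructor
    · intro hw; exact ⟨σ w, hw, σ.symm_apply_apply w⟩
    · rintro ⟨r, hr, rfl⟩; simpa using hr
  rw [himg, Finset.card_image_of_injective _ σ.symm.injective, Fin.card_Iio]

lemma rank_shift (σ σ' : Equiv.Perm (Fin p)) (v : Fin p)
    (horder : ∀ w w' : Fin p, w ≠ v → w' ≠ v → (σ w ≤ σ w' ↔ σ' w ≤ σ' w'))
    (x : Fin p) (hxv : x ≠ v) (hlt : σ' x < σ' v) :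
    (σ x : ℕ) ≤ (σ' v : ℕ) := by
  have hsub : Finset.univ.filter (fun w => σ w < σ x) ⊆
      insert v (Finset.univ.filter fun w => σ' w < σ' x) := by
    intro w hw
    rw [Finset.mem_filter] at hw
    by_cases hwv : w = v
    · simp [hwv]
    · have hwx : w ≠ x := by
        intro hh; rw [hh] at hw; exact lt_irrefl _ hw.2
      have h1 : σ' w ≤ σ' x := (horder w x hwv hxv).1 (le_of_lt hw.2)
      have h2 : σ' w ≠ σ' x := fun hh => hwx (σ'.injective hh)
      simp [Finset.mem_insert, lt_of_le_of_ne h1 h2]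
  have h1 := Finset.card_le_card hsub
  rw [rank_card] at h1
  have h2 := Finset.card_insert_le v (Finset.univ.filter fun w => σ' w < σ' x)
  rw [rank_card] at h2
  have h3 : (σ' x : ℕ) < (σ' v : ℕ) := hlt
  omega

end RankingReinsertion

open RankingReinsertion in
/-- let `v` be adjacent to keyword `u`, and let `σ'` be obtained from `σ`
by removing `v` and reinserting it at rank `t` (so `σ' v = t` and the relative order of
all other bidders is unchanged). If `v` is unmatched by Ranking under `σ'`, then `u` is
matched by Ranking under `σ` to a bidder of rank at most `t`. -/
theorem ranking_reinsertion {n p : ℕ}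
    (E : Fin n → Fin p → Bool) (π : Equiv.Perm (Fin n))
    (σ σ' : Equiv.Perm (Fin p)) (u : Fin n) (v : Fin p)
    (hadj : E u v = true) (t : Fin p)
    (ht : σ' v = t)
    (horder : ∀ w w' : Fin p, w ≠ v → w' ≠ v → (σ w ≤ σ w' ↔ σ' w ≤ σ' w'))
    (hunmatched : v ∉ (ranking E π σ').map Prod.snd) :
    ∃ v' : Fin p, (u, v') ∈ ranking E π σ ∧ σ v' ≤ t := by
  set L : List (Fin n) := (List.finRange n).map π.symm with hL
  have huL : u ∈ L := List.mem_map.2 ⟨π u, List.mem_finRange _, π.symm_apply_apply u⟩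
  have hunm : v ∉ (rankingAux E σ' L ∅).map Prod.snd := hunmatched
  obtain ⟨x, hx, hxle⟩ :=
    run_matches_u E σ' v u hadj L ∅ huL (Finset.notMem_empty v) hunm
  have hxv : x ≠ v := by
    rintro rfl
    exact hunm (List.mem_map.2 ⟨(u, x), hx, rfl⟩)
  have hxlt : σ' x < σ' v := lt_of_le_of_ne hxle (fun hh => hxv (σ'.injective hh))
  have hσx : (σ x : ℕ) ≤ (t : ℕ) := by
    have hrs := rank_shift σ σ' v horder x hxv hxlt
    rwa [ht] at hrs
  have e1 : rankingAux E σ' L (insert v ∅) = rankingAux E σ' L ∅ :=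
    run_insert_unmatched E σ' v L ∅ hunm
  have e2 : rankingAux E σ L (insert v ∅) = rankingAux E σ' L (insert v ∅) :=
    run_perm_eq E σ σ' v horder L _ (Finset.mem_insert_self v ∅)
  have hx2 : (u, x) ∈ rankingAux E σ L (insert v ∅) := by
    rw [e2, e1]; exact hx
  obtain ⟨y, hy, hyle⟩ :=
    run_mono E σ L ∅ v (Finset.notMem_empty v) (u, x) hx2
  refine ⟨y, hy, ?_⟩
  exact le_trans hyle (Fin.le_def.2 hσx)
end

section
/- Let G be a bipartite graph with a perfect matching of size n, and let H be a left k-copy of G. For 1 ≤ t ≤ n, let x_t be the probability over a uniformly random ranking σ of V that the bidder ranked t is matched by Ranking on H. Then 1 − x_t ≤ (1/(kn)) · Σ_{s=1}^{t} x_s. -/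
-- The probability, over a uniformly random ranking `σ` of the bidders, that the
-- bidder of rank `t` is matched by Ranking (fixed arrival order `π`).
open scoped Classical in
noncomputable def rankProb {nH nV : ℕ} (E : Fin nH → Fin nV → Bool)
    (π : Equiv.Perm (Fin nH)) (t : Fin nV) : ℝ :=
  ((Finset.univ.filter fun σ : Equiv.Perm (Fin nV) =>
      σ.symm t ∈ (ranking E π σ).map Prod.snd).card : ℝ) /
    (Fintype.card (Equiv.Perm (Fin nV)))

namespace RkAux

variable {α : Type*} {p : ℕ}

/-- candidate bidders for keyword `u` given matched set `M` -/
def candB (E : α → Fin p → Bool) (u : α) (M : Finset (Fin p)) : Finset (Fin p) :=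
  Finset.univ.filter fun w => E u w = true ∧ w ∉ M

lemma mem_candB {E : α → Fin p → Bool} {u : α} {M : Finset (Fin p)} {w : Fin p} :
    w ∈ candB E u M ↔ E u w = true ∧ w ∉ M := by simp [candB]

/-- the bidder picked by ranking for keyword `u` -/
def pick (E : α → Fin p → Bool) (σ : Equiv.Perm (Fin p)) (u : α) (M : Finset (Fin p))
    (h : (candB E u M).Nonempty) : Fin p :=
  σ.symm (((candB E u M).image σ).min' (h.image σ))

lemma cand_eq (E : α → Fin p → Bool) (σ : Equiv.Perm (Fin p)) (u : α) (M : Finset (Fin p)) :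
    (Finset.univ.filter fun r => E u (σ.symm r) = true ∧ σ.symm r ∉ M)
      = (candB E u M).image σ := by
  ext r
  simp only [Finset.mem_filter, Finset.mem_univ, true_and, Finset.mem_image, mem_candB]
  constructor
  · intro h; exact ⟨σ.symm r, h, σ.apply_symm_apply r⟩
  · rintro ⟨w, hw, rfl⟩; simpa using hw

lemma rankingAux_cons (E : α → Fin p → Bool) (σ : Equiv.Perm (Fin p)) (u : α) (rest : List α)
    (M : Finset (Fin p)) :
    rankingAux E σ (u :: rest) M =
      if h : (candB E u M).Nonempty then
        (u, pick E σ u M h) :: rankingAux E σ rest (insert (pick E σ u M h) M)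
      else rankingAux E σ rest M := by
  show (if h : (Finset.univ.filter fun r => E u (σ.symm r) = true ∧ σ.symm r ∉ M).Nonempty then
      _ else _) = _
  simp only [cand_eq E σ u M]
  by_cases h : (candB E u M).Nonempty
  · rw [dif_pos (h.image σ), dif_pos h]; rfl
  · rw [dif_neg, dif_neg h]
    simpa [Finset.image_nonempty] using h

lemma pick_mem {E : α → Fin p → Bool} (σ : Equiv.Perm (Fin p)) {u : α} {M : Finset (Fin p)}
    (h : (candB E u M).Nonempty) : pick E σ u M h ∈ candB E u M := by
  have := Finset.min'_mem ((candB E u M).image σ) (h.image σ)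
  rcases Finset.mem_image.1 this with ⟨w, hw, hw2⟩
  rw [pick, ← hw2, Equiv.symm_apply_apply]; exact hw

lemma pick_min {E : α → Fin p → Bool} (σ : Equiv.Perm (Fin p)) {u : α} {M : Finset (Fin p)}
    (h : (candB E u M).Nonempty) {w : Fin p} (hw : w ∈ candB E u M) :
    σ (pick E σ u M h) ≤ σ w := by
  rw [pick, Equiv.apply_symm_apply]
  exact Finset.min'_le _ _ (Finset.mem_image_of_mem σ hw)

lemma pick_eq {E : α → Fin p → Bool} (σ : Equiv.Perm (Fin p)) {u : α} {M : Finset (Fin p)}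
    (h : (candB E u M).Nonempty) {w : Fin p} (hw : w ∈ candB E u M)
    (hmin : ∀ w' ∈ candB E u M, σ w ≤ σ w') : pick E σ u M h = w := by
  have h1 := pick_min σ h hw
  have h2 := hmin _ (pick_mem σ h)
  exact σ.injective (le_antisymm h1 h2)

lemma snd_not_mem {E : α → Fin p → Bool} {σ : Equiv.Perm (Fin p)} :
    ∀ (L : List α) (M : Finset (Fin p)) (q : α × Fin p), q ∈ rankingAux E σ L M → q.2 ∉ M := by
  intro L
  induction L with
  | nil => intro M q hq; simp [rankingAux] at hq
  | cons u rest ih =>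
    intro M q hq
    rw [rankingAux_cons] at hq
    by_cases h : (candB E u M).Nonempty
    · rw [dif_pos h] at hq
      rcases List.mem_cons.1 hq with h1 | h1
      · subst h1; exact (mem_candB.1 (pick_mem σ h)).2
      · intro hmem
        exact ih _ q h1 (Finset.mem_insert_of_mem hmem)
    · rw [dif_neg h] at hq; exact ih _ q hq

lemma snds_nodup {E : α → Fin p → Bool} {σ : Equiv.Perm (Fin p)} :
    ∀ (L : List α) (M : Finset (Fin p)), ((rankingAux E σ L M).map Prod.snd).Nodup := by
  intro L
  induction L with
  | nil => intro M; simp [rankingAux]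
  | cons u rest ih =>
    intro M
    rw [rankingAux_cons]
    by_cases h : (candB E u M).Nonempty
    · rw [dif_pos h]
      simp only [List.map_cons, List.nodup_cons]
      refine ⟨?_, ih _⟩
      intro hmem
      rcases List.mem_map.1 hmem with ⟨q, hq, hq2⟩
      exact snd_not_mem _ _ q hq (by rw [hq2]; exact Finset.mem_insert_self _ _)
    · rw [dif_neg h]; exact ih _

/-- If `v` is an unmatched available neighbor of `u`, then `u` gets matched to a bidder
of strictly smaller rank than `v`. -/
lemma matched_of_adj {E : α → Fin p → Bool} {σ : Equiv.Perm (Fin p)} :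
    ∀ (L : List α) (M : Finset (Fin p)) {u : α} {v : Fin p}, u ∈ L → E u v = true → v ∉ M →
      (∀ q ∈ rankingAux E σ L M, q.2 ≠ v) →
      ∃ w, (u, w) ∈ rankingAux E σ L M ∧ σ w < σ v := by
  intro L
  induction L with
  | nil => intro M u v hu; simp at hu
  | cons u0 rest ih =>
    intro M u v hu hE hv hun
    have hvc : v ∈ candB E u0 M ∨ u ≠ u0 := by
      by_cases h0 : u = u0
      · left; subst h0; exact mem_candB.2 ⟨hE, hv⟩
      · right; exact h0
    rw [rankingAux_cons] at hun ⊢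
    by_cases h : (candB E u0 M).Nonempty
    · rw [dif_pos h] at hun ⊢
      by_cases h0 : u = u0
      · subst h0
        refine ⟨pick E σ u M h, List.mem_cons_self, ?_⟩
        have hvc' : v ∈ candB E u M := mem_candB.2 ⟨hE, hv⟩
        have hle := pick_min σ h hvc'
        have hne : pick E σ u M h ≠ v := hun _ (List.mem_cons_self)
        exact lt_of_le_of_ne hle (fun hc => hne (σ.injective hc))
      · have hu' : u ∈ rest := by rcases List.mem_cons.1 hu with h1 | h1; exact absurd h1 h0; exact h1
        have hvne : pick E σ u0 M h ≠ v := hun _ (List.mem_cons_self)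
        have hv' : v ∉ insert (pick E σ u0 M h) M := by
          simp only [Finset.mem_insert]; rintro (rfl | hc); exact hvne rfl; exact hv hc
        obtain ⟨w, hw1, hw2⟩ := ih _ hu' hE hv' (fun q hq => hun q (List.mem_cons_of_mem _ hq))
        exact ⟨w, List.mem_cons_of_mem _ hw1, hw2⟩
    · rw [dif_neg h] at hun ⊢
      have h0 : u ≠ u0 := by
        rintro rfl
        rcases hvc with h1 | h1
        · exact h ⟨v, h1⟩
        · exact h1 rfl
      have hu' : u ∈ rest := by rcases List.mem_cons.1 hu with h1 | h1; exact absurd h1 h0; exact h1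
      exact ih _ hu' hE hv hun

/-- Blocking a bidder that is never matched anyway does not change the run. -/
lemma insert_unmatched {E : α → Fin p → Bool} {σ : Equiv.Perm (Fin p)} :
    ∀ (L : List α) (M : Finset (Fin p)) {v : Fin p}, v ∉ M →
      (∀ q ∈ rankingAux E σ L M, q.2 ≠ v) →
      rankingAux E σ L (insert v M) = rankingAux E σ L M := by
  intro L
  induction L with
  | nil => intro M v _ _; simp [rankingAux]
  | cons u0 rest ih =>
    intro M v hv hun
    rw [rankingAux_cons] at hun ⊢
    rw [rankingAux_cons]
    by_cases h : (candB E u0 M).Nonempty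
    · rw [dif_pos h] at hun
      set w0 := pick E σ u0 M h with hw0
      have hw0v : w0 ≠ v := hun _ (List.mem_cons_self)
      have hw0m : w0 ∈ candB E u0 (insert v M) := by
        have := pick_mem σ h
        rw [mem_candB] at this ⊢
        refine ⟨this.1, ?_⟩
        simp only [Finset.mem_insert]
        rintro (rfl | hc); exact hw0v rfl; exact this.2 hc
      have h' : (candB E u0 (insert v M)).Nonempty := ⟨w0, hw0m⟩
      have hsub : candB E u0 (insert v M) ⊆ candB E u0 M := by
        intro w hw
        rw [mem_candB] at hw ⊢
        exact ⟨hw.1, fun hc => hw.2 (Finset.mem_insert_of_mem hc)⟩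
      have hpick : pick E σ u0 (insert v M) h' = w0 :=
        pick_eq σ h' hw0m (fun w' hw' => pick_min σ h (hsub hw'))
      rw [dif_pos h', dif_pos h, hpick]
      congr 1
      rw [Finset.insert_comm]
      exact ih _ (by simp only [Finset.mem_insert]; rintro (rfl | hc); exact hw0v.symm rfl; exact hv hc)
        (fun q hq => hun q (List.mem_cons_of_mem _ hq))
    · rw [dif_neg h] at hun
      have h' : ¬ (candB E u0 (insert v M)).Nonempty := by
        intro ⟨w, hw⟩
        rw [mem_candB] at hw
        exact h ⟨w, mem_candB.2 ⟨hw.1, fun hc => hw.2 (Finset.mem_insert_of_mem hc)⟩⟩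
      rw [dif_neg h', dif_neg h]
      exact ih _ hv hun

/-- The run only depends on the relative order of the available bidders. -/
lemma order_equiv {E : α → Fin p → Bool} {σ τ : Equiv.Perm (Fin p)} :
    ∀ (L : List α) (M : Finset (Fin p)),
      (∀ w w', w ∉ M → w' ∉ M → (σ w < σ w' ↔ τ w < τ w')) →
      rankingAux E σ L M = rankingAux E τ L M := by
  intro L
  induction L with
  | nil => intro M _; simp [rankingAux]
  | cons u0 rest ih =>
    intro M hord
    rw [rankingAux_cons, rankingAux_cons]
    by_cases h : (candB E u0 M).Nonempty
    · rw [dif_pos h, dif_pos h]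
      have hpick : pick E τ u0 M h = pick E σ u0 M h := by
        refine pick_eq τ h (pick_mem σ h) ?_
        intro w' hw'
        by_contra hlt
        push_neg at hlt
        have h1 : σ w' < σ (pick E σ u0 M h) := by
          rw [hord w' (pick E σ u0 M h) (mem_candB.1 hw').2 (mem_candB.1 (pick_mem σ h)).2]
          exact hlt
        exact absurd (pick_min σ h hw') (not_le.2 h1)
      rw [hpick]
      congr 1
      exact ih _ (fun w w' hw hw' => hord w w'
        (fun hc => hw (Finset.mem_insert_of_mem hc)) (fun hc => hw' (Finset.mem_insert_of_mem hc)))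
    · rw [dif_neg h, dif_neg h]
      exact ih _ hord

/-- Un-blocking one bidder only improves everyone's partner. -/
lemma unblock_mono {E : α → Fin p → Bool} {σ : Equiv.Perm (Fin p)} :
    ∀ (L : List α) (M : Finset (Fin p)) (v : Fin p), v ∉ M →
      ∀ u w, (u, w) ∈ rankingAux E σ L (insert v M) →
        ∃ w', (u, w') ∈ rankingAux E σ L M ∧ σ w' ≤ σ w := by
  intro L
  induction L with
  | nil => intro M v _ u w hq; simp [rankingAux] at hq
  | cons u0 rest ih =>
    intro M v hv u w hq
    have hsub : candB E u0 (insert v M) ⊆ candB E u0 M := by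
      intro x hx
      rw [mem_candB] at hx ⊢
      exact ⟨hx.1, fun hc => hx.2 (Finset.mem_insert_of_mem hc)⟩
    rw [rankingAux_cons] at hq
    rw [rankingAux_cons]
    by_cases h' : (candB E u0 (insert v M)).Nonempty
    · rw [dif_pos h'] at hq
      have h : (candB E u0 M).Nonempty := ⟨_, hsub h'.choose_spec⟩
      rw [dif_pos h]
      set w' := pick E σ u0 (insert v M) h' with hw'def
      set w0 := pick E σ u0 M h with hw0def
      have hw'M : w' ∈ candB E u0 M := hsub (pick_mem σ h')
      have hle : σ w0 ≤ σ w' := pick_min σ h hw'M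
      have hw'vM : w' ∉ insert v M := (mem_candB.1 (pick_mem σ h')).2
      have hvw' : v ≠ w' := fun hc => hw'vM (hc ▸ Finset.mem_insert_self v M)
      by_cases heq : w0 = w'
      · rcases List.mem_cons.1 hq with h1 | h1
        · rw [Prod.mk.injEq] at h1
          refine ⟨w0, ?_, ?_⟩
          · rw [h1.1]; exact List.mem_cons_self
          · rw [h1.2, ← heq]
        · have hvm : v ∉ insert w' M := by
            simp only [Finset.mem_insert]; rintro (h1 | hc); exact hvw' h1; exact hv hc
          rw [Finset.insert_comm] at h1
          obtain ⟨w'', hw1, hw2⟩ := ih (insert w' M) v hvm u w h1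
          rw [heq]
          exact ⟨w'', List.mem_cons_of_mem _ hw1, hw2⟩
      · have hw0v : w0 = v := by
          by_contra hc
          have : w0 ∈ candB E u0 (insert v M) := by
            have h2 := mem_candB.1 (pick_mem σ h)
            rw [mem_candB]
            refine ⟨h2.1, ?_⟩
            simp only [Finset.mem_insert]
            rintro (rfl | hm); exact hc rfl; exact h2.2 hm
          have := pick_min σ h' this
          exact heq (σ.injective (le_antisymm hle this))
        rcases List.mem_cons.1 hq with h1 | h1
        · rw [Prod.mk.injEq] at h1
          refine ⟨w0, ?_, ?_⟩
          · rw [h1.1]; exact List.mem_cons_self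
          · rw [h1.2]; exact hle
        · obtain ⟨w'', hw1, hw2⟩ := ih (insert v M) w' hw'vM u w h1
          rw [hw0v]
          exact ⟨w'', List.mem_cons_of_mem _ hw1, hw2⟩
    · rw [dif_neg h'] at hq
      by_cases h : (candB E u0 M).Nonempty
      · rw [dif_pos h]
        have hw0v : pick E σ u0 M h = v := by
          by_contra hc
          have h2 := mem_candB.1 (pick_mem σ h)
          exact h' ⟨_, mem_candB.2 ⟨h2.1, by
            simp only [Finset.mem_insert]
            rintro (hm | hm); exact hc hm; exact h2.2 hm⟩⟩
        rw [hw0v]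
        exact ⟨w, List.mem_cons_of_mem _ hq, le_refl _⟩
      · rw [dif_neg h]
        exact ih M v hv u w hq


section MovePerm
variable {m : ℕ}




lemma cycleRange_val {i a : Fin (m+1)} (ha : a ≠ i) :
    ((Fin.cycleRange i a : Fin (m+1)) : ℕ) = if (a : ℕ) < (i : ℕ) then (a : ℕ) + 1 else (a : ℕ) := by
  rcases lt_or_gt_of_ne ha with h | h
  · rw [Fin.coe_cycleRange_of_lt h, if_pos (Fin.lt_def.1 h)]
  · rw [Fin.cycleRange_of_gt h, if_neg (by simpa using not_lt.2 (le_of_lt (Fin.lt_def.1 h)))]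

lemma cycleRange_ne_zero {i a : Fin (m+1)} (ha : a ≠ i) : Fin.cycleRange i a ≠ 0 := by
  intro hc
  have h0 : ((Fin.cycleRange i a : Fin (m+1)) : ℕ) = 0 := by rw [hc]; rfl
  rw [cycleRange_val ha] at h0
  have hai : (a : ℕ) ≠ (i : ℕ) := fun h => ha (Fin.ext h)
  have hi : (i : ℕ) ≤ m := Nat.lt_succ_iff.1 i.isLt
  split_ifs at h0 <;> omega

lemma cycleRange_lt_iff {i a b : Fin (m+1)} (ha : a ≠ i) (hb : b ≠ i) :
    a < b ↔ Fin.cycleRange i a < Fin.cycleRange i b := by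
  rw [Fin.lt_def, Fin.lt_def, cycleRange_val ha, cycleRange_val hb]
  have hai : (a : ℕ) ≠ (i : ℕ) := fun h => ha (Fin.ext h)
  have hbi : (b : ℕ) ≠ (i : ℕ) := fun h => hb (Fin.ext h)
  split_ifs <;> omega

lemma cycleRange_le {i a : Fin (m+1)} (ha : a ≠ i) : (a : ℕ) ≤ (Fin.cycleRange i a : ℕ) := by
  rw [cycleRange_val ha]; split_ifs <;> omega

def movePerm (t i : Fin (m+1)) : Equiv.Perm (Fin (m+1)) :=
  (Fin.cycleRange t).trans (Fin.cycleRange i).symm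

lemma movePerm_apply_self (t i : Fin (m+1)) : movePerm t i t = i := by
  simp [movePerm, Fin.cycleRange_self, Fin.cycleRange_symm_zero]

lemma symm_ne_special {i : Fin (m+1)} {a : Fin (m+1)} (ha : a ≠ 0) :
    (Fin.cycleRange i).symm a ≠ i := by
  intro hc
  apply ha
  have h2 : Fin.cycleRange i ((Fin.cycleRange i).symm a) = Fin.cycleRange i i := congrArg _ hc
  rwa [Equiv.apply_symm_apply, Fin.cycleRange_self] at h2

lemma movePerm_lt_iff {t i a b : Fin (m+1)} (ha : a ≠ t) (hb : b ≠ t) :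
    a < b ↔ movePerm t i a < movePerm t i b := by
  have h1 : a < b ↔ Fin.cycleRange t a < Fin.cycleRange t b := cycleRange_lt_iff ha hb
  rw [h1]
  show _ ↔ (Fin.cycleRange i).symm (Fin.cycleRange t a) < (Fin.cycleRange i).symm (Fin.cycleRange t b)
  have ha0 : Fin.cycleRange t a ≠ 0 := cycleRange_ne_zero ha
  have hb0 : Fin.cycleRange t b ≠ 0 := cycleRange_ne_zero hb
  have ha2 : (Fin.cycleRange i).symm (Fin.cycleRange t a) ≠ i := symm_ne_special ha0
  have hb2 : (Fin.cycleRange i).symm (Fin.cycleRange t b) ≠ i := symm_ne_special hb0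
  rw [cycleRange_lt_iff ha2 hb2, Equiv.apply_symm_apply, Equiv.apply_symm_apply]

lemma movePerm_le {t i a : Fin (m+1)} (hat : a < t) : movePerm t i a ≤ t := by
  have ha : a ≠ t := ne_of_lt hat
  have h1 : ((Fin.cycleRange t a : Fin (m+1)) : ℕ) = (a : ℕ) + 1 := Fin.coe_cycleRange_of_lt hat
  have h1t : ((Fin.cycleRange t a : Fin (m+1)) : ℕ) ≤ (t : ℕ) := by
    rw [h1]; exact Fin.lt_def.1 hat
  have h0 : Fin.cycleRange t a ≠ 0 := cycleRange_ne_zero ha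
  have h2 : (Fin.cycleRange i).symm (Fin.cycleRange t a) ≠ i := symm_ne_special h0
  have h3 : (((Fin.cycleRange i).symm (Fin.cycleRange t a) : Fin (m+1)) : ℕ)
      ≤ ((Fin.cycleRange t a : Fin (m+1)) : ℕ) := by
    have := cycleRange_le h2
    rwa [Equiv.apply_symm_apply] at this
  show movePerm t i a ≤ t
  rw [Fin.le_def]
  exact le_trans h3 h1t


end MovePerm
end RkAux

open RkAux Finset

/-- let `G` be bipartite with a perfect matching of size `n` and let `H`
be a left `k`-copy of `G` (via `ζ`, exactly `k`-to-one, neighborhoods preserved).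
With `x_t` the probability over a uniform random ranking `σ` that the bidder ranked
`t` is matched by Ranking on `H`, we have `1 − x_t ≤ (1/(kn)) ∑_{s ≤ t} x_s`. -/
theorem ranking_kcopy_rank_inequality (n k nH : ℕ) (hk : 1 ≤ k) (hn : 1 ≤ n)
    (EG : Fin n → Fin n → Bool)
    (f : Equiv.Perm (Fin n)) (hf : ∀ v : Fin n, EG (f v) v = true)
    (ζ : Fin nH → Fin n)
    (hζ : ∀ u : Fin n, (Finset.univ.filter fun x => ζ x = u).card = k)
    (EH : Fin nH → Fin n → Bool) (hEH : ∀ x v, EH x v = EG (ζ x) v)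
    (π : Equiv.Perm (Fin nH)) (t : Fin n) :
    1 - rankProb EH π t ≤
      (1 / ((k : ℝ) * n)) * ∑ s ∈ Finset.univ.filter (· ≤ t), rankProb EH π s := by
  classical
  obtain ⟨m, rfl⟩ : ∃ m, n = m + 1 := ⟨n - 1, by omega⟩
  set L : List (Fin nH) := (List.finRange nH).map π.symm with hLdef
  have hL : ∀ x : Fin nH, x ∈ L := fun x =>
    List.mem_map.2 ⟨π x, List.mem_finRange _, by simp⟩
  set N : ℕ := Fintype.card (Equiv.Perm (Fin (m+1))) with hNdef
  set R : Finset (Equiv.Perm (Fin (m+1))) :=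
    Finset.univ.filter (fun σ => σ.symm t ∉ (ranking EH π σ).map Prod.snd) with hRdef
  set Ms : Fin (m+1) → Finset (Equiv.Perm (Fin (m+1))) :=
    (fun s => Finset.univ.filter (fun σ => σ.symm s ∈ (ranking EH π σ).map Prod.snd)) with hMdef
  -- step 1: per-(σ', i, x) matched pair of low rank
  have main : ∀ (σ' : Equiv.Perm (Fin (m+1))) (i : Fin (m+1)) (x : Fin nH),
      ((movePerm t i)⁻¹ * σ') ∈ R → ζ x = f (σ'.symm i) →
      ∃ w', (x, w') ∈ ranking EH π σ' ∧ σ' w' ≤ t := by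
    intro σ' i x hR hx
    set c := movePerm t i with hc
    set σ₀ := c⁻¹ * σ' with hσ₀
    set v := σ'.symm i with hvdef
    have hσ' : ∀ w, σ' w = c (σ₀ w) := by
      intro w
      simp [hσ₀, Equiv.Perm.mul_apply]
    have hct : c t = i := movePerm_apply_self t i
    have hvt : σ₀ v = t := by
      have : σ₀ v = c⁻¹ i := by simp [hσ₀, hvdef, Equiv.Perm.mul_apply]
      rw [this, ← hct]
      simp
    have hvsymm : σ₀.symm t = v := by
      rw [← hvt]; simp
    have hunm : ∀ q ∈ ranking EH π σ₀, q.2 ≠ v := by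
      intro q hq hqv
      rw [hRdef, Finset.mem_filter] at hR
      exact hR.2 (by
        rw [hvsymm, ← hqv]
        exact List.mem_map.2 ⟨q, hq, rfl⟩)
    have hEx : EH x v = true := by
      rw [hEH, hx, hvdef]
      exact hf _
    obtain ⟨w, hw1, hw2⟩ :=
      matched_of_adj (σ := σ₀) L ∅ (hL x) hEx (Finset.notMem_empty v) hunm
    have hw2t : σ₀ w < t := by rw [← hvt]; exact hw2
    -- block v
    have hblock : rankingAux EH σ₀ L (insert v ∅) = rankingAux EH σ₀ L ∅ :=
      insert_unmatched L ∅ (Finset.notMem_empty v) hunm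
    -- reorder to σ'
    have hne_t : ∀ w' : Fin (m+1), w' ≠ v → σ₀ w' ≠ t := by
      intro w' hw' hc'
      exact hw' (by rw [← hvsymm, ← hc']; simp)
    have hoe : rankingAux EH σ₀ L (insert v ∅) = rankingAux EH σ' L (insert v ∅) := by
      refine order_equiv L (insert v ∅) ?_
      intro a b ha hb
      simp only [Finset.mem_insert, Finset.notMem_empty, or_false] at ha hb
      rw [hσ' a, hσ' b]
      exact movePerm_lt_iff (hne_t a ha) (hne_t b hb)
    have hw1' : (x, w) ∈ rankingAux EH σ' L (insert v ∅) := by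
      rw [← hoe, hblock]; exact hw1
    obtain ⟨w', hw'1, hw'2⟩ := unblock_mono L ∅ v (Finset.notMem_empty v) x w hw1'
    refine ⟨w', hw'1, le_trans hw'2 ?_⟩
    rw [hσ' w]
    exact movePerm_le hw2t
  -- step 2: per σ' counting
  have main2 : ∀ σ' : Equiv.Perm (Fin (m+1)),
      k * ((Finset.univ.filter fun i : Fin (m+1) => (movePerm t i)⁻¹ * σ' ∈ R).card) ≤
        (Finset.univ.filter fun s : Fin (m+1) =>
          s ≤ t ∧ σ'.symm s ∈ (ranking EH π σ').map Prod.snd).card := by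
    intro σ'
    set goodI := Finset.univ.filter fun i : Fin (m+1) => (movePerm t i)⁻¹ * σ' ∈ R with hgood
    set P : Finset ((_ : Fin (m+1)) × Fin nH) :=
      goodI.sigma (fun i => Finset.univ.filter fun x => ζ x = f (σ'.symm i)) with hPdef
    have hcardP : P.card = k * goodI.card := by
      rw [hPdef, Finset.card_sigma]
      rw [Finset.sum_congr rfl (fun i _ => hζ (f (σ'.symm i)))]
      rw [Finset.sum_const, smul_eq_mul, mul_comm]
    rw [← hcardP]
    set φ : ((_ : Fin (m+1)) × Fin nH) → Fin (m+1) := fun q =>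
      if h : ∃ w', (q.2, w') ∈ ranking EH π σ' ∧ σ' w' ≤ t then σ' (Classical.choose h) else t
      with hφ
    have hmemP : ∀ q ∈ P, q.1 ∈ goodI ∧ ζ q.2 = f (σ'.symm q.1) := by
      intro q hq
      rw [hPdef, Finset.mem_sigma] at hq
      exact ⟨hq.1, (Finset.mem_filter.1 hq.2).2⟩
    have hex : ∀ q ∈ P, ∃ w', (q.2, w') ∈ ranking EH π σ' ∧ σ' w' ≤ t := by
      intro q hq
      obtain ⟨h1, h2⟩ := hmemP q hq
      rw [hgood, Finset.mem_filter] at h1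
      exact main σ' q.1 q.2 h1.2 h2
    apply Finset.card_le_card_of_injOn φ
    · intro q hq
      have h := hex q hq
      rw [hφ]
      simp only [dif_pos h]
      obtain ⟨hw1, hw2⟩ := Classical.choose_spec h
      rw [Finset.mem_coe, Finset.mem_filter]
      refine ⟨Finset.mem_univ _, hw2, ?_⟩
      rw [Equiv.symm_apply_apply]
      exact List.mem_map.2 ⟨_, hw1, rfl⟩
    · intro q hq q' hq' heq
      have h := hex q hq
      have h' := hex q' hq'
      rw [hφ] at heq
      simp only [dif_pos h, dif_pos h'] at heq
      obtain ⟨hw1, _⟩ := Classical.choose_spec h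
      obtain ⟨hw1', _⟩ := Classical.choose_spec h'
      have hww : Classical.choose h = Classical.choose h' := σ'.injective heq
      have hnodup := snds_nodup (E := EH) (σ := σ') L ∅
      have hw1a : (q.2, Classical.choose h) ∈ rankingAux EH σ' L ∅ := hw1
      have hw1b : (q'.2, Classical.choose h') ∈ rankingAux EH σ' L ∅ := hw1'
      have hpair : ((q.2, Classical.choose h) : Fin nH × Fin (m+1))
          = (q'.2, Classical.choose h') :=
        List.inj_on_of_nodup_map hnodup hw1a hw1b (by simp [hww])
      have hxeq : q.2 = q'.2 := congrArg Prod.fst hpair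
      have hieq : q.1 = q'.1 := by
        have e1 := (hmemP q hq).2
        have e2 := (hmemP q' hq').2
        rw [hxeq] at e1
        have := f.injective (e1.symm.trans e2)
        exact σ'.symm.injective this
      rcases q with ⟨i, x⟩
      rcases q' with ⟨i', x'⟩
      cases hieq
      cases hxeq
      rfl
  -- step 3: global counting
  have count1 : ∑ σ' : Equiv.Perm (Fin (m+1)),
      (Finset.univ.filter fun i : Fin (m+1) => (movePerm t i)⁻¹ * σ' ∈ R).card
        = (m+1) * R.card := by
    have h1 : ∀ σ' : Equiv.Perm (Fin (m+1)),
        (Finset.univ.filter fun i : Fin (m+1) => (movePerm t i)⁻¹ * σ' ∈ R).card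
          = ∑ i : Fin (m+1), if (movePerm t i)⁻¹ * σ' ∈ R then 1 else 0 := by
      intro σ'; rw [Finset.card_filter]
    rw [Finset.sum_congr rfl (fun σ' _ => h1 σ'), Finset.sum_comm]
    have h2 : ∀ i : Fin (m+1),
        (∑ σ' : Equiv.Perm (Fin (m+1)), if (movePerm t i)⁻¹ * σ' ∈ R then 1 else 0) = R.card := by
      intro i
      have he := Fintype.sum_equiv (Equiv.mulLeft (movePerm t i))
        (fun σ => if σ ∈ R then (1:ℕ) else 0)
        (fun σ' => if (movePerm t i)⁻¹ * σ' ∈ R then 1 else 0)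
        (fun σ => by simp [inv_mul_cancel_left])
      rw [← he, Finset.sum_ite_mem, Finset.univ_inter, Finset.sum_const, smul_eq_mul, mul_one]
    rw [Finset.sum_congr rfl (fun i _ => h2 i), Finset.sum_const, smul_eq_mul]
    simp
  have count2 : ∑ σ' : Equiv.Perm (Fin (m+1)),
      (Finset.univ.filter fun s : Fin (m+1) =>
          s ≤ t ∧ σ'.symm s ∈ (ranking EH π σ').map Prod.snd).card
        = ∑ s ∈ Finset.univ.filter (· ≤ t), (Ms s).card := by
    have h1 : ∀ σ' : Equiv.Perm (Fin (m+1)),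
        (Finset.univ.filter fun s : Fin (m+1) =>
            s ≤ t ∧ σ'.symm s ∈ (ranking EH π σ').map Prod.snd).card
          = ∑ s : Fin (m+1), if s ≤ t ∧ σ'.symm s ∈ (ranking EH π σ').map Prod.snd
              then 1 else 0 := by
      intro σ'; rw [Finset.card_filter]
    rw [Finset.sum_congr rfl (fun σ' _ => h1 σ'), Finset.sum_comm]
    rw [Finset.sum_filter]
    refine Finset.sum_congr rfl ?_
    intro s _
    by_cases hs : s ≤ t
    · simp only [hs, if_true, true_and]
      rw [hMdef, Finset.card_filter]
    · simp [hs]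
  have main3 : k * ((m+1) * R.card) ≤ ∑ s ∈ Finset.univ.filter (· ≤ t), (Ms s).card := by
    calc k * ((m+1) * R.card)
        = ∑ σ' : Equiv.Perm (Fin (m+1)),
            k * (Finset.univ.filter fun i : Fin (m+1) => (movePerm t i)⁻¹ * σ' ∈ R).card := by
          rw [← Finset.mul_sum, count1]
      _ ≤ ∑ σ' : Equiv.Perm (Fin (m+1)),
            (Finset.univ.filter fun s : Fin (m+1) =>
              s ≤ t ∧ σ'.symm s ∈ (ranking EH π σ').map Prod.snd).card :=
          Finset.sum_le_sum (fun σ' _ => main2 σ')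
      _ = _ := count2
  -- step 4: real arithmetic
  have hNpos : 0 < N := Fintype.card_pos
  have hNR : (0:ℝ) < (N:ℝ) := by exact_mod_cast hNpos
  have hprob : ∀ s : Fin (m+1), rankProb EH π s = ((Ms s).card : ℝ) / N := by
    intro s
    rw [rankProb, hMdef]
  have hRcard : (Ms t).card + R.card = N := by
    rw [hMdef, hRdef, hNdef]
    simpa using Finset.card_filter_add_card_filter_not (s := (Finset.univ : Finset (Equiv.Perm (Fin (m+1)))))
      (p := fun σ => σ.symm t ∈ (ranking EH π σ).map Prod.snd)
  have hxt : 1 - rankProb EH π t = (R.card : ℝ) / N := by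
    rw [hprob t]
    have : ((Ms t).card : ℝ) + (R.card : ℝ) = (N : ℝ) := by exact_mod_cast hRcard
    field_simp
    linarith
  rw [hxt]
  have hsum : ∑ s ∈ Finset.univ.filter (· ≤ t), rankProb EH π s
      = (∑ s ∈ Finset.univ.filter (· ≤ t), ((Ms s).card : ℝ)) / N := by
    rw [Finset.sum_div]
    exact Finset.sum_congr rfl (fun s _ => hprob s)
  rw [hsum]
  have hkm : (0:ℝ) < (k:ℝ) * ((m:ℝ)+1) := by positivity
  have hkey : ((k : ℝ) * (((m:ℝ)+1) * (R.card:ℝ))) ≤ ∑ s ∈ Finset.univ.filter (· ≤ t), ((Ms s).card : ℝ) := by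
    have := main3
    have hc : ((k * ((m+1) * R.card) : ℕ) : ℝ) ≤ ((∑ s ∈ Finset.univ.filter (· ≤ t), (Ms s).card : ℕ) : ℝ) :=
      Nat.cast_le.2 main3
    push_cast at hc
    linarith [hc]
  have hncast : ((m+1 : ℕ) : ℝ) = (m:ℝ)+1 := by push_cast; ring
  rw [div_le_iff₀ hNR]
  rw [hncast]
  have expand : 1 / ((k:ℝ) * ((m:ℝ)+1)) *
      ((∑ s ∈ Finset.univ.filter (· ≤ t), ((Ms s).card : ℝ)) / ↑N) * ↑N
      = (∑ s ∈ Finset.univ.filter (· ≤ t), ((Ms s).card : ℝ)) / ((k:ℝ) * ((m:ℝ)+1)) := by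
    rw [mul_assoc, div_mul_cancel₀ _ hNR.ne']
    ring
  rw [expand, le_div_iff₀ hkm]
  nlinarith [hkey]
end

section
/- Let (x_t)_{t=1}^n be reals in [0,1] satisfying 1 − x_t ≤ (1/(kn)) Σ_{s=1}^t x_s for all 1 ≤ t ≤ n, and let S_n = Σ_{s=1}^n x_s. Then S_n ≥ Σ_{s=1}^n (kn/(kn+1))^s = kn(1 − (1 − 1/(kn+1))^n). -/
open Finset

lemma geom_closed (a : ℝ) (ha : 0 < a) :
    ∀ m : ℕ, ∑ s ∈ Finset.Icc 1 m, (a / (a + 1)) ^ s = a * (1 - (a / (a + 1)) ^ m) := by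
  have ha1 : a + 1 ≠ 0 := by linarith
  intro m
  induction m with
  | zero => simp
  | succ t ih =>
    rw [Finset.sum_Icc_succ_top (by omega), ih]
    linear_combination (a / (a + 1)) ^ t * div_mul_cancel₀ a ha1

/-- if `x_1, …, x_n ∈ [0,1]` satisfy `1 − x_t ≤ (1/(kn)) ∑_{s=1}^t x_s`
for all `1 ≤ t ≤ n`, then `S_n = ∑_{s=1}^n x_s ≥ ∑_{s=1}^n (kn/(kn+1))^s
= kn (1 − (1 − 1/(kn+1))^n)`. -/
theorem ranking_sum_recurrence (k n : ℕ) (hk : 1 ≤ k) (hn : 1 ≤ n)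
    (x : ℕ → ℝ)
    (hx : ∀ t, 1 ≤ t → t ≤ n → 0 ≤ x t ∧ x t ≤ 1)
    (hrec : ∀ t, 1 ≤ t → t ≤ n →
      1 - x t ≤ (1 / ((k : ℝ) * n)) * ∑ s ∈ Finset.Icc 1 t, x s) :
    (∑ s ∈ Finset.Icc 1 n, ((k : ℝ) * n / ((k : ℝ) * n + 1)) ^ s ≤
        ∑ s ∈ Finset.Icc 1 n, x s) ∧
    (∑ s ∈ Finset.Icc 1 n, ((k : ℝ) * n / ((k : ℝ) * n + 1)) ^ s =
        (k : ℝ) * n * (1 - (1 - 1 / ((k : ℝ) * n + 1)) ^ n)) := by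
  set a : ℝ := (k : ℝ) * n with ha_def
  have ha : 0 < a := by
    have : (1:ℝ) ≤ (k:ℝ) := by exact_mod_cast hk
    have : (1:ℝ) ≤ (n:ℝ) := by exact_mod_cast hn
    positivity
  have ha1 : (0:ℝ) < a + 1 := by linarith
  set q : ℝ := a / (a + 1) with hq_def
  have hq : 0 < q := by positivity
  have hq' : q = 1 - 1 / (a + 1) := by rw [hq_def]; field_simp; ring
  constructor
  · -- main inequality, by induction on t
    have key : ∀ t, t ≤ n → ∑ s ∈ Finset.Icc 1 t, q ^ s ≤ ∑ s ∈ Finset.Icc 1 t, x s := by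
      intro t
      induction t with
      | zero => simp
      | succ t ih =>
        intro htn
        have ih' := ih (by omega)
        have hr := hrec (t + 1) (by omega) htn
        rw [Finset.sum_Icc_succ_top (by omega : 1 ≤ t + 1),
          Finset.sum_Icc_succ_top (by omega : 1 ≤ t + 1)]
        rw [Finset.sum_Icc_succ_top (by omega : 1 ≤ t + 1)] at hr
        set S := ∑ s ∈ Finset.Icc 1 t, x s with hS
        set G := ∑ s ∈ Finset.Icc 1 t, q ^ s with hG
        -- from hr : 1 - x (t+1) ≤ (1/a) * (S + x (t+1))
        -- so a * (1 + S) ≤ (a+1) * (S + x (t+1)), i.e. q*(1+S) ≤ S + x(t+1)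
        rw [div_mul_eq_mul_div, le_div_iff₀ ha] at hr
        have step : q * (1 + S) ≤ S + x (t + 1) := by
          rw [hq_def, div_mul_eq_mul_div, div_le_iff₀ ha1]
          nlinarith [hr]
        have hGclosed : G = a * (1 - q ^ t) := geom_closed a ha t
        have hGq : G + q ^ (t + 1) = q * (1 + G) := by
          rw [hGclosed]
          rw [hq_def]
          linear_combination ((a / (a + 1)) ^ t - 1) * div_mul_cancel₀ a ha1.ne'
        have hmono : q * (1 + G) ≤ q * (1 + S) := by
          apply mul_le_mul_of_nonneg_left (by linarith) (le_of_lt hq)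
        linarith
    exact key n le_rfl
  · rw [← hq']
    exact geom_closed a ha n
end

section
/- Let G be a bipartite graph whose maximum matching has size OPT, and let H be a left k-copy of G. The expected size of the matching produced by Ranking (with a uniformly random ranking of the bidders) on H is at least k·OPT·(1 − e^{−1/k} + o(1)). -/
-- The expected size of the matching produced by Ranking with a uniformly random
-- ranking of the bidders (fixed arrival order `π`).
noncomputable def rankExpSize {nH nV : ℕ} (E : Fin nH → Fin nV → Bool)
    (π : Equiv.Perm (Fin nH)) : ℝ :=
  (∑ σ : Equiv.Perm (Fin nV), ((ranking E π σ).length : ℝ)) /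
    (Fintype.card (Equiv.Perm (Fin nV)))

/-- A matching of the bipartite graph `E`: a set of adjacent pairs, no two sharing a
keyword or a bidder. -/
def IsMatchingSet {nU nV : ℕ} (E : Fin nU → Fin nV → Bool)
    (S : Finset (Fin nU × Fin nV)) : Prop :=
  (∀ e ∈ S, E e.1 e.2 = true) ∧
  (∀ e ∈ S, ∀ e' ∈ S, e.1 = e'.1 → e = e') ∧
  (∀ e ∈ S, ∀ e' ∈ S, e.2 = e'.2 → e = e')

namespace KVV

variable {α : Type*} {p : ℕ}

def cands (E : α → Fin p → Bool) (u : α) (S : Finset (Fin p)) : Finset (Fin p) :=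
  Finset.univ.filter fun w => E u w = true ∧ w ∉ S

lemma mem_cands {E : α → Fin p → Bool} {u : α} {S : Finset (Fin p)} {w : Fin p} :
    w ∈ cands E u S ↔ E u w = true ∧ w ∉ S := by
  simp [cands]

def pick (σ : Equiv.Perm (Fin p)) (C : Finset (Fin p)) (h : C.Nonempty) : Fin p :=
  σ.symm ((C.image σ).min' (h.image σ))

lemma pick_mem (σ : Equiv.Perm (Fin p)) (C : Finset (Fin p)) (h : C.Nonempty) :
    pick σ C h ∈ C := by
  have hm := (C.image σ).min'_mem (h.image σ)
  rcases Finset.mem_image.mp hm with ⟨c, hc, hce⟩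
  have : pick σ C h = c := by
    rw [pick, ← hce, Equiv.symm_apply_apply]
  rw [this]; exact hc

lemma pick_le (σ : Equiv.Perm (Fin p)) (C : Finset (Fin p)) (h : C.Nonempty) :
    ∀ c ∈ C, σ (pick σ C h) ≤ σ c := by
  intro c hc
  rw [pick, Equiv.apply_symm_apply]
  exact (C.image σ).min'_le _ (Finset.mem_image_of_mem _ hc)

lemma pick_eq {σ : Equiv.Perm (Fin p)} {C : Finset (Fin p)} (h : C.Nonempty) {b : Fin p}
    (hb : b ∈ C) (hmin : ∀ c ∈ C, σ b ≤ σ c) : pick σ C h = b := by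
  have h1 := pick_le σ C h b hb
  have h2 := hmin _ (pick_mem σ C h)
  exact σ.injective (le_antisymm h1 h2)

def run (E : α → Fin p → Bool) (σ : Equiv.Perm (Fin p)) :
    List α → Finset (Fin p) → List (α × Fin p)
  | [], _ => []
  | u :: rest, S =>
    if h : (cands E u S).Nonempty then
      (u, pick σ _ h) :: run E σ rest (insert (pick σ _ h) S)
    else run E σ rest S

lemma rankingAux_eq_run (E : α → Fin p → Bool) (σ : Equiv.Perm (Fin p)) :
    ∀ (L : List α) (S : Finset (Fin p)), rankingAux E σ L S = run E σ L S := by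
  intro L
  induction L with
  | nil => intro S; rfl
  | cons u rest ih =>
    intro S
    have hcand : (Finset.univ.filter fun r => E u (σ.symm r) = true ∧ σ.symm r ∉ S)
        = (cands E u S).image σ := by
      ext r
      simp only [Finset.mem_filter, Finset.mem_univ, true_and, Finset.mem_image, mem_cands]
      constructor
      · rintro ⟨h1, h2⟩; exact ⟨σ.symm r, ⟨h1, h2⟩, by simp⟩
      · rintro ⟨w, hw, rfl⟩; simpa using hw
    rw [rankingAux, run]
    simp only [hcand]
    by_cases hC : (cands E u S).Nonempty
    · rw [dif_pos (hC.image σ), dif_pos hC]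
      have : σ.symm (((cands E u S).image σ).min' (hC.image σ)) = pick σ _ hC := rfl
      rw [this, ih]
    · rw [dif_neg (fun hn => hC (by rwa [Finset.image_nonempty] at hn)), dif_neg hC, ih]

lemma run_fst_sublist (E : α → Fin p → Bool) (σ : Equiv.Perm (Fin p)) :
    ∀ (L : List α) (S : Finset (Fin p)), ((run E σ L S).map Prod.fst).Sublist L := by
  intro L
  induction L with
  | nil => intro S; simp [run]
  | cons u rest ih =>
    intro S
    rw [run]
    by_cases hC : (cands E u S).Nonempty
    · rw [dif_pos hC]; simpa using (ih _).cons₂ u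
    · rw [dif_neg hC]; exact (ih S).cons u

lemma run_partner_unique {E : α → Fin p → Bool} {σ : Equiv.Perm (Fin p)}
    {L : List α} {S : Finset (Fin p)} (hL : L.Nodup) {x : α} {w w' : Fin p}
    (h1 : (x, w) ∈ run E σ L S) (h2 : (x, w') ∈ run E σ L S) : w = w' := by
  have hnd : ((run E σ L S).map Prod.fst).Nodup := hL.sublist (run_fst_sublist E σ L S)
  have := List.inj_on_of_nodup_map hnd h1 h2 (by rfl)
  exact congrArg Prod.snd this

lemma run_snd_not_mem {E : α → Fin p → Bool} {σ : Equiv.Perm (Fin p)} :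
    ∀ {L : List α} {S : Finset (Fin p)} {x : α} {w : Fin p},
      (x, w) ∈ run E σ L S → w ∉ S := by
  intro L
  induction L with
  | nil => intro S x w h; simp [run] at h
  | cons u rest ih =>
    intro S x w h
    rw [run] at h
    by_cases hC : (cands E u S).Nonempty
    · rw [dif_pos hC] at h
      rcases List.mem_cons.mp h with h | h
      · obtain ⟨h1, h2⟩ := Prod.mk.injEq .. ▸ h
        cases h
        exact (mem_cands.mp (pick_mem σ _ hC)).2
      · intro hw; exact ih h (Finset.mem_insert_of_mem hw)
    · rw [dif_neg hC] at h
      exact ih h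

lemma run_order_congr {E : α → Fin p → Bool} (σ₁ σ₂ : Equiv.Perm (Fin p)) :
    ∀ (L : List α) (S : Finset (Fin p)),
      (∀ w w', w ∉ S → w' ∉ S → (σ₁ w ≤ σ₁ w' ↔ σ₂ w ≤ σ₂ w')) →
      run E σ₁ L S = run E σ₂ L S := by
  intro L
  induction L with
  | nil => intro S _; rfl
  | cons u rest ih =>
    intro S hord
    rw [run, run]
    by_cases hC : (cands E u S).Nonempty
    · rw [dif_pos hC, dif_pos hC]
      have hpe : pick σ₁ (cands E u S) hC = pick σ₂ (cands E u S) hC := by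
        symm
        apply pick_eq hC (pick_mem σ₁ _ hC)
        intro c hc
        have h1 := pick_le σ₁ (cands E u S) hC c hc
        exact (hord _ _ (mem_cands.mp (pick_mem σ₁ _ hC)).2 (mem_cands.mp hc).2).mp h1
      rw [hpe]
      congr 1
      exact ih _ (fun w w' hw hw' => hord w w' (fun h => hw (Finset.mem_insert_of_mem h))
        (fun h => hw' (Finset.mem_insert_of_mem h)))
    · rw [dif_neg hC, dif_neg hC]
      exact ih _ hord

lemma cands_insert_eq (E : α → Fin p → Bool) (u : α) (S : Finset (Fin p)) (d : Fin p) :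
    cands E u (insert d S) = (cands E u S).erase d := by
  ext w
  simp only [mem_cands, Finset.mem_erase, Finset.mem_insert]
  tauto

lemma run_pair {E : α → Fin p → Bool} {σ : Equiv.Perm (Fin p)} :
    ∀ (L : List α) (S T : Finset (Fin p)),
      (T = S ∨ ∃ d, d ∉ S ∧ T = insert d S) →
      ∀ x w₂, (x, w₂) ∈ run E σ L T →
        ∃ w₁, (x, w₁) ∈ run E σ L S ∧ σ w₁ ≤ σ w₂ := by
  intro L
  induction L with
  | nil => intro S T _ x w₂ h; simp [run] at h
  | cons u rest ih =>
    intro S T hST x w₂ h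
    rcases hST with rfl | ⟨d, hd, rfl⟩
    · exact ⟨w₂, h, le_refl _⟩
    · have hCT_eq := cands_insert_eq E u S d
      by_cases hCT : (cands E u (insert d S)).Nonempty
      · have hCS : (cands E u S).Nonempty := by
          obtain ⟨c, hc⟩ := hCT
          exact ⟨c, Finset.mem_of_mem_erase (hCT_eq ▸ hc)⟩
        set bT := pick σ _ hCT with hbTdef
        set bS := pick σ _ hCS with hbSdef
        have hbT_CT := pick_mem σ _ hCT
        have hbT_CT2 : bT ∈ (cands E u S).erase d := by rw [← hCT_eq]; exact hbT_CT
        have hbT_CS : bT ∈ cands E u S := Finset.mem_of_mem_erase hbT_CT2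
        have hbT_ne_d : bT ≠ d := (Finset.mem_erase.mp hbT_CT2).1
        have hle : σ bS ≤ σ bT := pick_le σ _ hCS _ hbT_CS
        rw [run] at h ⊢
        rw [dif_pos hCT] at h
        rw [dif_pos hCS]
        by_cases hbb : bS = bT
        · rcases List.mem_cons.mp h with h | h
          · have h' := h
            simp only [Prod.mk.injEq] at h'
            refine ⟨bS, ?_, ?_⟩
            · rw [h'.1]; exact List.mem_cons_self
            · rw [h'.2]; exact hle
          · have hTT : insert bT (insert d S) = insert d (insert bS S) := by
              rw [hbb, Finset.insert_comm]
            rw [hTT] at h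
            have hd' : d ∉ insert bS S := by
              intro hmem
              rcases Finset.mem_insert.mp hmem with h' | h'
              · exact hbT_ne_d (by rw [← hbb, h'])
              · exact hd h'
            obtain ⟨w₁, hw₁, hle₁⟩ := ih (insert bS S) _ (Or.inr ⟨d, hd', rfl⟩) x w₂ h
            exact ⟨w₁, List.mem_cons_of_mem _ hw₁, hle₁⟩
        · have hbSd : bS = d := by
            by_contra hne
            have hmem : bS ∈ cands E u (insert d S) := by
              rw [hCT_eq]
              exact Finset.mem_erase.mpr ⟨hne, pick_mem σ _ hCS⟩
            have e1 : pick σ _ hCT = bS :=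
              pick_eq hCT hmem (fun c hc =>
                pick_le σ _ hCS c (Finset.mem_of_mem_erase (hCT_eq ▸ hc)))
            exact hbb e1.symm
          have hbT_not : bT ∉ insert d S := (mem_cands.mp hbT_CT).2
          rcases List.mem_cons.mp h with h | h
          · have h' := h
            simp only [Prod.mk.injEq] at h'
            refine ⟨bS, ?_, ?_⟩
            · rw [h'.1]; exact List.mem_cons_self
            · rw [h'.2]; exact hle
          · obtain ⟨w₁, hw₁, hle₁⟩ := ih (insert d S) _ (Or.inr ⟨bT, hbT_not, rfl⟩) x w₂ h
            refine ⟨w₁, List.mem_cons_of_mem _ ?_, hle₁⟩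
            have hins : insert (pick σ (cands E u S) hCS) S = insert d S := by
              rw [← hbSdef, hbSd]
            rw [hins]
            exact hw₁
      · rw [run, dif_neg hCT] at h
        by_cases hCS : (cands E u S).Nonempty
        · have hbSd : pick σ _ hCS = d := by
            have hm := pick_mem σ _ hCS
            by_contra hne
            have : pick σ _ hCS ∈ cands E u (insert d S) := by
              rw [hCT_eq]; exact Finset.mem_erase.mpr ⟨hne, hm⟩
            exact hCT ⟨_, this⟩
          rw [run, dif_pos hCS, hbSd]
          exact ⟨w₂, List.mem_cons_of_mem _ h, le_refl _⟩
        · rw [run, dif_neg hCS]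
          exact ih S _ (Or.inr ⟨d, hd, rfl⟩) x w₂ h

lemma run_unsat {E : α → Fin p → Bool} {σ : Equiv.Perm (Fin p)} (v : Fin p) :
    ∀ (L : List α) (S : Finset (Fin p)), v ∉ S →
      (∀ pr ∈ run E σ L S, pr.2 ≠ v) →
      run E σ L S = run E σ L (insert v S) ∧
      ∀ x ∈ L, E x v = true → ∃ w, (x, w) ∈ run E σ L S ∧ σ w < σ v := by
  intro L
  induction L with
  | nil => intro S hv _; exact ⟨rfl, by simp⟩
  | cons u rest ih =>
    intro S hv hnm
    have hCv_eq := cands_insert_eq E u S v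
    by_cases hCS : (cands E u S).Nonempty
    · set b := pick σ _ hCS with hbdef
      have hbC := pick_mem σ _ hCS
      have hbv : b ≠ v := by
        have : (u, b) ∈ run E σ (u :: rest) S := by
          rw [run, dif_pos hCS]; exact List.mem_cons_self
        exact hnm _ this
      have hvS' : v ∉ insert b S := by
        intro h; rcases Finset.mem_insert.mp h with h | h
        · exact hbv h.symm
        · exact hv h
      have hnm' : ∀ pr ∈ run E σ rest (insert b S), pr.2 ≠ v := by
        intro pr hpr
        apply hnm
        rw [run, dif_pos hCS]
        exact List.mem_cons_of_mem _ hpr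
      obtain ⟨iheq, ihall⟩ := ih (insert b S) hvS' hnm'
      have hCv : (cands E u (insert v S)).Nonempty := by
        refine ⟨b, ?_⟩
        rw [hCv_eq]
        exact Finset.mem_erase.mpr ⟨hbv, hbC⟩
      have hpickv : pick σ (cands E u (insert v S)) hCv = b := by
        apply pick_eq hCv
        · rw [hCv_eq]; exact Finset.mem_erase.mpr ⟨hbv, hbC⟩
        · intro c hc
          exact pick_le σ _ hCS c (Finset.mem_of_mem_erase (hCv_eq ▸ hc))
      constructor
      · rw [run, dif_pos hCS, run, dif_pos hCv, hpickv]
        congr 1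
        rw [Finset.insert_comm] at iheq
        exact iheq
      · intro x hx hEx
        rcases List.mem_cons.mp hx with hxu | hx
        · have hEx' : E u v = true := by rw [← hxu]; exact hEx
          have hvC : v ∈ cands E u S := mem_cands.mpr ⟨hEx', hv⟩
          refine ⟨b, ?_, ?_⟩
          · rw [run, dif_pos hCS, hxu]; exact List.mem_cons_self
          · have := pick_le σ _ hCS v hvC
            exact lt_of_le_of_ne this (fun h => hbv (σ.injective h))
        · obtain ⟨w, hw, hlt⟩ := ihall x hx hEx
          refine ⟨w, ?_, hlt⟩
          rw [run, dif_pos hCS]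
          exact List.mem_cons_of_mem _ hw
    · have hCv : ¬ (cands E u (insert v S)).Nonempty := by
        intro ⟨c, hc⟩
        exact hCS ⟨c, Finset.mem_of_mem_erase (hCv_eq ▸ hc)⟩
      have hnm' : ∀ pr ∈ run E σ rest S, pr.2 ≠ v := by
        intro pr hpr; apply hnm; rw [run, dif_neg hCS]; exact hpr
      obtain ⟨iheq, ihall⟩ := ih S hv hnm'
      constructor
      · rw [run, dif_neg hCS, run, dif_neg hCv]; exact iheq
      · intro x hx hEx
        rcases List.mem_cons.mp hx with hxu | hx
        · have hEx' : E u v = true := by rw [← hxu]; exact hEx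
          exact absurd (mem_cands.mpr ⟨hEx', hv⟩) (fun h => hCS ⟨_, h⟩)
        · obtain ⟨w, hw, hlt⟩ := ihall x hx hEx
          refine ⟨w, ?_, hlt⟩
          rw [run, dif_neg hCS]
          exact hw


def cycf {p : ℕ} (t : Fin p) (j : Fin p) : Fin p :=
  if j.val < t.val then j
  else if h : j.val = p - 1 then t
  else ⟨j.val + 1, by have := j.isLt; omega⟩

lemma cycf_val {p : ℕ} (t j : Fin p) :
    (cycf t j).val = if j.val < t.val then j.val else if j.val = p - 1 then t.val
      else j.val + 1 := by
  rw [cycf]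
  split_ifs <;> rfl

lemma cycf_inj {p : ℕ} (t : Fin p) : Function.Injective (cycf t) := by
  intro a b h
  have h' := congrArg Fin.val h
  rw [cycf_val, cycf_val] at h'
  have ha := a.isLt
  have hb := b.isLt
  have ht := t.isLt
  apply Fin.ext
  split_ifs at h' <;> omega

noncomputable def cyc {p : ℕ} (t : Fin p) : Equiv.Perm (Fin p) :=
  Equiv.ofBijective (cycf t) (Finite.injective_iff_bijective.mp (cycf_inj t))

lemma cyc_val {p : ℕ} (t j : Fin p) :
    ((cyc t) j).val = if j.val < t.val then j.val else if j.val = p - 1 then t.val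
      else j.val + 1 := cycf_val t j



lemma cyc_last {p : ℕ} (hp : 0 < p) (t : Fin p) : (cyc t) ⟨p-1, by omega⟩ = t := by
  apply Fin.ext
  rw [cyc_val]
  have := t.isLt
  simp only []
  split_ifs <;> omega

lemma cyc_inv_last {p : ℕ} (hp : 0 < p) (t : Fin p) : (cyc t)⁻¹ t = ⟨p-1, by omega⟩ := by
  rw [Equiv.Perm.inv_eq_iff_eq]
  exact (cyc_last hp t).symm

lemma sum_classes {p : ℕ} (hp : 0 < p) (v : Fin p) (F : Equiv.Perm (Fin p) → ℝ) :
    ∑ σ : Equiv.Perm (Fin p), F σ =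
      ∑ τ ∈ Finset.univ.filter (fun τ : Equiv.Perm (Fin p) => τ v = ⟨p-1, by omega⟩),
        ∑ t : Fin p, F (cyc t * τ) := by
  rw [← Finset.sum_product']
  symm
  apply Finset.sum_nbij' (i := fun x : Equiv.Perm (Fin p) × Fin p => cyc x.2 * x.1)
    (j := fun σ => ((cyc (σ v))⁻¹ * σ, σ v))
  · intro a _; exact Finset.mem_univ _
  · intro σ _
    simp only [Finset.mem_product, Finset.mem_filter, Finset.mem_univ, true_and, and_true]
    simp only [Equiv.Perm.mul_apply]
    exact cyc_inv_last hp (σ v)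
  · rintro ⟨τ, t⟩ hmem
    simp only [Finset.mem_product, Finset.mem_filter] at hmem
    have h1 : (cyc t * τ) v = t := by
      simp only [Equiv.Perm.mul_apply, hmem.1.2]
      exact cyc_last hp t
    simp only [h1]
    rw [inv_mul_cancel_left]
  · intro σ _
    simp [mul_inv_cancel_left]
  · intro a _
    rfl

lemma finsum_listsum {β γ : Type*} (X : Finset β) (l : List γ) (f : β → γ → ℝ) :
    ∑ x ∈ X, (l.map (f x)).sum = (l.map fun q => ∑ x ∈ X, f x q).sum := by
  induction l with
  | nil => simp
  | cons q l ih => simp [Finset.sum_add_distrib, ih]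

lemma sum_ite_le {β : Type*} (M : Finset β) (P : β → Prop) [DecidablePred P] {c : ℝ}
    (hc : 0 ≤ c) (hP : ∀ e ∈ M, ∀ e' ∈ M, P e → P e' → e = e') :
    (∑ e ∈ M, if P e then c else 0) ≤ c := by
  rw [← Finset.sum_filter]
  rw [Finset.sum_const]
  have hcard : (M.filter P).card ≤ 1 := by
    apply Finset.card_le_one.mpr
    intro a ha b hb
    simp only [Finset.mem_filter] at ha hb
    exact hP a ha.1 b hb.1 ha.2 hb.2
  calc ((M.filter P).card : ℕ) • c ≤ 1 * c := by
        rw [nsmul_eq_mul]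
        apply mul_le_mul_of_nonneg_right _ hc
        exact_mod_cast hcard
    _ = c := one_mul c

noncomputable def gf (k p j : ℕ) : ℝ :=
  Real.exp ((((min j (p-1) : ℕ) : ℝ) + 1 - p) / (k * p))

lemma gf_pos (k p j : ℕ) : 0 < gf k p j := Real.exp_pos _

lemma gf_le_one {k p : ℕ} (hp : 0 < p) (j : ℕ) : gf k p j ≤ 1 := by
  rw [gf, Real.exp_le_one_iff]
  apply div_nonpos_of_nonpos_of_nonneg
  · have h1 : (min j (p-1) : ℕ) ≤ p - 1 := min_le_right _ _
    have h2 : ((min j (p-1) : ℕ) : ℝ) ≤ ((p-1 : ℕ) : ℝ) := by exact_mod_cast h1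
    have h3 : ((p - 1 : ℕ) : ℝ) = (p : ℝ) - 1 := by
      have : (1:ℕ) ≤ p := hp
      push_cast [Nat.cast_sub this]
      ring
    linarith
  · positivity

lemma gf_mono {k p : ℕ} (hk : 1 ≤ k) (hp : 0 < p) {j j' : ℕ} (h : j ≤ j') :
    gf k p j ≤ gf k p j' := by
  rw [gf, gf]
  apply Real.exp_le_exp.mpr
  have h2 : ((min j (p-1) : ℕ):ℝ) ≤ ((min j' (p-1) : ℕ):ℝ) := by
    have : (min j (p-1) : ℕ) ≤ min j' (p-1) := by omega
    exact_mod_cast this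
  have hk' : (0:ℝ) < (k:ℝ) := by exact_mod_cast hk
  have hp' : (0:ℝ) < (p:ℝ) := by exact_mod_cast hp
  have hpos : (0:ℝ) < (k:ℝ) * p := by nlinarith
  gcongr

lemma exp_sub_one_le {x : ℝ} (hx : 0 ≤ x) : Real.exp x - 1 ≤ x * Real.exp x := by
  have h := Real.add_one_le_exp (-x)
  have hpos := Real.exp_pos x
  have h2 : (1 - x) * Real.exp x ≤ Real.exp (-x) * Real.exp x := by
    apply mul_le_mul_of_nonneg_right _ hpos.le
    linarith
  rw [← Real.exp_add] at h2
  simp at h2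
  nlinarith

lemma gf_sum {k p : ℕ} (hk : 1 ≤ k) (hp : 0 < p) {R : ℕ} (hR : R ≤ p - 1) :
    ((k:ℝ) * p) * (gf k p R - Real.exp (-1 / (k:ℝ))) ≤ ∑ t ∈ Finset.range (R+1), gf k p t := by
  have hk' : (0:ℝ) < (k:ℝ) := by exact_mod_cast hk
  have hp' : (0:ℝ) < (p:ℝ) := by exact_mod_cast hp
  have hkp : (0:ℝ) < (k:ℝ) * p := by nlinarith
  set G : ℕ → ℝ := fun t => ((k:ℝ) * p) * Real.exp (((t:ℝ) - p) / (k * p)) with hG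
  have key : ∀ t ∈ Finset.range (R+1), G (t+1) - G t ≤ gf k p t := by
    intro t ht
    have htR : t ≤ R := Nat.lt_succ_iff.mp (Finset.mem_range.mp ht)
    have ht' : t ≤ p - 1 := le_trans htR hR
    have hmin : min t (p-1) = t := min_eq_left ht'
    have hgf : gf k p t = Real.exp (((t:ℝ) + 1 - p) / (k * p)) := by
      rw [gf, hmin]
    have hsplit : ((t:ℝ) - p) / (k * p) = ((t:ℝ) + 1 - p) / (k * p) + (-1) / (k * p) := by
      rw [← add_div]
      congr 1
      ring
    have hGt : G t = ((k:ℝ) * p) * (Real.exp (((t:ℝ) + 1 - p) / (k * p)) * Real.exp ((-1) / (k * p))) := by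
      rw [hG]
      simp only []
      rw [hsplit, Real.exp_add]
    have hGt1 : G (t+1) = ((k:ℝ) * p) * Real.exp (((t:ℝ) + 1 - p) / (k * p)) := by
      rw [hG]
      simp only []
      push_cast
      ring_nf
    rw [hGt, hGt1, hgf]
    set A := Real.exp (((t:ℝ) + 1 - p) / (k * p)) with hA
    have hApos : 0 < A := Real.exp_pos _
    have hexp : 1 - Real.exp ((-1) / (k*p)) ≤ 1 / (k*p) := by
      have := Real.add_one_le_exp ((-1) / (k*p))
      have heq : (-1) / ((k:ℝ)*p) = -(1 / ((k:ℝ)*p)) := by ring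
      rw [heq] at this ⊢
      linarith
    calc ((k:ℝ)*p) * A - ((k:ℝ)*p) * (A * Real.exp ((-1)/(k*p)))
        = ((k:ℝ)*p) * A * (1 - Real.exp ((-1)/(k*p))) := by ring
      _ ≤ ((k:ℝ)*p) * A * (1 / (k*p)) := by
          apply mul_le_mul_of_nonneg_left hexp
          positivity
      _ = A := by field_simp
  have tele : ∑ t ∈ Finset.range (R+1), (G (t+1) - G t) = G (R+1) - G 0 :=
    Finset.sum_range_sub G (R+1)
  have hsum : G (R+1) - G 0 ≤ ∑ t ∈ Finset.range (R+1), gf k p t := by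
    rw [← tele]
    exact Finset.sum_le_sum key
  have hG0 : G 0 = ((k:ℝ) * p) * Real.exp (-1 / (k:ℝ)) := by
    rw [hG]
    simp only []
    congr 1
    congr 1
    rw [div_eq_div_iff (ne_of_gt hkp) (ne_of_gt hk')]
    push_cast
    ring
  have hGR : G (R+1) = ((k:ℝ) * p) * gf k p R := by
    rw [hG, gf, min_eq_left hR]
    simp only []
    push_cast
    ring_nf
  rw [hG0, hGR] at hsum
  calc ((k:ℝ) * p) * (gf k p R - Real.exp (-1 / (k:ℝ)))
      = ((k:ℝ) * p) * gf k p R - ((k:ℝ) * p) * Real.exp (-1 / (k:ℝ)) := by ring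
    _ ≤ ∑ t ∈ Finset.range (R+1), gf k p t := hsum

lemma gf_succ {k p : ℕ} (hk : 1 ≤ k) (hp : 0 < p) (R : ℕ) :
    gf k p (R+1) ≤ gf k p R + 3 / ((k:ℝ) * p) := by
  have hk' : (0:ℝ) < (k:ℝ) := by exact_mod_cast hk
  have hp' : (0:ℝ) < (p:ℝ) := by exact_mod_cast hp
  have hkp : (0:ℝ) < (k:ℝ) * p := by nlinarith
  by_cases h : p - 1 ≤ R
  · have h1 : min (R+1) (p-1) = p - 1 := min_eq_right (by omega)
    have h2 : min R (p-1) = p - 1 := min_eq_right h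
    have : gf k p (R+1) = gf k p R := by rw [gf, gf, h1, h2]
    rw [this]
    have : 0 < 3 / ((k:ℝ) * p) := by positivity
    linarith
  · push_neg at h
    have h1 : min (R+1) (p-1) = R+1 := min_eq_left (by omega)
    have h2 : min R (p-1) = R := min_eq_left (by omega)
    have hx1 : 1 / ((k:ℝ)*p) ≤ 1 := by
      rw [div_le_one hkp]
      have : (1:ℝ) ≤ (k:ℝ) := by exact_mod_cast hk
      have : (1:ℝ) ≤ (p:ℝ) := by exact_mod_cast hp
      nlinarith
    have hsplit : ((R:ℝ) + 1 + 1 - p) / (k * p) = ((R:ℝ) + 1 - p) / (k * p) + 1 / (k * p) := by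
      rw [← add_div]
      congr 1
      ring
    have hgf1 : gf k p (R+1) = gf k p R * Real.exp (1 / ((k:ℝ)*p)) := by
      rw [gf, gf, h1, h2]
      push_cast
      rw [hsplit, Real.exp_add]
    have he3 : Real.exp (1 / ((k:ℝ)*p)) ≤ 1 + 3 / ((k:ℝ)*p) := by
      set x := 1 / ((k:ℝ)*p) with hxdef
      have hx0 : 0 < x := by positivity
      have h4 := exp_sub_one_le hx0.le
      have hex : Real.exp x ≤ Real.exp 1 := Real.exp_le_exp.mpr hx1
      have he1 : Real.exp 1 < 3 := by
        have := Real.exp_one_lt_d9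
        linarith
      have : Real.exp x - 1 ≤ x * 3 := by nlinarith
      have hxx : 3 / ((k:ℝ)*p) = 3 * x := by rw [hxdef]; ring
      rw [hxx]
      linarith
    have hgle := gf_le_one (k := k) hp R
    have hgpos := gf_pos k p R
    rw [hgf1]
    have h3x : 0 ≤ 3 / ((k:ℝ)*p) := by positivity
    nlinarith


lemma gf_eq_one {k p : ℕ} (hp : 0 < p) {j : ℕ} (hj : p - 1 ≤ j) : gf k p j = 1 := by
  rw [gf, min_eq_right hj]
  have h1 : (1:ℕ) ≤ p := hp
  have h2 : ((p-1:ℕ):ℝ) + 1 - p = 0 := by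
    rw [Nat.cast_sub h1]
    push_cast
    ring
  rw [h2, zero_div, Real.exp_zero]

end KVV

section Helpers
open KVV

lemma list_map_sum_le {γ : Type*} (l : List γ) (f h : γ → ℝ) (hf : ∀ q ∈ l, f q ≤ h q) :
    (l.map f).sum ≤ (l.map h).sum := by
  induction l with
  | nil => simp
  | cons q l ih =>
    simp only [List.map_cons, List.sum_cons]
    have h1 := hf q (List.mem_cons_self)
    have h2 := ih (fun q hq => hf q (List.mem_cons_of_mem _ hq))
    linarith

lemma list_map_sum_nonneg {γ : Type*} (l : List γ) (f : γ → ℝ) (hf : ∀ q ∈ l, 0 ≤ f q) :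
    0 ≤ (l.map f).sum := by
  have := list_map_sum_le l (fun _ => 0) f hf
  simpa using this

lemma list_map_sum_add {γ : Type*} (l : List γ) (f h : γ → ℝ) :
    (l.map fun q => f q + h q).sum = (l.map f).sum + (l.map h).sum := by
  induction l with
  | nil => simp
  | cons q l ih => simp [ih]; ring

lemma list_single_le_sum {γ : Type*} (l : List γ) (f : γ → ℝ) (hf : ∀ q ∈ l, 0 ≤ f q)
    {q : γ} (hq : q ∈ l) : f q ≤ (l.map f).sum := by
  induction l with
  | nil => simp at hq
  | cons a l ih =>
    simp only [List.map_cons, List.sum_cons]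
    rcases List.mem_cons.mp hq with rfl | hq
    · have := list_map_sum_nonneg l f (fun q hq => hf q (List.mem_cons_of_mem _ hq))
      linarith
    · have h1 := hf a (List.mem_cons_self)
      have h2 := ih (fun q hq => hf q (List.mem_cons_of_mem _ hq)) hq
      linarith

lemma list_length_eq_sum {γ : Type*} (l : List γ) : ((l.map fun _ => (1:ℝ)).sum) = l.length := by
  induction l with
  | nil => simp
  | cons a l ih => simp [ih]; ring

end Helpers

open KVV in
set_option maxHeartbeats 1000000 in
/-- let `G` have maximum matching size `OPT` and let `H` be a left
`k`-copy of `G`. Then Ranking on `H` with a uniformly random ranking of the bidders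
produces a matching of expected size at least `k · OPT · (1 − e^{−1/k} + o(1))`
(the `o(1)` term being uniform over all instances with `OPT` large enough). -/
theorem ranking_kcopy_expected_size (k : ℕ) (hk : 1 ≤ k) :
    ∀ ε : ℝ, 0 < ε → ∃ N : ℕ,
      ∀ (nU nV nH OPT : ℕ) (EG : Fin nU → Fin nV → Bool)
        (_ : IsGreatest {s | ∃ S, IsMatchingSet EG S ∧ S.card = s} OPT)
        (ζ : Fin nH → Fin nU)
        (_ : ∀ u : Fin nU, (Finset.univ.filter fun x => ζ x = u).card = k)
        (EH : Fin nH → Fin nV → Bool)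
        (_ : ∀ x v, EH x v = EG (ζ x) v)
        (π : Equiv.Perm (Fin nH)),
        N ≤ OPT →
        (k : ℝ) * OPT * (1 - Real.exp (-1 / (k : ℝ)) - ε) ≤ rankExpSize EH π := by
  intro ε hε
  refine ⟨Nat.ceil (3/ε) + 1, ?_⟩
  intro nU nV nH OPT EG hOPT ζ hζ EH hEH π hN
  classical
  obtain ⟨⟨M, hM, hMcard⟩, hub⟩ := hOPT
  obtain ⟨hM1, hM2, hM3⟩ := hM
  have hOPTpos : 0 < OPT := lt_of_lt_of_le (Nat.succ_pos _) hN
  have hOPTp : OPT ≤ nV := by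
    have hinj : Set.InjOn Prod.snd (M : Set (Fin nU × Fin nV)) := by
      intro a ha b hb hab
      exact hM3 a ha b hb hab
    calc OPT = M.card := hMcard.symm
      _ = (M.image Prod.snd).card := (Finset.card_image_of_injOn hinj).symm
      _ ≤ Finset.univ.card := Finset.card_le_univ _
      _ = nV := by simp
  have hp : 0 < nV := lt_of_lt_of_le hOPTpos hOPTp
  have hk' : (0:ℝ) < (k:ℝ) := by exact_mod_cast hk
  have hp' : (0:ℝ) < (nV:ℝ) := by exact_mod_cast hp
  have hOPT' : (0:ℝ) < (OPT:ℝ) := by exact_mod_cast hOPTpos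
  have h3ε : 3 < ε * nV := by
    have h1 : (3:ℝ)/ε ≤ (Nat.ceil (3/ε) : ℝ) := Nat.le_ceil _
    have h2 : ((Nat.ceil (3/ε) + 1 : ℕ) : ℝ) ≤ (nV:ℝ) := by
      exact_mod_cast le_trans hN hOPTp
    push_cast at h2
    have h4 : (3:ℝ)/ε < (nV:ℝ) := by linarith
    calc (3:ℝ) = (3/ε) * ε := by field_simp
      _ < (nV:ℝ) * ε := by apply mul_lt_mul_of_pos_right h4 hε
      _ = ε * nV := by ring
  set L : List (Fin nH) := (List.finRange nH).map π.symm with hLdef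
  have hLnd : L.Nodup := List.Nodup.map π.symm.injective (List.nodup_finRange nH)
  have hLmem : ∀ x : Fin nH, x ∈ L := fun x =>
    List.mem_map.mpr ⟨π x, List.mem_finRange _, by simp⟩
  set E1 : ℝ := Real.exp (-1/(k:ℝ)) with hE1def
  set Kk : ℝ := (k:ℝ) * (1 - E1) with hKkdef
  set fib : Fin nU → Finset (Fin nH) := fun u => Finset.univ.filter (fun x => ζ x = u) with hfibdef
  set run0 : Equiv.Perm (Fin nV) → List (Fin nH × Fin nV) := fun σ => run EH σ L ∅ with hrun0def
  set fA : Equiv.Perm (Fin nV) → Fin nH → ℝ := fun σ x =>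
    ((run0 σ).map (fun q => if q.1 = x then 1 - gf k nV (σ q.2).val else 0)).sum with hfAdef
  set fB : Equiv.Perm (Fin nV) → Fin nV → ℝ := fun σ w =>
    ((run0 σ).map (fun q => if q.2 = w then gf k nV (σ q.2).val else 0)).sum with hfBdef
  set Fe : (Fin nU × Fin nV) → Equiv.Perm (Fin nV) → ℝ := fun e σ =>
    (∑ x ∈ fib e.1, fA σ x) + fB σ e.2 with hFedef
  -- Step 1 : pointwise domination of the matching size
  have hlen : ∀ σ : Equiv.Perm (Fin nV), ∑ e ∈ M, Fe e σ ≤ ((run0 σ).length : ℝ) := by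
    intro σ
    have hgle : ∀ j, gf k nV j ≤ 1 := fun j => gf_le_one hp j
    have hgpos : ∀ j, 0 ≤ gf k nV j := fun j => (gf_pos k nV j).le
    have hsplit : ∑ e ∈ M, Fe e σ
        = (∑ e ∈ M, ∑ x ∈ fib e.1, fA σ x) + ∑ e ∈ M, fB σ e.2 := by
      rw [hFedef]; exact Finset.sum_add_distrib
    rw [hsplit]
    have hA : ∑ e ∈ M, ∑ x ∈ fib e.1, fA σ x
        = ((run0 σ).map (fun q => ∑ e ∈ M, ∑ x ∈ fib e.1,
            if q.1 = x then 1 - gf k nV (σ q.2).val else 0)).sum := by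
      rw [← finsum_listsum M (run0 σ)
        (fun e q => ∑ x ∈ fib e.1, if q.1 = x then 1 - gf k nV (σ q.2).val else 0)]
      apply Finset.sum_congr rfl
      intro e _
      exact finsum_listsum (fib e.1) (run0 σ) _
    have hB : ∑ e ∈ M, fB σ e.2
        = ((run0 σ).map (fun q => ∑ e ∈ M,
            if q.2 = e.2 then gf k nV (σ q.2).val else 0)).sum :=
      finsum_listsum M (run0 σ) _
    rw [hA, hB, ← list_map_sum_add]
    rw [← list_length_eq_sum (run0 σ)]
    apply list_map_sum_le
    intro q hq
    have e1 : ∑ e ∈ M, ∑ x ∈ fib e.1, (if q.1 = x then 1 - gf k nV (σ q.2).val else 0)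
        ≤ 1 - gf k nV (σ q.2).val := by
      have hrw : ∀ e ∈ M, ∑ x ∈ fib e.1, (if q.1 = x then 1 - gf k nV (σ q.2).val else 0)
          = if q.1 ∈ fib e.1 then 1 - gf k nV (σ q.2).val else 0 := by
        intro e _
        exact Finset.sum_ite_eq (fib e.1) q.1 (fun _ => 1 - gf k nV (σ q.2).val)
      rw [Finset.sum_congr rfl hrw]
      apply sum_ite_le M _ (by linarith [hgle (σ q.2).val])
      intro e he e' he' hP hP'
      apply hM2 e he e' he'
      have h1 : ζ q.1 = e.1 := (Finset.mem_filter.mp hP).2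
      have h2 : ζ q.1 = e'.1 := (Finset.mem_filter.mp hP').2
      rw [← h1, ← h2]
    have e2 : ∑ e ∈ M, (if q.2 = e.2 then gf k nV (σ q.2).val else 0)
        ≤ gf k nV (σ q.2).val := by
      apply sum_ite_le M _ (hgpos _)
      intro e he e' he' hP hP'
      exact hM3 e he e' he' (by rw [← hP, ← hP'])
    linarith [e1, e2]
  -- Step 2 : per-edge expectation bound
  have hedge : ∀ e ∈ M, (Fintype.card (Equiv.Perm (Fin nV)) : ℝ) * (Kk - 3/(nV:ℝ))
      ≤ ∑ σ : Equiv.Perm (Fin nV), Fe e σ := by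
    intro e he
    have hEuv : EG e.1 e.2 = true := hM1 e he
    have hfibcard : (fib e.1).card = k := hζ e.1
    have hfibne : (fib e.1).Nonempty := Finset.card_pos.mp (by rw [hfibcard]; omega)
    have hEHx : ∀ x ∈ fib e.1, EH x e.2 = true := by
      intro x hx
      rw [hEH]
      have hzx : ζ x = e.1 := (Finset.mem_filter.mp hx).2
      rw [hzx]; exact hEuv
    rw [sum_classes hp e.2 (Fe e)]
    have hclass : ∀ τ ∈ Finset.univ.filter
        (fun τ : Equiv.Perm (Fin nV) => τ e.2 = (⟨nV - 1, by omega⟩ : Fin nV)),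
        (nV:ℝ) * Kk - 3 ≤ ∑ t : Fin nV, Fe e (cyc t * τ) := by
      intro τ hτmem
      have hτv : τ e.2 = (⟨nV - 1, by omega⟩ : Fin nV) := (Finset.mem_filter.mp hτmem).2
      have hτvval : (τ e.2).val = nV - 1 := by rw [hτv]
      have hτw : ∀ w : Fin nV, w ≠ e.2 → (τ w).val < nV - 1 := by
        intro w hw
        have h1 : τ w ≠ τ e.2 := fun h => hw (τ.injective h)
        have h2 := (τ w).isLt
        have h3 : (τ w).val ≠ nV - 1 := by
          intro h
          exact h1 (Fin.ext (by rw [h, hτvval]))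
        omega
      set Rstar := run EH τ L {e.2} with hRstar
      have hRm : ∀ {x : Fin nH} {w : Fin nV}, (x, w) ∈ Rstar → w ≠ e.2 := by
        intro x w hxw
        have h := run_snd_not_mem hxw
        simpa using h
      set rv : Fin nH → ℕ := fun x =>
        if h : ∃ w, (x, w) ∈ Rstar then (τ (Classical.choose h)).val else nV - 1 with hrv
      have hrv_le : ∀ x, rv x ≤ nV - 1 := by
        intro x
        simp only [hrv]
        split_ifs with h
        · have := (τ (Classical.choose h)).isLt; omega
        · exact le_refl _
      set R := (fib e.1).sup rv with hRdef
      have hRle : R ≤ nV - 1 := Finset.sup_le (fun x _ => hrv_le x)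
      obtain ⟨x₀, hx₀f, hx₀R⟩ := Finset.exists_mem_eq_sup (fib e.1) hfibne rv
      have hσtv : ∀ t : Fin nV, (cyc t * τ) e.2 = t := by
        intro t
        simp only [Equiv.Perm.mul_apply, hτv]
        exact cyc_last hp t
      have hσtw_val : ∀ (t : Fin nV) (w : Fin nV), w ≠ e.2 →
          ((cyc t * τ) w).val
            = if (τ w).val < t.val then (τ w).val else (τ w).val + 1 := by
        intro t w hw
        have h1 := hτw w hw
        simp only [Equiv.Perm.mul_apply]
        rw [cyc_val]
        split_ifs <;> omega
      have hσt_ge : ∀ (t : Fin nV) (w : Fin nV), w ≠ e.2 →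
          (τ w).val ≤ ((cyc t * τ) w).val ∧ ((cyc t * τ) w).val ≤ (τ w).val + 1 := by
        intro t w hw
        rw [hσtw_val t w hw]
        constructor <;> (split_ifs <;> omega)
      have hord : ∀ t : Fin nV, run EH (cyc t * τ) L {e.2} = Rstar := by
        intro t
        rw [hRstar]
        apply run_order_congr
        intro w w' hwn hw'n
        have hw : w ≠ e.2 := by simpa using hwn
        have hw' : w' ≠ e.2 := by simpa using hw'n
        have h1 := hτw w hw
        have h2 := hτw w' hw'
        rw [Fin.le_def, Fin.le_def, hσtw_val t w hw, hσtw_val t w' hw']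
        constructor <;> (intro hle) <;> (split_ifs at * <;> omega)
      have hAbd : ∀ t : Fin nV, ∀ x ∈ fib e.1,
          1 - gf k nV (rv x + 1) ≤ fA (cyc t * τ) x := by
        intro t x hx
        by_cases h : ∃ w, (x, w) ∈ Rstar
        · have hz := Classical.choose_spec h
          have hrvx : rv x = (τ (Classical.choose h)).val := by simp only [hrv]; rw [dif_pos h]
          have hzv : Classical.choose h ≠ e.2 := hRm hz
          have hz2 : (x, Classical.choose h) ∈ run EH (cyc t * τ) L {e.2} := by
            rw [hord t]; exact hz
          obtain ⟨w₁, hw₁, hwle⟩ := run_pair L ∅ {e.2}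
            (Or.inr ⟨e.2, Finset.notMem_empty e.2, by simp⟩) x (Classical.choose h) hz2
          have hterm : 1 - gf k nV ((cyc t * τ) w₁).val ≤ fA (cyc t * τ) x := by
            rw [hfAdef]
            have hnn : ∀ q ∈ run0 (cyc t * τ),
                0 ≤ (fun q => if q.1 = x then 1 - gf k nV ((cyc t * τ) q.2).val else 0) q := by
              intro q hq
              simp only []
              split_ifs
              · linarith [gf_le_one (k := k) hp ((cyc t * τ) q.2).val]
              · exact le_refl 0
            have hmem : (x, w₁) ∈ run0 (cyc t * τ) := hw₁
            have := list_single_le_sum (run0 (cyc t * τ)) _ hnn hmem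
            simpa using this
          have hle2 : ((cyc t * τ) w₁).val ≤ rv x + 1 := by
            have hzb := (hσt_ge t (Classical.choose h) hzv).2
            have hwle' : ((cyc t * τ) w₁).val ≤ ((cyc t * τ) (Classical.choose h)).val :=
              hwle
            omega
          calc 1 - gf k nV (rv x + 1) ≤ 1 - gf k nV ((cyc t * τ) w₁).val := by
                have := gf_mono (k := k) (p := nV) hk hp hle2
                linarith
            _ ≤ fA (cyc t * τ) x := hterm
        · have hrvx : rv x = nV - 1 := by simp only [hrv]; rw [dif_neg h]
          have hone : gf k nV (rv x + 1) = 1 := by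
            apply gf_eq_one hp
            omega
          rw [hone]
          simp only [sub_self]
          rw [hfAdef]
          apply list_map_sum_nonneg
          intro q hq
          split_ifs
          · linarith [gf_le_one (k := k) hp ((cyc t * τ) q.2).val]
          · exact le_refl 0
      have hBbd : ∀ t : Fin nV, t.val ≤ R → gf k nV t.val ≤ fB (cyc t * τ) e.2 := by
        intro t ht
        have hvm : ∃ pr ∈ run0 (cyc t * τ), pr.2 = e.2 := by
          by_contra hcon
          push_neg at hcon
          have hun : ∀ pr ∈ run EH (cyc t * τ) L ∅, pr.2 ≠ e.2 := hcon
          obtain ⟨heq, hall⟩ := run_unsat e.2 L ∅ (Finset.notMem_empty e.2) hun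
          obtain ⟨w, hw, hlt⟩ := hall x₀ (hLmem x₀) (hEHx x₀ hx₀f)
          have hw2 : (x₀, w) ∈ Rstar := by
            rw [← hord t]
            have : insert e.2 (∅ : Finset (Fin nV)) = {e.2} := by simp
            rw [← this, ← heq]
            exact hw
          have hex : ∃ w', (x₀, w') ∈ Rstar := ⟨w, hw2⟩
          have hzx := Classical.choose_spec hex
          have hweq : w = Classical.choose hex := run_partner_unique hLnd hw2 hzx
          have hrvx0 : rv x₀ = (τ (Classical.choose hex)).val := by simp only [hrv]; rw [dif_pos hex]
          have hwv : w ≠ e.2 := hRm hw2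
          have h1 : ((cyc t * τ) w).val < t.val := by
            rw [Fin.lt_def, hσtv t] at hlt
            exact hlt
          have h2 : (τ w).val ≤ ((cyc t * τ) w).val := (hσt_ge t w hwv).1
          have h3 : (τ w).val = R := by
            rw [hweq, ← hrvx0, ← hx₀R]
          omega
        obtain ⟨pr, hpr, hprv⟩ := hvm
        have hnn : ∀ q ∈ run0 (cyc t * τ),
            0 ≤ (fun q => if q.2 = e.2 then gf k nV ((cyc t * τ) q.2).val else 0) q := by
          intro q hq
          simp only []
          split_ifs
          · exact (gf_pos k nV _).le
          · exact le_refl 0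
        have hsingle := list_single_le_sum (run0 (cyc t * τ)) _ hnn hpr
        have hval : (if pr.2 = e.2 then gf k nV ((cyc t * τ) pr.2).val else 0)
            = gf k nV t.val := by
          rw [if_pos hprv, hprv, congrArg Fin.val (hσtv t)]
        refine le_trans (le_of_eq hval.symm) ?_
        exact hsingle
      -- per-t lower bound and summation
      have hFe_ge : ∀ t : Fin nV,
          (∑ x ∈ fib e.1, (1 - gf k nV (rv x + 1)))
            + (if t.val ≤ R then gf k nV t.val else 0) ≤ Fe e (cyc t * τ) := by
        intro t
        rw [hFedef]
        apply add_le_add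
        · exact Finset.sum_le_sum (fun x hx => hAbd t x hx)
        · split_ifs with h
          · exact hBbd t h
          · rw [hfBdef]
            apply list_map_sum_nonneg
            intro q hq
            split_ifs
            · exact (gf_pos k nV _).le
            · exact le_refl 0
      have hsumt : ∑ t : Fin nV,
          ((∑ x ∈ fib e.1, (1 - gf k nV (rv x + 1)))
            + (if t.val ≤ R then gf k nV t.val else 0))
          ≤ ∑ t : Fin nV, Fe e (cyc t * τ) :=
        Finset.sum_le_sum (fun t _ => hFe_ge t)
      -- compute the left sum
      set S1 : ℝ := ∑ x ∈ fib e.1, gf k nV (rv x + 1) with hS1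
      have hinner : ∑ x ∈ fib e.1, (1 - gf k nV (rv x + 1)) = (k:ℝ) - S1 := by
        rw [Finset.sum_sub_distrib, hS1]
        congr 1
        rw [Finset.sum_const, hfibcard, nsmul_eq_mul, mul_one]
      have hS1le : S1 ≤ (k:ℝ) * gf k nV R + 3/(nV:ℝ) := by
        have hstep : ∀ x ∈ fib e.1, gf k nV (rv x + 1) ≤ gf k nV (R + 1) := by
          intro x hx
          apply gf_mono hk hp
          have := Finset.le_sup (f := rv) hx
          omega
        have h1 : S1 ≤ (fib e.1).card • gf k nV (R+1) :=
          Finset.sum_le_card_nsmul _ _ _ hstep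
        rw [hfibcard, nsmul_eq_mul] at h1
        have h2 := gf_succ (k := k) (p := nV) hk hp R
        have h3 : (k:ℝ) * (gf k nV R + 3/((k:ℝ)*nV)) = (k:ℝ) * gf k nV R + 3/(nV:ℝ) := by
          field_simp
        nlinarith [hk', gf_pos k nV (R+1)]
      have hite : ∑ t : Fin nV, (if t.val ≤ R then gf k nV t.val else 0)
          = ∑ j ∈ Finset.range (R+1), gf k nV j := by
        rw [Fin.sum_univ_eq_sum_range (fun j => if j ≤ R then gf k nV j else 0) nV]
        have hfilter : Finset.range (R+1) = (Finset.range nV).filter (fun j => j ≤ R) := by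
          ext a
          simp only [Finset.mem_range, Finset.mem_filter]
          omega
        rw [hfilter, Finset.sum_filter]
      have hgeo := gf_sum (k := k) (p := nV) hk hp hRle
      have hconst : ∑ _t : Fin nV, ((k:ℝ) - S1) = (nV:ℝ) * ((k:ℝ) - S1) := by
        rw [Finset.sum_const, Finset.card_univ, Fintype.card_fin, nsmul_eq_mul]
      calc (nV:ℝ) * Kk - 3
          ≤ (nV:ℝ) * ((k:ℝ) - S1) + ∑ j ∈ Finset.range (R+1), gf k nV j := by
            rw [hKkdef]
            have hgeo' : (k:ℝ) * nV * (gf k nV R - E1)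
                ≤ ∑ j ∈ Finset.range (R+1), gf k nV j := by
              rw [hE1def]; exact hgeo
            have hmul : (nV:ℝ) * S1 ≤ (nV:ℝ) * ((k:ℝ) * gf k nV R + 3/(nV:ℝ)) :=
              mul_le_mul_of_nonneg_left hS1le hp'.le
            have h30 : (nV:ℝ) * (3/(nV:ℝ)) = 3 := by field_simp
            nlinarith [hgeo', hmul, h30]
        _ = ∑ t : Fin nV,
              ((∑ x ∈ fib e.1, (1 - gf k nV (rv x + 1)))
                + (if t.val ≤ R then gf k nV t.val else 0)) := by
            rw [Finset.sum_add_distrib, hite, hinner, hconst]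
        _ ≤ ∑ t : Fin nV, Fe e (cyc t * τ) := hsumt
    -- combine classes
    have hT := Finset.sum_le_sum hclass
    have hcount := sum_classes hp e.2 (fun _ => (1:ℝ))
    have hcountL : ∑ _σ : Equiv.Perm (Fin nV), (1:ℝ)
        = (Fintype.card (Equiv.Perm (Fin nV)) : ℝ) := by
      rw [Finset.sum_const, Finset.card_univ, nsmul_eq_mul, mul_one]
    have hcountR : ∑ τ ∈ Finset.univ.filter
        (fun τ : Equiv.Perm (Fin nV) => τ e.2 = (⟨nV - 1, by omega⟩ : Fin nV)),
        ∑ _t : Fin nV, (1:ℝ)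
        = ((Finset.univ.filter
            (fun τ : Equiv.Perm (Fin nV) => τ e.2 = (⟨nV - 1, by omega⟩ : Fin nV))).card : ℝ)
          * (nV:ℝ) := by
      rw [Finset.sum_const]
      simp [Finset.sum_const, Finset.card_univ, mul_comm]
    have hcardT : ((Finset.univ.filter
        (fun τ : Equiv.Perm (Fin nV) => τ e.2 = (⟨nV - 1, by omega⟩ : Fin nV))).card : ℝ)
          * (nV:ℝ) = (Fintype.card (Equiv.Perm (Fin nV)) : ℝ) := by
      rw [← hcountR, ← hcount, hcountL]
    have hconst2 : ∑ τ ∈ Finset.univ.filter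
        (fun τ : Equiv.Perm (Fin nV) => τ e.2 = (⟨nV - 1, by omega⟩ : Fin nV)),
        ((nV:ℝ) * Kk - 3)
        = ((Finset.univ.filter
            (fun τ : Equiv.Perm (Fin nV) => τ e.2 = (⟨nV - 1, by omega⟩ : Fin nV))).card : ℝ)
          * ((nV:ℝ) * Kk - 3) := by
      rw [Finset.sum_const, nsmul_eq_mul]
    calc (Fintype.card (Equiv.Perm (Fin nV)) : ℝ) * (Kk - 3/(nV:ℝ))
        = ((Finset.univ.filter
            (fun τ : Equiv.Perm (Fin nV) => τ e.2 = (⟨nV - 1, by omega⟩ : Fin nV))).card : ℝ)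
          * ((nV:ℝ) * Kk - 3) := by
          rw [← hcardT]
          field_simp
      _ = ∑ τ ∈ Finset.univ.filter
            (fun τ : Equiv.Perm (Fin nV) => τ e.2 = (⟨nV - 1, by omega⟩ : Fin nV)),
            ((nV:ℝ) * Kk - 3) := hconst2.symm
      _ ≤ _ := hT
  -- Step 3 : assemble
  have hcard' : (0:ℝ) < (Fintype.card (Equiv.Perm (Fin nV)) : ℝ) := by
    have : 0 < Fintype.card (Equiv.Perm (Fin nV)) := Fintype.card_pos
    exact_mod_cast this
  have hranking : ∀ σ : Equiv.Perm (Fin nV), ranking EH π σ = run0 σ := by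
    intro σ
    rw [hrun0def, ranking, rankingAux_eq_run]
  have hsum : (Fintype.card (Equiv.Perm (Fin nV)) : ℝ) * ((OPT:ℝ) * (Kk - 3/(nV:ℝ)))
      ≤ ∑ σ : Equiv.Perm (Fin nV), ((ranking EH π σ).length : ℝ) := by
    calc (Fintype.card (Equiv.Perm (Fin nV)) : ℝ) * ((OPT:ℝ) * (Kk - 3/(nV:ℝ)))
        = ∑ _e ∈ M, (Fintype.card (Equiv.Perm (Fin nV)) : ℝ) * (Kk - 3/(nV:ℝ)) := by
          rw [Finset.sum_const, hMcard]
          rw [nsmul_eq_mul]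
          ring
      _ ≤ ∑ e ∈ M, ∑ σ : Equiv.Perm (Fin nV), Fe e σ := Finset.sum_le_sum hedge
      _ = ∑ σ : Equiv.Perm (Fin nV), ∑ e ∈ M, Fe e σ := Finset.sum_comm
      _ ≤ ∑ σ : Equiv.Perm (Fin nV), ((run0 σ).length : ℝ) :=
          Finset.sum_le_sum (fun σ _ => hlen σ)
      _ = ∑ σ : Equiv.Perm (Fin nV), ((ranking EH π σ).length : ℝ) := by
          apply Finset.sum_congr rfl
          intro σ _
          rw [hranking σ]
  rw [rankExpSize, le_div_iff₀ hcard']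
  calc (k:ℝ) * OPT * (1 - Real.exp (-1/(k:ℝ)) - ε) * (Fintype.card (Equiv.Perm (Fin nV)) : ℝ)
      ≤ (Fintype.card (Equiv.Perm (Fin nV)) : ℝ) * ((OPT:ℝ) * (Kk - 3/(nV:ℝ))) := by
        rw [hKkdef, hE1def]
        have hOPTnV : (OPT:ℝ) ≤ (nV:ℝ) := by exact_mod_cast hOPTp
        have hkey : (k:ℝ) * OPT * (1 - Real.exp (-1/(k:ℝ)) - ε)
            ≤ (OPT:ℝ) * ((k:ℝ) * (1 - Real.exp (-1/(k:ℝ))) - 3/(nV:ℝ)) := by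
          have hdiv : 3/(nV:ℝ) < ε := by
            rw [div_lt_iff₀ hp']
            linarith [h3ε]
          have hk1 : (1:ℝ) ≤ (k:ℝ) := by exact_mod_cast hk
          have hεk : ε ≤ (k:ℝ) * ε := by nlinarith
          have expand : (k:ℝ) * OPT * (1 - Real.exp (-1/(k:ℝ)) - ε)
              = (OPT:ℝ) * ((k:ℝ) * (1 - Real.exp (-1/(k:ℝ))) - (k:ℝ) * ε) := by ring
          rw [expand]
          apply mul_le_mul_of_nonneg_left _ hOPT'.le
          have : 3/(nV:ℝ) ≤ (k:ℝ) * ε := by nlinarith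
          linarith
        nlinarith [hkey, hcard']
    _ ≤ ∑ σ : Equiv.Perm (Fin nV), ((ranking EH π σ).length : ℝ) := hsum
end

section
/- Fix a ranking σ of V. For each bidder v, let X_v ∈ {0,1} indicate whether v is matched by Ranking on the left 2-copy H of G (with arrival order duplicating each keyword consecutively), and let X'_v indicate whether v is matched by RankingSimulate on G with the same σ. Then E[X'_v] = X_v / 2. -/
/-- One run of RankingSimulate with coin flips `c`: process the keywords in the given
arrival list, maintaining matched bidders `M` and reserved bidders `R`; an arriving
keyword with available neighbors (not in `M ∪ R`) takes the two lowest-ranked ones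
`v₁, v₂` (or the single one) and, according to the coin, matches one and reserves the
other. Returns the list of matches made. -/
def rsAux {p : ℕ} {α : Type*} (E : α → Fin p → Bool) (σ : Equiv.Perm (Fin p))
    (c : α → Bool) : List α → Finset (Fin p) → Finset (Fin p) → List (α × Fin p)
  | [], _, _ => []
  | u :: rest, M, R =>
    let cand : Finset (Fin p) :=
      Finset.univ.filter fun r => E u (σ.symm r) = true ∧ σ.symm r ∉ M ∧ σ.symm r ∉ R
    if h : cand.Nonempty then
      let r1 := cand.min' h
      let v1 := σ.symm r1
      if h2 : (cand.erase r1).Nonempty then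
        let v2 := σ.symm ((cand.erase r1).min' h2)
        if c u then (u, v1) :: rsAux E σ c rest (insert v1 M) (insert v2 R)
        else (u, v2) :: rsAux E σ c rest (insert v2 M) (insert v1 R)
      else
        if c u then (u, v1) :: rsAux E σ c rest (insert v1 M) R
        else rsAux E σ c rest M (insert v1 R)
    else rsAux E σ c rest M R

/-- The matches made by RankingSimulate on the graph `E` (keywords `Fin nG` arriving
in index order) with ranking `σ` and coin flips `c`. -/
def rsRun {nG p : ℕ} (E : Fin nG → Fin p → Bool) (σ : Equiv.Perm (Fin p))
    (c : Fin nG → Bool) : List (Fin nG × Fin p) :=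
  rsAux E σ c (List.finRange nG) ∅ ∅

/-- The left 2-copy of `E`, with the two copies of each keyword arriving
consecutively: the arrival list of its keywords. -/
def twoCopyList (nG : ℕ) : List (Fin nG × Bool) :=
  (List.finRange nG).flatMap fun u => [(u, false), (u, true)]

/-- The matching produced by Ranking on the left 2-copy of `E` (copies of each keyword
arrive consecutively) with bidder ranking `σ`. -/
def ranking2Copy {nG p : ℕ} (E : Fin nG → Fin p → Bool) (σ : Equiv.Perm (Fin p)) :
    List ((Fin nG × Bool) × Fin p) :=
  rankingAux (fun (u : Fin nG × Bool) v => E u.1 v) σ (twoCopyList nG) ∅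

lemma rankingAux_snd {α : Type*} {p : ℕ} (E : α → Fin p → Bool) (σ : Equiv.Perm (Fin p)) :
    ∀ (L : List α) (matched : Finset (Fin p)),
      ((rankingAux E σ L matched).map Prod.snd).Nodup ∧
        ∀ w ∈ (rankingAux E σ L matched).map Prod.snd, w ∉ matched := by
  intro L
  induction L with
  | nil => intro matched; simp [rankingAux]
  | cons u rest ih =>
    intro matched
    rw [rankingAux]
    split_ifs with h
    · have hmin : σ.symm ((Finset.univ.filter fun r =>
          E u (σ.symm r) = true ∧ σ.symm r ∉ matched).min' h) ∉ matched :=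
        (Finset.mem_filter.1 (Finset.min'_mem _ h)).2.2
      simp only [List.map_cons, List.nodup_cons]
      refine ⟨⟨fun hmem => (ih _).2 _ hmem (Finset.mem_insert_self _ _), (ih _).1⟩, ?_⟩
      intro w hw
      rcases List.mem_cons.1 hw with rfl | hw
      · exact hmin
      · exact fun hwm => (ih _).2 _ hw (Finset.mem_insert_of_mem hwm)
    · exact ih matched

lemma rsAux_mem_iff {nG p : ℕ} (E : Fin nG → Fin p → Bool) (σ : Equiv.Perm (Fin p))
    (c : Fin nG → Bool) (v : Fin p) :
    ∀ (L : List (Fin nG)) (M R : Finset (Fin p)),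
      v ∈ (rsAux E σ c L M R).map Prod.snd ↔
        ∃ u b, ((u, b), v) ∈ rankingAux (fun (x : Fin nG × Bool) w => E x.1 w) σ
            (L.flatMap fun u => [(u, false), (u, true)]) (M ∪ R) ∧ c u = !b := by
  intro L
  induction L with
  | nil => intro M R; simp [rsAux, rankingAux]
  | cons u rest ih =>
    intro M R
    have hflat : ((u :: rest).flatMap fun u => [(u, false), (u, true)]) =
        (u, false) :: (u, true) :: (rest.flatMap fun u => [(u, false), (u, true)]) := by
      simp [List.flatMap_cons]
    rw [hflat, rsAux, rankingAux]
    have hck : (Finset.univ.filter fun r =>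
          (fun (x : Fin nG × Bool) w => E x.1 w) (u, false) (σ.symm r) = true ∧
            σ.symm r ∉ M ∪ R) =
        Finset.univ.filter fun r =>
          E u (σ.symm r) = true ∧ σ.symm r ∉ M ∧ σ.symm r ∉ R := by
      ext r
      simp [Finset.mem_union, not_or, and_assoc]
    rw [hck]
    set cand : Finset (Fin p) := Finset.univ.filter fun r =>
        E u (σ.symm r) = true ∧ σ.symm r ∉ M ∧ σ.symm r ∉ R with hcanddef
    by_cases h : cand.Nonempty
    · rw [dif_pos h, dif_pos h]
      set r1 := cand.min' h with hr1
      set v1 := σ.symm r1 with hv1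
      rw [rankingAux]
      have hck2 : (Finset.univ.filter fun r =>
            (fun (x : Fin nG × Bool) w => E x.1 w) (u, true) (σ.symm r) = true ∧
              σ.symm r ∉ insert v1 (M ∪ R)) = cand.erase r1 := by
        ext r
        simp only [Finset.mem_filter, Finset.mem_univ, true_and, Finset.mem_erase,
          Finset.mem_insert, not_or, Finset.mem_union, hcanddef, hv1,
          σ.symm.injective.eq_iff]
        tauto
      rw [hck2]
      by_cases h2 : (cand.erase r1).Nonempty
      · rw [dif_pos h2, dif_pos h2]
        set v2 := σ.symm ((cand.erase r1).min' h2) with hv2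
        have hU1 : insert v1 M ∪ insert v2 R = insert v2 (insert v1 (M ∪ R)) := by
          rw [Finset.insert_union, Finset.union_insert]
          exact Finset.insert_comm _ _ _
        have hU2 : insert v2 M ∪ insert v1 R = insert v2 (insert v1 (M ∪ R)) := by
          rw [Finset.insert_union, Finset.union_insert]
        cases hcu : c u with
        | true =>
          rw [if_pos rfl]
          simp only [List.map_cons, List.mem_cons]
          rw [ih (insert v1 M) (insert v2 R), hU1]
          constructor
          · rintro (rfl | ⟨u', b', hm, hc'⟩)
            · exact ⟨u, false, Or.inl rfl, hcu⟩
            · exact ⟨u', b', Or.inr (Or.inr hm), hc'⟩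
          · rintro ⟨u', b', (heq | heq | hm), hc'⟩
            · rw [Prod.mk.injEq, Prod.mk.injEq] at heq
              exact Or.inl heq.2
            · rw [Prod.mk.injEq, Prod.mk.injEq] at heq
              rw [heq.1.1, heq.1.2] at hc'
              rw [hcu] at hc'; exact absurd hc' (by decide)
            · exact Or.inr ⟨u', b', hm, hc'⟩
        | false =>
          rw [if_neg (by decide : ¬ (false = true))]
          simp only [List.map_cons, List.mem_cons]
          rw [ih (insert v2 M) (insert v1 R), hU2]
          constructor
          · rintro (rfl | ⟨u', b', hm, hc'⟩)
            · exact ⟨u, true, Or.inr (Or.inl rfl), by simp [hcu]⟩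
            · exact ⟨u', b', Or.inr (Or.inr hm), hc'⟩
          · rintro ⟨u', b', (heq | heq | hm), hc'⟩
            · rw [Prod.mk.injEq, Prod.mk.injEq] at heq
              rw [heq.1.1, heq.1.2] at hc'
              rw [hcu] at hc'; exact absurd hc' (by decide)
            · rw [Prod.mk.injEq, Prod.mk.injEq] at heq
              exact Or.inl heq.2
            · exact Or.inr ⟨u', b', hm, hc'⟩
      · rw [dif_neg h2, dif_neg h2]
        have hU1 : insert v1 M ∪ R = insert v1 (M ∪ R) := Finset.insert_union _ _ _
        have hU2 : M ∪ insert v1 R = insert v1 (M ∪ R) := Finset.union_insert _ _ _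
        cases hcu : c u with
        | true =>
          rw [if_pos rfl]
          simp only [List.map_cons, List.mem_cons]
          rw [ih (insert v1 M) R, hU1]
          constructor
          · rintro (rfl | ⟨u', b', hm, hc'⟩)
            · exact ⟨u, false, Or.inl rfl, hcu⟩
            · exact ⟨u', b', Or.inr hm, hc'⟩
          · rintro ⟨u', b', (heq | hm), hc'⟩
            · rw [Prod.mk.injEq, Prod.mk.injEq] at heq
              exact Or.inl heq.2
            · exact Or.inr ⟨u', b', hm, hc'⟩
        | false =>
          rw [if_neg (by decide : ¬ (false = true))]
          rw [ih M (insert v1 R), hU2]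
          simp only [List.mem_cons]
          constructor
          · rintro ⟨u', b', hm, hc'⟩
            exact ⟨u', b', Or.inr hm, hc'⟩
          · rintro ⟨u', b', (heq | hm), hc'⟩
            · rw [Prod.mk.injEq, Prod.mk.injEq] at heq
              rw [heq.1.1, heq.1.2] at hc'
              rw [hcu] at hc'; exact absurd hc' (by decide)
            · exact ⟨u', b', hm, hc'⟩
    · rw [dif_neg h, dif_neg h, rankingAux]
      have hck2 : (Finset.univ.filter fun r =>
            (fun (x : Fin nG × Bool) w => E x.1 w) (u, true) (σ.symm r) = true ∧
              σ.symm r ∉ M ∪ R) = cand := by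
        ext r
        simp [hcanddef, Finset.mem_union, not_or, and_assoc]
      rw [hck2, dif_neg h]
      exact ih M R

/-- fix a ranking `σ`. For each bidder `v`, the probability over the
coin flips that `v` is matched by RankingSimulate on `G` equals half the indicator
that `v` is matched by Ranking on the left 2-copy `H` of `G` with the same `σ`. -/
theorem rankingSimulate_half_of_two_copy {nG p : ℕ}
    (E : Fin nG → Fin p → Bool) (σ : Equiv.Perm (Fin p)) (v : Fin p) :
    ((Finset.univ.filter fun c : Fin nG → Bool =>
        v ∈ (rsRun E σ c).map Prod.snd).card : ℝ) / 2 ^ nG =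
      (if v ∈ (ranking2Copy E σ).map Prod.snd then (1 : ℝ) else 0) / 2 := by
  have key : ∀ c : Fin nG → Bool,
      v ∈ (rsRun E σ c).map Prod.snd ↔
        ∃ u b, ((u, b), v) ∈ ranking2Copy E σ ∧ c u = !b := by
    intro c
    have := rsAux_mem_iff E σ c v (List.finRange nG) ∅ ∅
    simpa [rsRun, ranking2Copy, twoCopyList] using this
  by_cases hv : v ∈ (ranking2Copy E σ).map Prod.snd
  · rw [if_pos hv]
    obtain ⟨u0, b0, hx⟩ : ∃ u0 b0, ((u0, b0), v) ∈ ranking2Copy E σ := by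
      obtain ⟨⟨⟨u0, b0⟩, w⟩, hx, hxv⟩ := List.mem_map.1 hv
      exact ⟨u0, b0, by rwa [show w = v from hxv] at hx⟩
    have hnodup := (rankingAux_snd (fun (u : Fin nG × Bool) w => E u.1 w) σ
      (twoCopyList nG) ∅).1
    have huniq : ∀ u b, ((u, b), v) ∈ ranking2Copy E σ → (u, b) = (u0, b0) := by
      intro u b hm
      have := List.inj_on_of_nodup_map hnodup hm hx rfl
      exact congrArg Prod.fst this
    have hfil : (Finset.univ.filter fun c : Fin nG → Bool =>
        v ∈ (rsRun E σ c).map Prod.snd) =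
        Finset.univ.filter fun c : Fin nG → Bool => c u0 = !b0 := by
      ext c
      simp only [Finset.mem_filter, Finset.mem_univ, true_and, key c]
      constructor
      · rintro ⟨u, b, hm, hc⟩
        have := huniq u b hm
        rw [Prod.mk.injEq] at this
        rw [this.1, this.2] at hc
        exact hc
      · intro hc
        exact ⟨u0, b0, hx, hc⟩
    rw [hfil]
    have hcard : (Finset.univ.filter fun c : Fin nG → Bool => ¬ (c u0 = !b0)).card =
        (Finset.univ.filter fun c : Fin nG → Bool => c u0 = !b0).card := by
      apply Finset.card_bij' (fun c _ => Function.update c u0 (!(c u0)))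
        (fun c _ => Function.update c u0 (!(c u0)))
      · intro c hc
        funext i
        by_cases hi : i = u0
        · subst hi; simp [Function.update_self]
        · simp [Function.update_of_ne hi]
      · intro c hc
        funext i
        by_cases hi : i = u0
        · subst hi; simp [Function.update_self]
        · simp [Function.update_of_ne hi]
      · intro c hc
        simp only [Finset.mem_filter, Finset.mem_univ, true_and] at hc ⊢
        simp only [Function.update_self]
        cases hb : c u0 <;> cases b0 <;> simp_all
      · intro c hc
        simp only [Finset.mem_filter, Finset.mem_univ, true_and] at hc ⊢
        simp only [Function.update_self]
        cases b0 <;> simp_all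
    have hsplit := Finset.card_filter_add_card_filter_not
      (s := (Finset.univ : Finset (Fin nG → Bool)))
      (p := fun c => c u0 = !b0)
    rw [hcard] at hsplit
    have hcu : (Finset.univ : Finset (Fin nG → Bool)).card = 2 ^ nG := by
      rw [Finset.card_univ]
      simp [Fintype.card_fun]
    rw [hcu] at hsplit
    have h2 : (2 : ℝ) ^ nG ≠ 0 := by positivity
    have := congrArg (fun n : ℕ => (n : ℝ)) hsplit
    push_cast at this
    field_simp
    linarith
  · rw [if_neg hv]
    have : (Finset.univ.filter fun c : Fin nG → Bool =>
        v ∈ (rsRun E σ c).map Prod.snd) = ∅ := by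
      apply Finset.filter_eq_empty_iff.2
      intro c _
      rw [key c]
      rintro ⟨u, b, hm, -⟩
      exact hv (List.mem_map.2 ⟨((u, b), v), hm, rfl⟩)
    rw [this]
    simp
end

section
/- Given a 3-SAT instance with variables x_1,…,x_n and clauses c_1,…,c_k, the constructed Second-Price Matching instance (with n variable keywords arriving first, each adjacent to its two assignment bidders v_i^t, v_i^f, followed by k clause keywords u_j, each adjacent to its clause bidder b_j and to the assignment bidders of the negations of its three literals) admits a second-price matching of value n + k if and only if the 3-SAT formula is satisfiable. Consequently, Second-Price Matching is NP-hard. -/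
/-- The 2PM instance constructed from a 3-SAT instance with `n` variables and `k`
clauses (clause `j` has literals `C j l = (variable, polarity)`): the `n` variable
keywords arrive first (keyword `i` adjacent to the assignment bidders `(i, true)` and
`(i, false)`), followed by the `k` clause keywords (keyword `j` adjacent to its clause
bidder `Sum.inr j` and, for each literal `(i, pol)` of clause `j`, to the assignment
bidder `(i, !pol)`). -/
def satAdj (n k : ℕ) (C : Fin k → Fin 3 → Fin n × Bool) :
    Fin (n + k) → ((Fin n × Bool) ⊕ Fin k) → Prop := fun t b =>
  (∃ i : Fin n, (t : ℕ) = (i : ℕ) ∧ ∃ bb : Bool, b = Sum.inl (i, bb)) ∨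
  (∃ j : Fin k, (t : ℕ) = n + (j : ℕ) ∧
    (b = Sum.inr j ∨ ∃ l : Fin 3, b = Sum.inl ((C j l).1, !(C j l).2)))

/-- the constructed Second-Price Matching instance admits a second-price
matching of value `n + k` if and only if the 3-SAT formula is satisfiable
(consequently, Second-Price Matching is NP-hard). -/
theorem satisfiable_iff_spm_value (n k : ℕ) (C : Fin k → Fin 3 → Fin n × Bool) :
    (∃ g, IsPartialMatching (satAdj n k C) g ∧ spmValue (satAdj n k C) g = n + k) ↔
      (∃ a : Fin n → Bool, ∀ j : Fin k, ∃ l : Fin 3, a (C j l).1 = (C j l).2) := by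
  classical
  constructor
  · rintro ⟨g, ⟨hadj, hinj⟩, hval⟩
    -- every keyword is profitable
    have hall : ∀ u : Fin (n + k), Profitable (satAdj n k C) g u := by
      have huniv : (Finset.univ.filter fun u : Fin (n + k) =>
          Profitable (satAdj n k C) g u) = Finset.univ := by
        apply Finset.eq_univ_of_card
        simpa [spmValue, Fintype.card_fin] using hval
      intro u
      have := huniv ▸ Finset.mem_univ u
      exact (Finset.mem_filter.mp this).2
    -- variable keywords are matched to their own assignment bidders
    have hvar : ∀ i : Fin n, ∃ bb : Bool,
        g ⟨(i : ℕ), by omega⟩ = some (Sum.inl (i, bb)) := by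
      intro i
      obtain ⟨v, v', hg, -, -, -⟩ := hall ⟨(i : ℕ), by omega⟩
      have hav := hadj _ v hg
      rcases hav with ⟨i', hi', bb, rfl⟩ | ⟨j, hj, -⟩
      · have : i' = i := Fin.ext hi'.symm
        subst this
        exact ⟨bb, hg⟩
      · simp at hj; omega
    choose a ha using hvar
    refine ⟨a, fun j => ?_⟩
    obtain ⟨v, v', hg, hne, hadj', hunm⟩ := hall ⟨n + (j : ℕ), by omega⟩
    -- analyze the unmatched witness v'
    rcases hadj' with ⟨i', hi', bb, rfl⟩ | ⟨j', hj', hcase⟩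
    · simp at hi'; omega
    · have hjj : j' = j := by
        apply Fin.ext
        simp at hj'; omega
      rw [hjj] at hcase
      rcases hcase with rfl | ⟨l, rfl⟩
      · -- v' = Sum.inr j, so v is a literal bidder
        have hav := hadj _ v hg
        rcases hav with ⟨i', hi', bb, rfl⟩ | ⟨j'', hj'', hc⟩
        · simp at hi'; omega
        · have hjj2 : j'' = j := by
            apply Fin.ext
            simp at hj''; omega
          rw [hjj2] at hc
          rcases hc with rfl | ⟨l, rfl⟩
          · exact absurd rfl hne
          · refine ⟨l, ?_⟩
            set i := (C j l).1 with hi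
            by_contra hne2
            have hbb : a i = !(C j l).2 := Bool.eq_not_iff.mpr hne2
            have heq := hinj ⟨(i : ℕ), by omega⟩ ⟨n + (j : ℕ), by omega⟩
              (Sum.inl (i, !(C j l).2)) (by rw [← hbb]; exact ha i) hg
            have : (i : ℕ) = n + (j : ℕ) := congrArg Fin.val heq
            omega
      · -- v' = a literal bidder, unmatched ⇒ variable keyword took the other side
        refine ⟨l, ?_⟩
        set i := (C j l).1 with hi
        by_contra hne2
        have hbb : a i = !(C j l).2 := Bool.eq_not_iff.mpr hne2
        have hle : (⟨(i : ℕ), by omega⟩ : Fin (n + k)) ≤ ⟨n + (j : ℕ), by omega⟩ := by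
          simp [Fin.le_def]; omega
        exact hunm _ hle (by rw [← hbb]; exact ha i)
  · rintro ⟨a, hsat⟩
    choose l hl using hsat
    set gg : Fin (n + k) → Option ((Fin n × Bool) ⊕ Fin k) := fun t =>
      if h : (t : ℕ) < n
        then some (Sum.inl (⟨(t : ℕ), h⟩, a ⟨(t : ℕ), h⟩))
        else some (Sum.inr ⟨(t : ℕ) - n, by omega⟩) with hgg
    refine ⟨gg, ⟨?_, ?_⟩, ?_⟩
    · intro u v hg
      by_cases h : (u : ℕ) < n
      · simp only [hgg, dif_pos h] at hg
        exact Or.inl ⟨⟨(u : ℕ), h⟩, rfl, _, (Option.some.inj hg).symm⟩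
      · simp only [hgg, dif_neg h] at hg
        exact Or.inr ⟨⟨(u : ℕ) - n, by omega⟩, by simp; omega, Or.inl (Option.some.inj hg).symm⟩
    · intro u u' v hg hg'
      by_cases h : (u : ℕ) < n <;> by_cases h' : (u' : ℕ) < n <;>
        simp only [hgg, dif_pos, dif_neg, h, h'] at hg hg'
      · rw [← hg'] at hg
        apply Fin.ext
        have := congrArg Fin.val (Prod.mk.injEq .. ▸ (Sum.inl.inj (Option.some.inj hg))).1
        simpa using this
      · rw [← hg'] at hg; simp at hg
      · rw [← hg'] at hg; simp at hg
      · rw [← hg'] at hg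
        have := congrArg Fin.val (Sum.inr.inj (Option.some.inj hg))
        apply Fin.ext
        simp at this; omega
    · have hprof : ∀ u : Fin (n + k), Profitable (satAdj n k C) gg u := by
        intro u
        by_cases h : (u : ℕ) < n
        · refine ⟨Sum.inl (⟨(u : ℕ), h⟩, a ⟨(u : ℕ), h⟩),
            Sum.inl (⟨(u : ℕ), h⟩, !a ⟨(u : ℕ), h⟩), by simp [hgg, h], by simp, ?_, ?_⟩
          · exact Or.inl ⟨⟨(u : ℕ), h⟩, rfl, _, rfl⟩
          · intro u' hle heq
            have h' : (u' : ℕ) < n := lt_of_le_of_lt (Fin.le_def.mp hle) h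
            simp only [hgg, dif_pos h'] at heq
            have := Sum.inl.inj (Option.some.inj heq)
            have h1 := congrArg Fin.val (congrArg Prod.fst this)
            have h2 := congrArg Prod.snd this
            simp at h1
            have : u' = u := Fin.ext h1
            subst this
            simp at h2
        · set j : Fin k := ⟨(u : ℕ) - n, by omega⟩ with hj
          refine ⟨Sum.inr j, Sum.inl ((C j (l j)).1, !(C j (l j)).2),
            by simp [hgg, h]; rfl, by simp, ?_, ?_⟩
          · exact Or.inr ⟨j, by simp [hj]; omega, Or.inr ⟨l j, rfl⟩⟩
          · intro u' hle heq
            by_cases h' : (u' : ℕ) < n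
            · simp only [hgg, dif_pos h'] at heq
              have := Sum.inl.inj (Option.some.inj heq)
              have h1 := congrArg Fin.val (congrArg Prod.fst this)
              have h2 := congrArg Prod.snd this
              have hi : (⟨(u' : ℕ), h'⟩ : Fin n) = (C j (l j)).1 := Fin.ext h1
              rw [hi, hl j] at h2
              simp at h2
            · simp only [hgg, dif_neg h'] at heq
              simp at heq
      rw [spmValue]
      rw [Finset.filter_true_of_mem (fun u _ => hprof u)]
      simp
end
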